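/- arXiv:2002.03993 — 6 statements merged into one kernel-verified Lean document; each statement's English description precedes it below -/
import Mathlib

section
/- The constant function 1 is a fixed point of T, and it is the largest fixed point. Moreover, every fixed point f of T (f : [0,∞) → [0,1] with T(f) = f) other than the constant function 1 satisfies f(x) < 1 for all x ≥ 0 and is strictly increasing on [0,∞). -/
open MeasureTheory Real Set Filter

noncomputable def Toper (P : ℕ → ℝ) (f : ℝ → ℝ) : ℝ → ℝ := fun x =>
  if x = 0 then
    ∑' k : ℕ, P (k + 1) * ∫ z in Ioi (0 : ℝ),
      Real.exp (-z) * z ^ k / (Nat.factorial k : ℝ) * f z ^ k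
  else
    (1 / x) * ∑' k : ℕ, P (k + 1) *
      ∫ y in Ioc (0 : ℝ) x,
        ((∫ z in Ioc (0 : ℝ) y, Real.exp (-z) * z ^ k / (Nat.factorial k : ℝ)) +
          ∫ z in Ioi y, Real.exp (-z) * z ^ k / (Nat.factorial k : ℝ) * f z ^ k)

noncomputable def gk (k : ℕ) (z : ℝ) : ℝ := Real.exp (-z) * z ^ k / (Nat.factorial k : ℝ)

noncomputable def Hf (f : ℝ → ℝ) (k : ℕ) (y : ℝ) : ℝ :=
  (∫ z in Ioc (0:ℝ) y, gk k z) + ∫ z in Ioi y, gk k z * f z ^ k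

lemma gk_nonneg {k : ℕ} {z : ℝ} (hz : 0 ≤ z) : 0 ≤ gk k z := by
  unfold gk; positivity

lemma gk_pos {k : ℕ} {z : ℝ} (hz : 0 < z) : 0 < gk k z := by
  unfold gk
  have h1 : (0:ℝ) < Nat.factorial k := by positivity
  positivity

lemma gk_intble (k : ℕ) : IntegrableOn (gk k) (Ioi (0:ℝ)) := by
  have h := Real.GammaIntegral_convergent (s := k + 1) (by positivity)
  simp only [add_sub_cancel_right] at h
  have h2 : IntegrableOn (fun z : ℝ => Real.exp (-z) * z ^ k) (Ioi (0:ℝ)) := by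
    refine h.congr_fun (fun x hx => ?_) measurableSet_Ioi
    simp only [Real.rpow_natCast]
  delta gk
  simpa [gk, div_eq_mul_inv, IntegrableOn] using h2.mul_const ((Nat.factorial k : ℝ))⁻¹

lemma gk_integral (k : ℕ) : ∫ z in Ioi (0:ℝ), gk k z = 1 := by
  have h := (Real.Gamma_eq_integral (s := k + 1) (by positivity)).symm
  simp only [add_sub_cancel_right] at h
  have h2 : ∫ z in Ioi (0:ℝ), Real.exp (-z) * z ^ k = (Nat.factorial k : ℝ) := by
    rw [← Real.Gamma_nat_eq_factorial, ← h]
    refine setIntegral_congr_fun measurableSet_Ioi (fun x hx => ?_)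
    rw [Real.rpow_natCast]
  unfold gk
  rw [integral_div, h2, div_self (by positivity)]

lemma gk_intble_sub {k : ℕ} {s : Set ℝ} (hs : s ⊆ Ioi (0:ℝ)) : IntegrableOn (gk k) s :=
  (gk_intble k).mono_set hs

lemma gk_meas (k : ℕ) : Measurable (gk k) := by
  unfold gk; fun_prop

section Withf
variable {f : ℝ → ℝ} (hf : Measurable f) (hf01 : ∀ x, 0 ≤ x → f x ∈ Icc (0:ℝ) 1)

include hf in
lemma gkf_meas (k : ℕ) : Measurable (fun z => gk k z * f z ^ k) := by
  have := gk_meas k; fun_prop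

include hf hf01 in
lemma gkf_intble (k : ℕ) {s : Set ℝ} (hsm : MeasurableSet s) (hs : s ⊆ Ioi (0:ℝ)) :
    IntegrableOn (fun z => gk k z * f z ^ k) s := by
  refine Integrable.mono' (gk_intble_sub (k := k) hs) ((gkf_meas hf k).aestronglyMeasurable) ?_
  refine (ae_restrict_iff' hsm).2 (ae_of_all _ fun z hz => ?_)
  have hz0 : (0:ℝ) < z := hs hz
  have h01 := hf01 z hz0.le
  have h1 : |f z ^ k| ≤ 1 := by
    rw [abs_of_nonneg (pow_nonneg h01.1 k)]
    exact pow_le_one₀ h01.1 h01.2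
  calc ‖gk k z * f z ^ k‖ = gk k z * |f z ^ k| := by
        rw [norm_mul, Real.norm_eq_abs, Real.norm_eq_abs, abs_of_nonneg (gk_nonneg hz0.le)]
    _ ≤ gk k z * 1 := by
        exact mul_le_mul_of_nonneg_left h1 (gk_nonneg hz0.le)
    _ = gk k z := mul_one _

include hf hf01 in
omit hf in
lemma gkf_nonneg_int (k : ℕ) {s : Set ℝ} (hsm : MeasurableSet s) (hs : s ⊆ Ioi (0:ℝ)) :
    0 ≤ ∫ z in s, gk k z * f z ^ k := by
  refine setIntegral_nonneg hsm fun z hz => ?_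
  have hz0 : (0:ℝ) < z := hs hz
  exact mul_nonneg (gk_nonneg hz0.le) (pow_nonneg (hf01 z hz0.le).1 k)

include hf hf01 in
lemma gkf_int_le (k : ℕ) {s : Set ℝ} (hsm : MeasurableSet s) (hs : s ⊆ Ioi (0:ℝ)) :
    ∫ z in s, gk k z * f z ^ k ≤ ∫ z in s, gk k z := by
  refine setIntegral_mono_on (gkf_intble hf hf01 k hsm hs) (gk_intble_sub hs) hsm fun z hz => ?_
  have hz0 : (0:ℝ) < z := hs hz
  have h01 := hf01 z hz0.le
  calc gk k z * f z ^ k ≤ gk k z * 1 :=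
        mul_le_mul_of_nonneg_left (pow_le_one₀ h01.1 h01.2) (gk_nonneg hz0.le)
    _ = gk k z := mul_one _

lemma gk_split (k : ℕ) {y : ℝ} (hy : 0 ≤ y) :
    (∫ z in Ioc (0:ℝ) y, gk k z) + ∫ z in Ioi y, gk k z = 1 := by
  have h := gk_integral k
  rw [← Ioc_union_Ioi_eq_Ioi hy] at h
  rw [← h]
  exact (setIntegral_union Ioc_disjoint_Ioi_same measurableSet_Ioi
    (gk_intble_sub Ioc_subset_Ioi_self)
    ((gk_intble k).mono_set (Ioi_subset_Ioi hy))).symm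

include hf hf01 in
lemma gkf_split (k : ℕ) {y₁ y₂ : ℝ} (h1 : 0 ≤ y₁) (h2 : y₁ ≤ y₂) :
    ∫ z in Ioi y₁, gk k z * f z ^ k =
      (∫ z in Ioc y₁ y₂, gk k z * f z ^ k) + ∫ z in Ioi y₂, gk k z * f z ^ k := by
  rw [← Ioc_union_Ioi_eq_Ioi h2]
  exact setIntegral_union Ioc_disjoint_Ioi_same measurableSet_Ioi
    (gkf_intble hf hf01 k measurableSet_Ioc (Ioc_subset_Ioi_self.trans (Ioi_subset_Ioi h1)))
    (gkf_intble hf hf01 k measurableSet_Ioi (Ioi_subset_Ioi (h1.trans h2)))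

include hf hf01 in
omit hf in
lemma Hf_nonneg (k : ℕ) {y : ℝ} (hy : 0 ≤ y) : 0 ≤ Hf f k y := by
  unfold Hf
  have h1 : 0 ≤ ∫ z in Ioc (0:ℝ) y, gk k z :=
    setIntegral_nonneg measurableSet_Ioc fun z hz => gk_nonneg hz.1.le
  have h2 : 0 ≤ ∫ z in Ioi y, gk k z * f z ^ k :=
    gkf_nonneg_int hf01 k measurableSet_Ioi (Ioi_subset_Ioi hy)
  linarith

include hf hf01 in
lemma Hf_le_one (k : ℕ) {y : ℝ} (hy : 0 ≤ y) : Hf f k y ≤ 1 := by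
  unfold Hf
  have h2 : ∫ z in Ioi y, gk k z * f z ^ k ≤ ∫ z in Ioi y, gk k z :=
    gkf_int_le hf hf01 k measurableSet_Ioi (Ioi_subset_Ioi hy)
  have h3 := gk_split k hy
  linarith

include hf hf01 in
lemma Hf_diff (k : ℕ) {y₁ y₂ : ℝ} (h1 : 0 ≤ y₁) (h2 : y₁ ≤ y₂) :
    Hf f k y₂ - Hf f k y₁ = ∫ z in Ioc y₁ y₂, gk k z * (1 - f z ^ k) := by
  have hsub : Ioc y₁ y₂ ⊆ Ioi (0:ℝ) := fun z hz => lt_of_le_of_lt h1 hz.1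
  have hA : ∫ z in Ioc (0:ℝ) y₂, gk k z =
      (∫ z in Ioc (0:ℝ) y₁, gk k z) + ∫ z in Ioc y₁ y₂, gk k z := by
    rw [← Ioc_union_Ioc_eq_Ioc h1 h2]
    exact setIntegral_union (Ioc_disjoint_Ioc_of_le le_rfl) measurableSet_Ioc
      (gk_intble_sub Ioc_subset_Ioi_self) (gk_intble_sub hsub)
  have hB := gkf_split hf hf01 k h1 h2
  have hC : ∫ z in Ioc y₁ y₂, gk k z * (1 - f z ^ k) =
      (∫ z in Ioc y₁ y₂, gk k z) - ∫ z in Ioc y₁ y₂, gk k z * f z ^ k := by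
    rw [← integral_sub (gk_intble_sub hsub) (gkf_intble hf hf01 k measurableSet_Ioc hsub)]
    exact setIntegral_congr_fun measurableSet_Ioc fun z _ => by ring
  unfold Hf
  rw [hA, hB, hC]
  ring

include hf hf01 in
lemma Hf_mono (k : ℕ) {y₁ y₂ : ℝ} (h1 : 0 ≤ y₁) (h2 : y₁ ≤ y₂) : Hf f k y₁ ≤ Hf f k y₂ := by
  have hd := Hf_diff hf hf01 k h1 h2
  have hsub : Ioc y₁ y₂ ⊆ Ioi (0:ℝ) := fun z hz => lt_of_le_of_lt h1 hz.1
  have h3 : 0 ≤ ∫ z in Ioc y₁ y₂, gk k z * (1 - f z ^ k) := by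
    refine setIntegral_nonneg measurableSet_Ioc fun z hz => ?_
    have hz0 : (0:ℝ) < z := hsub hz
    have h01 := hf01 z hz0.le
    have : f z ^ k ≤ 1 := pow_le_one₀ h01.1 h01.2
    have := gk_nonneg (k := k) hz0.le
    nlinarith
  linarith

omit hf hf01 in
lemma intConst {a b : ℝ} (c : ℝ) : IntegrableOn (fun _ : ℝ => c) (Ioc a b) volume :=
  integrableOn_const measure_Ioc_lt_top.ne

include hf hf01 in
lemma Hf_aesm (k : ℕ) {a b : ℝ} (ha : 0 ≤ a) :
    AEStronglyMeasurable (Hf f k) (volume.restrict (Ioc a b)) := by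
  set M₁ : ℝ → ℝ := fun y => ∫ z in Ioc (0:ℝ) y, gk k z with hM₁def
  set M₂ : ℝ → ℝ := fun y => ∫ z in Ioc (0:ℝ) y, gk k z * f z ^ k with hM₂def
  set C : ℝ := ∫ z in Ioi (0:ℝ), gk k z * f z ^ k with hCdef
  have hM₁ : Monotone M₁ := by
    intro y₁ y₂ h
    refine setIntegral_mono_set (gk_intble_sub Ioc_subset_Ioi_self)
      ((ae_restrict_iff' measurableSet_Ioc).2 (ae_of_all _ fun z hz => gk_nonneg hz.1.le))
      (HasSubset.Subset.eventuallyLE (Ioc_subset_Ioc_right h))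
  have hM₂ : Monotone M₂ := by
    intro y₁ y₂ h
    refine setIntegral_mono_set (gkf_intble hf hf01 k measurableSet_Ioc Ioc_subset_Ioi_self)
      ((ae_restrict_iff' measurableSet_Ioc).2 (ae_of_all _ fun z hz =>
        mul_nonneg (gk_nonneg hz.1.le) (pow_nonneg (hf01 z hz.1.le).1 k)))
      (HasSubset.Subset.eventuallyLE (Ioc_subset_Ioc_right h))
  have hm : Measurable (fun y => M₁ y + (C - M₂ y)) :=
    hM₁.measurable.add (measurable_const.sub hM₂.measurable)
  refine (hm.aestronglyMeasurable.restrict).congr ?_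
  refine (ae_restrict_iff' measurableSet_Ioc).2 (ae_of_all _ fun y hy => ?_)
  have hy0 : 0 < y := lt_of_le_of_lt ha hy.1
  have hsplit := gkf_split hf hf01 k (le_refl (0:ℝ)) hy0.le
  unfold Hf
  rw [← hCdef] at hsplit
  rw [hsplit]
  simp only [hM₁def, hM₂def]
  ring

include hf hf01 in
lemma Hf_intble (k : ℕ) {a b : ℝ} (ha : 0 ≤ a) :
    IntegrableOn (Hf f k) (Ioc a b) := by
  refine Integrable.mono' (intConst 1) (Hf_aesm hf hf01 k ha) ?_
  refine (ae_restrict_iff' measurableSet_Ioc).2 (ae_of_all _ fun y hy => ?_)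
  have hy0 : 0 ≤ y := ha.trans hy.1.le
  rw [Real.norm_eq_abs, abs_of_nonneg (Hf_nonneg hf01 k hy0)]
  exact Hf_le_one hf hf01 k hy0

noncomputable def Sf (f : ℝ → ℝ) (k : ℕ) (x : ℝ) : ℝ := ∫ y in Ioc (0:ℝ) x, Hf f k y

lemma integral_const_Ioc {a b c : ℝ} (h : a ≤ b) :
    ∫ _ in Ioc a b, c = (b - a) * c := by
  rw [setIntegral_const, measureReal_def, Real.volume_Ioc, ENNReal.toReal_ofReal (by linarith), smul_eq_mul]

omit hf in
include hf01 in
lemma Sf_nonneg (k : ℕ) (x : ℝ) : 0 ≤ Sf f k x :=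
  setIntegral_nonneg measurableSet_Ioc fun y hy => Hf_nonneg hf01 k hy.1.le

include hf hf01 in
lemma Sf_le (k : ℕ) {x : ℝ} (hx : 0 ≤ x) : Sf f k x ≤ x := by
  have h1 : Sf f k x ≤ ∫ _ in Ioc (0:ℝ) x, (1:ℝ) :=
    setIntegral_mono_on (Hf_intble hf hf01 k le_rfl)
      (intConst 1) measurableSet_Ioc
      (fun y hy => Hf_le_one hf hf01 k hy.1.le)
  rw [integral_const_Ioc hx] at h1
  linarith

include hf hf01 in
lemma Sf_split (k : ℕ) {x₁ x₂ : ℝ} (h1 : 0 ≤ x₁) (h2 : x₁ ≤ x₂) :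
    Sf f k x₂ = Sf f k x₁ + ∫ y in Ioc x₁ x₂, Hf f k y := by
  unfold Sf
  rw [← Ioc_union_Ioc_eq_Ioc h1 h2]
  exact setIntegral_union (Ioc_disjoint_Ioc_of_le le_rfl) measurableSet_Ioc
    (Hf_intble hf hf01 k le_rfl) (Hf_intble hf hf01 k h1)

include hf hf01 in
lemma Sf_le_mul (k : ℕ) {x : ℝ} (hx : 0 ≤ x) : Sf f k x ≤ x * Hf f k x := by
  have h1 : Sf f k x ≤ ∫ _ in Ioc (0:ℝ) x, Hf f k x :=
    setIntegral_mono_on (Hf_intble hf hf01 k le_rfl)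
      (intConst _) measurableSet_Ioc
      (fun y hy => Hf_mono hf hf01 k hy.1.le hy.2)
  rw [integral_const_Ioc hx] at h1
  linarith

include hf hf01 in
lemma Hf_int_lower (k : ℕ) {x₁ x₂ : ℝ} (h1 : 0 ≤ x₁) (h2 : x₁ ≤ x₂) :
    (x₂ - x₁) * Hf f k x₁ ≤ ∫ y in Ioc x₁ x₂, Hf f k y := by
  have h3 : ∫ _ in Ioc x₁ x₂, Hf f k x₁ ≤ ∫ y in Ioc x₁ x₂, Hf f k y :=
    setIntegral_mono_on (intConst _)
      (Hf_intble hf hf01 k h1) measurableSet_Ioc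
      (fun y hy => Hf_mono hf hf01 k h1 hy.1.le)
  rw [integral_const_Ioc h2] at h3
  linarith

include hf hf01 in
lemma Hf_gap_pos (k : ℕ) (hk : k ≠ 0) (hflt : ∀ x, 0 ≤ x → f x < 1)
    {y₁ y₂ : ℝ} (h1 : 0 ≤ y₁) (h2 : y₁ < y₂) : 0 < Hf f k y₂ - Hf f k y₁ := by
  rw [Hf_diff hf hf01 k h1 h2.le]
  have hsub : Ioc y₁ y₂ ⊆ Ioi (0:ℝ) := fun z hz => lt_of_le_of_lt h1 hz.1
  have hpos : ∀ z ∈ Ioc y₁ y₂, 0 < gk k z * (1 - f z ^ k) := by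
    intro z hz
    have hz0 : (0:ℝ) < z := hsub hz
    have h01 := hf01 z hz0.le
    have hlt : f z ^ k < 1 := pow_lt_one₀ h01.1 (hflt z hz0.le) hk
    exact mul_pos (gk_pos hz0) (by linarith)
  have hib : IntegrableOn (fun z => gk k z * (1 - f z ^ k)) (Ioc y₁ y₂) := by
    refine IntegrableOn.congr_fun ((gk_intble_sub hsub).sub
      (gkf_intble hf hf01 k measurableSet_Ioc hsub))
      (fun z _ => by simp only [Pi.sub_apply]; ring) measurableSet_Ioc
  rw [setIntegral_pos_iff_support_of_nonneg_ae
    ((ae_restrict_iff' measurableSet_Ioc).2 (ae_of_all _ fun z hz => by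
      have := (hpos z hz).le; simpa using this)) hib]
  have hss : Ioc y₁ y₂ ⊆ Function.support (fun z => gk k z * (1 - f z ^ k)) :=
    fun z hz => (hpos z hz).ne'
  rw [Set.inter_eq_self_of_subset_right hss, Real.volume_Ioc]
  exact ENNReal.ofReal_pos.2 (by linarith)

include hf hf01 in
lemma Hf_int_lower_strict (k : ℕ) (hk : k ≠ 0) (hflt : ∀ x, 0 ≤ x → f x < 1)
    {x₁ x₂ : ℝ} (h1 : 0 ≤ x₁) (h2 : x₁ < x₂) :
    (x₂ - x₁) * Hf f k x₁ < ∫ y in Ioc x₁ x₂, Hf f k y := by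
  have key : 0 < ∫ y in Ioc x₁ x₂, (Hf f k y - Hf f k x₁) := by
    have hib : IntegrableOn (fun y => Hf f k y - Hf f k x₁) (Ioc x₁ x₂) :=
      (Hf_intble hf hf01 k h1).sub (intConst _)
    rw [setIntegral_pos_iff_support_of_nonneg_ae
      ((ae_restrict_iff' measurableSet_Ioc).2 (ae_of_all _ fun y hy => by
        have := Hf_mono hf hf01 k h1 hy.1.le
        simp only [Pi.zero_apply]; linarith)) hib]
    have hss : Ioc x₁ x₂ ⊆ Function.support (fun y => Hf f k y - Hf f k x₁) :=
      fun y hy => (Hf_gap_pos hf hf01 k hk hflt h1 hy.1).ne'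
    rw [Set.inter_eq_self_of_subset_right hss, Real.volume_Ioc]
    exact ENNReal.ofReal_pos.2 (by linarith)
  have hsplit : ∫ y in Ioc x₁ x₂, (Hf f k y - Hf f k x₁) =
      (∫ y in Ioc x₁ x₂, Hf f k y) - (x₂ - x₁) * Hf f k x₁ := by
    rw [integral_sub (Hf_intble hf hf01 k h1)
      (intConst _), integral_const_Ioc h2.le]
  linarith

omit hf hf01 in
lemma Hf_zero (k : ℕ) : Hf f k 0 = ∫ z in Ioi (0:ℝ), gk k z * f z ^ k := by
  simp [Hf]

omit hf hf01 in
lemma Sf_zero (k : ℕ) : Sf f k 0 = 0 := by simp [Sf]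

include hf hf01 in
lemma gkfm_intble (k : ℕ) {s : Set ℝ} (hsm : MeasurableSet s) (hs : s ⊆ Ioi (0:ℝ)) :
    IntegrableOn (fun z => gk k z * (1 - f z ^ k)) s := by
  refine IntegrableOn.congr_fun ((gk_intble_sub hs).sub
    (gkf_intble hf hf01 k hsm hs)) (fun z _ => by simp only [Pi.sub_apply]; ring) hsm

include hf hf01 in
lemma ae_one_of_Hf_one (k : ℕ) (hk : k ≠ 0) {y : ℝ} (hy : 0 ≤ y) (hH : Hf f k y = 1) :
    ∀ᵐ z, z ∈ Ioi y → f z = 1 := by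
  have hsplit := gk_split k hy
  have hzero : ∫ z in Ioi y, gk k z * (1 - f z ^ k) = 0 := by
    have heq : ∫ z in Ioi y, gk k z * (1 - f z ^ k) =
        (∫ z in Ioi y, gk k z) - ∫ z in Ioi y, gk k z * f z ^ k := by
      rw [← integral_sub ((gk_intble k).mono_set (Ioi_subset_Ioi hy))
        (gkf_intble hf hf01 k measurableSet_Ioi (Ioi_subset_Ioi hy))]
      exact setIntegral_congr_fun measurableSet_Ioi fun z _ => by ring
    rw [heq]
    unfold Hf at hH
    linarith
  have hae := (setIntegral_eq_zero_iff_of_nonneg_ae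
    ((ae_restrict_iff' measurableSet_Ioi).2 (ae_of_all _ fun z hz => by
      have hz0 : (0:ℝ) < z := lt_of_le_of_lt hy hz
      have h01 := hf01 z hz0.le
      have hle : f z ^ k ≤ 1 := pow_le_one₀ h01.1 h01.2
      have hg := gk_nonneg (k := k) hz0.le
      simp only [Pi.zero_apply]
      nlinarith))
    (gkfm_intble hf hf01 k measurableSet_Ioi (Ioi_subset_Ioi hy))).1 hzero
  rw [EventuallyEq, ae_restrict_iff' measurableSet_Ioi] at hae
  filter_upwards [hae] with z hz hzy
  have hz0 : (0:ℝ) < z := lt_of_le_of_lt hy hzy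
  have h0 := hz hzy
  simp only [Pi.zero_apply] at h0
  have hgk := gk_pos (k := k) hz0
  have hfk : f z ^ k = 1 := by
    rcases mul_eq_zero.1 h0 with h | h
    · exact absurd h hgk.ne'
    · linarith
  by_contra hne
  have hlt : f z < 1 := lt_of_le_of_ne (hf01 z hz0.le).2 hne
  have : f z ^ k < 1 := pow_lt_one₀ (hf01 z hz0.le).1 hlt hk
  linarith

end Withf

lemma Toper_pos (P : ℕ → ℝ) (f : ℝ → ℝ) {x : ℝ} (hx : 0 < x) :
    Toper P f x = (1/x) * ∑' k, P (k+1) * Sf f k x := by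
  simp only [Toper, Sf, Hf, gk, if_neg hx.ne']

lemma Toper_zero (P : ℕ → ℝ) (f : ℝ → ℝ) :
    Toper P f 0 = ∑' k, P (k+1) * ∫ z in Ioi (0:ℝ), gk k z * f z ^ k := by
  simp only [Toper, gk, if_true, if_pos]

theorem stmt_1 (P : ℕ → ℝ)
    (hP0 : P 0 = 0) (hPnonneg : ∀ k, 0 ≤ P k) (hPsum : ∑' k, P k = 1)
    (hPmean : Summable fun k : ℕ => (k : ℝ) * P k) (hP1 : P 1 < 1) :
    (∀ x, 0 ≤ x → Toper P (fun _ => 1) x = 1) ∧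
    (∀ f : ℝ → ℝ, Measurable f → (∀ x, 0 ≤ x → f x ∈ Icc (0 : ℝ) 1) →
      (∀ x, 0 ≤ x → Toper P f x = f x) →
      (∀ x, 0 ≤ x → f x ≤ 1) ∧
      (¬ (∀ x, 0 ≤ x → f x = 1) →
        (∀ x, 0 ≤ x → f x < 1) ∧ StrictMonoOn f (Ici 0))) := by
  -- basic facts about P
  have hPsummable : Summable P := by
    refine Summable.of_nonneg_of_le hPnonneg (fun k => ?_) hPmean
    match k with
    | 0 => rw [hP0]; simp
    | (n+1) =>
      refine le_mul_of_one_le_left (hPnonneg _) ?_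
      exact_mod_cast Nat.succ_le_succ (Nat.zero_le n)
  have hQsummable : Summable (fun k => P (k+1)) := (summable_nat_add_iff 1).2 hPsummable
  have hQnn : ∀ k, 0 ≤ P (k+1) := fun k => hPnonneg _
  have hQsum : ∑' k, P (k+1) = 1 := by
    have h := hPsummable.tsum_eq_zero_add
    rw [hP0, zero_add] at h
    rw [← h, hPsum]
  obtain ⟨k₀, hk₀, hQk₀⟩ : ∃ k, k ≠ 0 ∧ 0 < P (k+1) := by
    by_contra hcon
    push_neg at hcon
    have hz : ∀ k : ℕ, k ≠ 0 → P (k+1) = 0 := fun k hk =>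
      le_antisymm (hcon k hk) (hQnn k)
    have h1 : ∑' k, P (k+1) = P 1 := tsum_eq_single 0 (fun k hk => hz k hk)
    rw [hQsum] at h1
    exact absurd h1.symm hP1.ne
  constructor
  · -- Toper of the constant function 1
    intro x hx
    have h1mem : ∀ y : ℝ, 0 ≤ y → (fun _ : ℝ => (1:ℝ)) y ∈ Icc (0:ℝ) 1 := by
      intro y _; exact ⟨zero_le_one, le_rfl⟩
    rcases eq_or_lt_of_le hx with h0 | h0
    · rw [← h0, Toper_zero]
      have heq : ∀ k : ℕ, P (k+1) * (∫ z in Ioi (0:ℝ), gk k z * (fun _ : ℝ => (1:ℝ)) z ^ k)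
          = P (k+1) := by
        intro k
        simp only [one_pow, mul_one]
        rw [gk_integral k, mul_one]
      rw [tsum_congr heq, hQsum]
    · rw [Toper_pos P _ h0]
      have hS : ∀ k : ℕ, Sf (fun _ : ℝ => (1:ℝ)) k x = x := by
        intro k
        unfold Sf
        have hH1 : ∀ y ∈ Ioc (0:ℝ) x, Hf (fun _ : ℝ => (1:ℝ)) k y = 1 := by
          intro y hy
          unfold Hf
          simp only [one_pow, mul_one]
          exact gk_split k hy.1.le
        rw [setIntegral_congr_fun measurableSet_Ioc hH1, integral_const_Ioc hx]
        ring
      have heq : ∀ k : ℕ, P (k+1) * Sf (fun _ : ℝ => (1:ℝ)) k x = P (k+1) * x := by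
        intro k; rw [hS k]
      rw [tsum_congr heq, tsum_mul_right, hQsum, one_mul]
      field_simp
  · intro f hf hf01 hfix
    refine ⟨fun x hx => (hf01 x hx).2, ?_⟩
    intro hne
    -- fixed point equations
    have hfp : ∀ x : ℝ, 0 < x → ∑' k, P (k+1) * Sf f k x = x * f x := by
      intro x hx
      have h := hfix x hx.le
      rw [Toper_pos P f hx] at h
      have := congrArg (fun t => x * t) h
      rw [← this]
      field_simp
    have hfp0 : ∑' k, P (k+1) * Hf f k 0 = f 0 := by
      have h := hfix 0 le_rfl
      rw [Toper_zero] at h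
      rw [← h]
      exact tsum_congr fun k => by rw [Hf_zero]
    -- summability helper
    have hsumm_of_le : ∀ (g : ℕ → ℝ) (c : ℝ), (∀ k, 0 ≤ g k) → (∀ k, g k ≤ P (k+1) * c) →
        Summable g := fun g c hg hgc =>
      Summable.of_nonneg_of_le hg hgc (hQsummable.mul_right c)
    -- Step B : if f = 1 a.e. on Ioi 0 then f = 1 everywhere on Ici 0
    have hstepB : (∀ᵐ z, z ∈ Ioi (0:ℝ) → f z = 1) → ∀ x, 0 ≤ x → f x = 1 := by
      intro haeone
      have hHone : ∀ (k : ℕ) (y : ℝ), 0 ≤ y → Hf f k y = 1 := by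
        intro k y hy
        unfold Hf
        have hcong : ∫ z in Ioi y, gk k z * f z ^ k = ∫ z in Ioi y, gk k z := by
          refine integral_congr_ae ?_
          filter_upwards [ae_restrict_of_ae haeone, ae_restrict_mem measurableSet_Ioi]
            with z h1 h2
          have hz1 : f z = 1 := h1 (lt_of_le_of_lt hy h2)
          rw [hz1, one_pow, mul_one]
        rw [hcong]
        exact gk_split k hy
      intro x hx
      rcases eq_or_lt_of_le hx with h0 | h0
      · rw [← h0, ← hfp0]
        have heq : ∀ k : ℕ, P (k+1) * Hf f k 0 = P (k+1) := fun k => by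
          rw [hHone k 0 le_rfl, mul_one]
        rw [tsum_congr heq, hQsum]
      · have h := hfp x h0
        have hS : ∀ k : ℕ, Sf f k x = x := by
          intro k
          unfold Sf
          rw [setIntegral_congr_fun measurableSet_Ioc (fun y hy => hHone k y hy.1.le),
            integral_const_Ioc hx]
          ring
        have heq : ∀ k : ℕ, P (k+1) * Sf f k x = P (k+1) * x := fun k => by rw [hS k]
        rw [tsum_congr heq, tsum_mul_right, hQsum, one_mul] at h
        have hxx : x * 1 = x * f x := by rw [mul_one]; exact h
        exact (mul_left_cancel₀ h0.ne' hxx).symm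
    -- Step A : f < 1 everywhere on Ici 0
    have hflt : ∀ x, 0 ≤ x → f x < 1 := by
      intro x hx
      rcases lt_or_eq_of_le (hf01 x hx).2 with h | h
      · exact h
      exfalso
      have haeone : ∀ᵐ z, z ∈ Ioi (0:ℝ) → f z = 1 := by
        rcases eq_or_lt_of_le hx with h0 | h0
        · -- x = 0, f 0 = 1
          have hH : Hf f k₀ 0 = 1 := by
            by_contra hH1
            have hHlt : Hf f k₀ 0 < 1 :=
              lt_of_le_of_ne (Hf_le_one hf hf01 k₀ le_rfl) hH1
            have hlt : ∑' k, P (k+1) * Hf f k 0 < ∑' k, P (k+1) := by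
              refine Summable.tsum_lt_tsum_of_nonneg (i := k₀)
                (fun k => mul_nonneg (hQnn k) (Hf_nonneg hf01 k le_rfl))
                (fun k => by
                  have := Hf_le_one hf hf01 k (le_refl (0:ℝ))
                  nlinarith [hQnn k])
                ?_ hQsummable
              exact mul_lt_of_lt_one_right hQk₀ hHlt
            rw [hfp0, hQsum] at hlt
            rw [← h0] at h
            rw [h] at hlt
            exact lt_irrefl _ hlt
          have := ae_one_of_Hf_one hf hf01 k₀ hk₀ le_rfl hH
          filter_upwards [this] with z hz hz0
          exact hz hz0
        · -- x > 0, f x = 1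
          have hSx : Sf f k₀ x = x := by
            by_contra hS1
            have hSlt : Sf f k₀ x < x :=
              lt_of_le_of_ne (Sf_le hf hf01 k₀ hx) hS1
            have hlt : ∑' k, P (k+1) * Sf f k x < ∑' k, P (k+1) * x := by
              refine Summable.tsum_lt_tsum_of_nonneg (i := k₀)
                (fun k => mul_nonneg (hQnn k) (Sf_nonneg hf01 k x))
                (fun k => mul_le_mul_of_nonneg_left (Sf_le hf hf01 k hx) (hQnn k))
                ?_ (hQsummable.mul_right x)
              exact (mul_lt_mul_iff_right₀ hQk₀).2 hSlt
            rw [hfp x h0, tsum_mul_right, hQsum, one_mul, h, mul_one] at hlt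
            exact lt_irrefl _ hlt
          -- Hf f k₀ = 1 a.e. on Ioc 0 x
          have hzero : ∫ y in Ioc (0:ℝ) x, (1 - Hf f k₀ y) = 0 := by
            rw [integral_sub (intConst 1) (Hf_intble hf hf01 k₀ le_rfl),
              integral_const_Ioc hx]
            have : ∫ y in Ioc (0:ℝ) x, Hf f k₀ y = Sf f k₀ x := rfl
            rw [this, hSx]
            ring
          have hib1 : IntegrableOn (fun y => 1 - Hf f k₀ y) (Ioc (0:ℝ) x) :=
            IntegrableOn.congr_fun ((intConst 1).sub (Hf_intble hf hf01 k₀ le_rfl))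
              (fun y _ => rfl) measurableSet_Ioc
          have hone : ∀ᵐ y, y ∈ Ioc (0:ℝ) x → 1 - Hf f k₀ y = 0 := by
            have hae := (setIntegral_eq_zero_iff_of_nonneg_ae
              (f := fun y => 1 - Hf f k₀ y)
              ((ae_restrict_iff' measurableSet_Ioc).2 (ae_of_all _ fun y hy => by
                have := Hf_le_one hf hf01 k₀ hy.1.le
                simp only [Pi.zero_apply]
                linarith))
              hib1).1 hzero
            rw [EventuallyEq, ae_restrict_iff' measurableSet_Ioc] at hae
            filter_upwards [hae] with y hy hy2
            simpa using hy hy2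
          have hstep : ∀ n : ℕ, ∀ᵐ z, z ∈ Ioi (1/((n:ℝ)+1)) → f z = 1 := by
            intro n
            set ε := min x (1/((n:ℝ)+1)) with hεdef
            have hε : 0 < ε := lt_min h0 (by positivity)
            obtain ⟨y, hy, hy1⟩ : ∃ y ∈ Ioc (0:ℝ) ε, Hf f k₀ y = 1 := by
              by_contra hcon
              push_neg at hcon
              have hsubbad : Ioc (0:ℝ) ε ⊆
                  {y | ¬(y ∈ Ioc (0:ℝ) x → 1 - Hf f k₀ y = 0)} := by
                intro y hy
                simp only [mem_setOf_eq, Classical.not_imp]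
                exact ⟨⟨hy.1, hy.2.trans (min_le_left _ _)⟩,
                  fun heq => hcon y hy (by linarith)⟩
              have h0m : volume (Ioc (0:ℝ) ε) = 0 :=
                measure_mono_null hsubbad (ae_iff.1 hone)
              rw [Real.volume_Ioc] at h0m
              have : (0:ℝ) < ε - 0 := by linarith
              exact absurd h0m (ENNReal.ofReal_pos.2 this).ne'
            have hyae := ae_one_of_Hf_one hf hf01 k₀ hk₀ hy.1.le hy1
            filter_upwards [hyae] with z hz hz2
            refine hz ?_
            have : y ≤ 1/((n:ℝ)+1) := hy.2.trans (min_le_right _ _)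
            exact lt_of_le_of_lt this hz2
          have hall := ae_all_iff.2 hstep
          filter_upwards [hall] with z hz hz0
          obtain ⟨n, hn⟩ := exists_nat_one_div_lt (show (0:ℝ) < z from hz0)
          exact hz n hn
      exact hne (hstepB haeone)
    -- strict monotonicity
    have hmono : StrictMonoOn f (Ici 0) := by
      intro x₁ hx₁ x₂ hx₂ h12
      simp only [mem_Ici] at hx₁ hx₂
      have hx₂0 : 0 < x₂ := lt_of_le_of_lt hx₁ h12
      have hsummB : Summable (fun k => P (k+1) * Hf f k x₁) :=
        hsumm_of_le _ 1
          (fun k => mul_nonneg (hQnn k) (Hf_nonneg hf01 k hx₁))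
          (fun k => mul_le_mul_of_nonneg_left (Hf_le_one hf hf01 k hx₁) (hQnn k))
      have hsummS1 : Summable (fun k => P (k+1) * Sf f k x₁) :=
        hsumm_of_le _ x₁
          (fun k => mul_nonneg (hQnn k) (Sf_nonneg hf01 k x₁))
          (fun k => mul_le_mul_of_nonneg_left (Sf_le hf hf01 k hx₁) (hQnn k))
      have hsummS2 : Summable (fun k => P (k+1) * Sf f k x₂) :=
        hsumm_of_le _ x₂
          (fun k => mul_nonneg (hQnn k) (Sf_nonneg hf01 k x₂))
          (fun k => mul_le_mul_of_nonneg_left (Sf_le hf hf01 k hx₂) (hQnn k))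
      have hsummMix : Summable (fun k => P (k+1) * ((x₂ - x₁) * Hf f k x₁)) := by
        refine hsumm_of_le _ (x₂ - x₁)
          (fun k => mul_nonneg (hQnn k)
            (mul_nonneg (by linarith) (Hf_nonneg hf01 k hx₁))) (fun k => ?_)
        have h1 := Hf_le_one hf hf01 k hx₁
        have h2 := Hf_nonneg hf01 k hx₁
        have h3 : (0:ℝ) ≤ x₂ - x₁ := by linarith
        have h4 : (x₂ - x₁) * Hf f k x₁ ≤ x₂ - x₁ := by nlinarith
        exact mul_le_mul_of_nonneg_left h4 (hQnn k)
      have hkey : ∑' k, (P (k+1) * Sf f k x₁ + P (k+1) * ((x₂ - x₁) * Hf f k x₁)) <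
          ∑' k, P (k+1) * Sf f k x₂ := by
        refine Summable.tsum_lt_tsum (i := k₀) (fun k => ?_) ?_ (hsummS1.add hsummMix) hsummS2
        · calc P (k+1) * Sf f k x₁ + P (k+1) * ((x₂ - x₁) * Hf f k x₁)
              = P (k+1) * (Sf f k x₁ + (x₂ - x₁) * Hf f k x₁) := by ring
            _ ≤ P (k+1) * (Sf f k x₁ + ∫ y in Ioc x₁ x₂, Hf f k y) := by
                refine mul_le_mul_of_nonneg_left ?_ (hQnn k)
                have := Hf_int_lower hf hf01 k hx₁ h12.le
                linarith
            _ = P (k+1) * Sf f k x₂ := by rw [← Sf_split hf hf01 k hx₁ h12.le]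
        · calc P (k₀+1) * Sf f k₀ x₁ + P (k₀+1) * ((x₂ - x₁) * Hf f k₀ x₁)
              = P (k₀+1) * (Sf f k₀ x₁ + (x₂ - x₁) * Hf f k₀ x₁) := by ring
            _ < P (k₀+1) * (Sf f k₀ x₁ + ∫ y in Ioc x₁ x₂, Hf f k₀ y) := by
                refine (mul_lt_mul_iff_right₀ hQk₀).2 ?_
                have := Hf_int_lower_strict hf hf01 k₀ hk₀ hflt hx₁ h12
                linarith
            _ = P (k₀+1) * Sf f k₀ x₂ := by rw [← Sf_split hf hf01 k₀ hx₁ h12.le]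
      rw [Summable.tsum_add hsummS1 hsummMix] at hkey
      have hmix : ∑' k, P (k+1) * ((x₂ - x₁) * Hf f k x₁) =
          (x₂ - x₁) * ∑' k, P (k+1) * Hf f k x₁ := by
        rw [← tsum_mul_left]
        exact tsum_congr fun k => by ring
      rw [hmix, hfp x₂ hx₂0] at hkey
      rcases eq_or_lt_of_le hx₁ with h0 | h0
      · -- x₁ = 0
        have hS0 : ∀ k : ℕ, Sf f k x₁ = 0 := fun k => by rw [← h0, Sf_zero]
        have h1 : ∑' k, P (k+1) * Sf f k x₁ = 0 := by
          rw [tsum_congr (fun k => by rw [hS0 k, mul_zero] : ∀ k, P (k+1) * Sf f k x₁ = 0)]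
          exact tsum_zero
        have h2 : ∑' k, P (k+1) * Hf f k x₁ = f x₁ := by rw [← h0]; exact hfp0
        rw [h1, h2, zero_add, ← h0, sub_zero] at hkey
        rw [← h0]
        exact lt_of_mul_lt_mul_left hkey hx₂0.le
      · -- 0 < x₁
        have h1 : ∑' k, P (k+1) * Sf f k x₁ = x₁ * f x₁ := hfp x₁ h0
        have h2 : f x₁ ≤ ∑' k, P (k+1) * Hf f k x₁ := by
          have hterm : ∀ k, P (k+1) * Sf f k x₁ ≤ x₁ * (P (k+1) * Hf f k x₁) := by
            intro k
            have := Sf_le_mul hf hf01 k h0.le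
            have hq := hQnn k
            nlinarith
          have hsum := Summable.tsum_le_tsum hterm hsummS1 (hsummB.mul_left x₁)
          rw [h1, tsum_mul_left] at hsum
          exact le_of_mul_le_mul_left hsum h0
        have h3 : x₂ * f x₁ < x₂ * f x₂ := by
          calc x₂ * f x₁ = x₁ * f x₁ + (x₂ - x₁) * f x₁ := by ring
            _ ≤ x₁ * f x₁ + (x₂ - x₁) * ∑' k, P (k+1) * Hf f k x₁ := by
                have : (0:ℝ) ≤ x₂ - x₁ := by linarith
                nlinarith
            _ < x₂ * f x₂ := by rw [← h1]; exact hkey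
        exact lt_of_mul_lt_mul_left h3 hx₂0.le
    exact ⟨hflt, hmono⟩
end

section
/- If f₁, f₂ : [0,∞) → [0,1] are continuous functions with f₁(x) < f₂(x) for every x ≥ 0, then T(f₁)(x) < T(f₂)(x) for every x ≥ 0. -/
open MeasureTheory Real Set Filter

lemma tgk_int (k : ℕ) :
    IntegrableOn (fun z : ℝ => Real.exp (-z) * z ^ k / (Nat.factorial k : ℝ)) (Ioi 0) := by
  have h := Real.GammaIntegral_convergent (s := (k : ℝ) + 1) (by positivity)
  have h2 : IntegrableOn (fun z : ℝ => Real.exp (-z) * z ^ k) (Ioi 0) := by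
    refine h.congr_fun (fun x hx => ?_) measurableSet_Ioi
    simp only [add_sub_cancel_right, Real.rpow_natCast]
  exact h2.div_const _

lemma tgk_val (k : ℕ) :
    ∫ z in Ioi (0:ℝ), Real.exp (-z) * z ^ k / (Nat.factorial k : ℝ) = 1 := by
  have h0 : ∫ z in Ioi (0:ℝ), Real.exp (-z) * z ^ k = (Nat.factorial k : ℝ) := by
    rw [← Real.Gamma_nat_eq_factorial k,
      Real.Gamma_eq_integral (by positivity : (0:ℝ) < (k:ℝ) + 1)]
    refine setIntegral_congr_fun measurableSet_Ioi fun x hx => ?_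
    rw [add_sub_cancel_right, Real.rpow_natCast]
  rw [integral_div, h0, div_self (by positivity)]

lemma tB_meas (f : ℝ → ℝ) (hc : ContinuousOn f (Ici 0)) {s : Set ℝ}
    (hs : MeasurableSet s) (hsub : s ⊆ Ici 0) (k : ℕ) :
    AEStronglyMeasurable
      (fun z => Real.exp (-z) * z ^ k / (Nat.factorial k : ℝ) * f z ^ k)
      (volume.restrict s) := by
  have hf : AEMeasurable f (volume.restrict s) := (hc.mono hsub).aemeasurable hs
  exact ((((Real.measurable_exp.comp measurable_neg).mul
    (measurable_id.pow_const k)).div_const _).aemeasurable.mul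
    (hf.pow_const k)).aestronglyMeasurable

lemma tB_int (f : ℝ → ℝ) (hc : ContinuousOn f (Ici 0))
    (hb : ∀ x, 0 ≤ x → f x ∈ Icc (0:ℝ) 1) (k : ℕ) {y : ℝ} (hy : 0 ≤ y) :
    IntegrableOn (fun z => Real.exp (-z) * z ^ k / (Nat.factorial k : ℝ) * f z ^ k)
      (Ioi y) := by
  have hg : IntegrableOn (fun z : ℝ => Real.exp (-z) * z ^ k / (Nat.factorial k : ℝ))
      (Ioi y) := (tgk_int k).mono_set (Ioi_subset_Ioi hy)
  refine hg.mono' (tB_meas f hc measurableSet_Ioi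
    (fun z hz => le_of_lt (lt_of_le_of_lt hy hz)) k) ?_
  filter_upwards [ae_restrict_mem measurableSet_Ioi] with z hz
  have hz0 : 0 ≤ z := le_of_lt (lt_of_le_of_lt hy hz)
  have hfz := hb z hz0
  have h1 : (0:ℝ) ≤ Real.exp (-z) * z ^ k / (Nat.factorial k : ℝ) := by positivity
  have h2 : f z ^ k ≤ 1 := pow_le_one₀ hfz.1 hfz.2
  have h3 : (0:ℝ) ≤ f z ^ k := pow_nonneg hfz.1 k
  rw [Real.norm_eq_abs, abs_of_nonneg (mul_nonneg h1 h3)]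
  calc Real.exp (-z) * z ^ k / (Nat.factorial k : ℝ) * f z ^ k
      ≤ Real.exp (-z) * z ^ k / (Nat.factorial k : ℝ) * 1 :=
        mul_le_mul_of_nonneg_left h2 h1
    _ = _ := mul_one _

lemma tB_nonneg (f : ℝ → ℝ) (hb : ∀ x, 0 ≤ x → f x ∈ Icc (0:ℝ) 1) (k : ℕ)
    {y : ℝ} (hy : 0 ≤ y) :
    0 ≤ ∫ z in Ioi y, Real.exp (-z) * z ^ k / (Nat.factorial k : ℝ) * f z ^ k := by
  refine setIntegral_nonneg measurableSet_Ioi (fun z hz => ?_)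
  have hz0 : 0 ≤ z := le_of_lt (lt_of_le_of_lt hy hz)
  have h1 : (0:ℝ) ≤ Real.exp (-z) * z ^ k / (Nat.factorial k : ℝ) := by positivity
  exact mul_nonneg h1 (pow_nonneg (hb z hz0).1 k)

lemma tB_le_one (f : ℝ → ℝ) (hc : ContinuousOn f (Ici 0))
    (hb : ∀ x, 0 ≤ x → f x ∈ Icc (0:ℝ) 1) (k : ℕ) {y : ℝ} (hy : 0 ≤ y) :
    (∫ z in Ioi y, Real.exp (-z) * z ^ k / (Nat.factorial k : ℝ) * f z ^ k) ≤ 1 := by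
  have hgy : IntegrableOn (fun z : ℝ => Real.exp (-z) * z ^ k / (Nat.factorial k : ℝ))
      (Ioi y) := (tgk_int k).mono_set (Ioi_subset_Ioi hy)
  have h1 : (∫ z in Ioi y, Real.exp (-z) * z ^ k / (Nat.factorial k : ℝ) * f z ^ k) ≤
      ∫ z in Ioi y, Real.exp (-z) * z ^ k / (Nat.factorial k : ℝ) := by
    refine setIntegral_mono_on (tB_int f hc hb k hy) hgy measurableSet_Ioi
      (fun z hz => ?_)
    have hz0 : 0 ≤ z := le_of_lt (lt_of_le_of_lt hy hz)
    have hfz := hb z hz0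
    have hg0 : (0:ℝ) ≤ Real.exp (-z) * z ^ k / (Nat.factorial k : ℝ) := by positivity
    calc Real.exp (-z) * z ^ k / (Nat.factorial k : ℝ) * f z ^ k
        ≤ Real.exp (-z) * z ^ k / (Nat.factorial k : ℝ) * 1 :=
          mul_le_mul_of_nonneg_left (pow_le_one₀ hfz.1 hfz.2) hg0
      _ = _ := mul_one _
  have h2 : (∫ z in Ioi y, Real.exp (-z) * z ^ k / (Nat.factorial k : ℝ)) ≤
      ∫ z in Ioi (0:ℝ), Real.exp (-z) * z ^ k / (Nat.factorial k : ℝ) := by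
    refine setIntegral_mono_set (tgk_int k) ?_ ((Ioi_subset_Ioi hy).eventuallyLE)
    filter_upwards [ae_restrict_mem measurableSet_Ioi] with z hz
    have := le_of_lt (mem_Ioi.mp hz); positivity
  have h3 := tgk_val k
  linarith

lemma tB_le (f₁ f₂ : ℝ → ℝ) (hc₁ : ContinuousOn f₁ (Ici 0)) (hc₂ : ContinuousOn f₂ (Ici 0))
    (h₁ : ∀ x, 0 ≤ x → f₁ x ∈ Icc (0:ℝ) 1) (h₂ : ∀ x, 0 ≤ x → f₂ x ∈ Icc (0:ℝ) 1)
    (hle : ∀ x, 0 ≤ x → f₁ x ≤ f₂ x) (k : ℕ) {y : ℝ} (hy : 0 ≤ y) :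
    (∫ z in Ioi y, Real.exp (-z) * z ^ k / (Nat.factorial k : ℝ) * f₁ z ^ k) ≤
    ∫ z in Ioi y, Real.exp (-z) * z ^ k / (Nat.factorial k : ℝ) * f₂ z ^ k := by
  refine setIntegral_mono_on (tB_int f₁ hc₁ h₁ k hy) (tB_int f₂ hc₂ h₂ k hy)
    measurableSet_Ioi (fun z hz => ?_)
  have hz0 : 0 ≤ z := le_of_lt (lt_of_le_of_lt hy hz)
  exact mul_le_mul_of_nonneg_left (pow_le_pow_left₀ (h₁ z hz0).1 (hle z hz0) k)
    (by positivity)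

lemma tB_lt (f₁ f₂ : ℝ → ℝ) (hc₁ : ContinuousOn f₁ (Ici 0)) (hc₂ : ContinuousOn f₂ (Ici 0))
    (h₁ : ∀ x, 0 ≤ x → f₁ x ∈ Icc (0:ℝ) 1) (h₂ : ∀ x, 0 ≤ x → f₂ x ∈ Icc (0:ℝ) 1)
    (hlt : ∀ x, 0 ≤ x → f₁ x < f₂ x) {k : ℕ} (hk : k ≠ 0) {y : ℝ} (hy : 0 ≤ y) :
    (∫ z in Ioi y, Real.exp (-z) * z ^ k / (Nat.factorial k : ℝ) * f₁ z ^ k) <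
    ∫ z in Ioi y, Real.exp (-z) * z ^ k / (Nat.factorial k : ℝ) * f₂ z ^ k := by
  have hi₁ := tB_int f₁ hc₁ h₁ k hy
  have hi₂ := tB_int f₂ hc₂ h₂ k hy
  set h : ℝ → ℝ := fun z => Real.exp (-z) * z ^ k / (Nat.factorial k : ℝ) * f₂ z ^ k
    - Real.exp (-z) * z ^ k / (Nat.factorial k : ℝ) * f₁ z ^ k with hh
  have hpos : ∀ z, y < z → 0 < h z := by
    intro z hz
    have hz0 : 0 ≤ z := le_of_lt (lt_of_le_of_lt hy hz)
    have hzpos : 0 < z := lt_of_le_of_lt hy hz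
    have : f₁ z ^ k < f₂ z ^ k := pow_lt_pow_left₀ (hlt z hz0) (h₁ z hz0).1 hk
    have hg : 0 < Real.exp (-z) * z ^ k / (Nat.factorial k : ℝ) := by positivity
    simp only [hh]
    nlinarith
  have key : 0 < ∫ z in Ioi y, h z := by
    rw [setIntegral_pos_iff_support_of_nonneg_ae]
    · have hsub : Ioi y ⊆ Function.support h ∩ Ioi y :=
        fun z hz => ⟨ne_of_gt (hpos z hz), hz⟩
      refine lt_of_lt_of_le ?_ (measure_mono hsub)
      rw [Real.volume_Ioi]; exact ENNReal.zero_lt_top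
    · filter_upwards [ae_restrict_mem measurableSet_Ioi] with z hz
      exact le_of_lt (hpos z hz)
    · exact hi₂.sub hi₁
  have hsub2 := integral_sub hi₂ hi₁
  rw [show (∫ z in Ioi y, h z) = _ from hsub2] at key
  linarith

lemma tF_nonneg (f : ℝ → ℝ) (hb : ∀ x, 0 ≤ x → f x ∈ Icc (0:ℝ) 1) (k : ℕ)
    {y : ℝ} (hy : 0 ≤ y) :
    0 ≤ (∫ z in Ioc (0:ℝ) y, Real.exp (-z) * z ^ k / (Nat.factorial k : ℝ)) +
      ∫ z in Ioi y, Real.exp (-z) * z ^ k / (Nat.factorial k : ℝ) * f z ^ k := by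
  have h1 : 0 ≤ ∫ z in Ioc (0:ℝ) y, Real.exp (-z) * z ^ k / (Nat.factorial k : ℝ) :=
    setIntegral_nonneg measurableSet_Ioc (fun z hz => by
      have := hz.1; positivity)
  have h2 := tB_nonneg f hb k hy
  linarith

lemma tF_le_one (f : ℝ → ℝ) (hc : ContinuousOn f (Ici 0))
    (hb : ∀ x, 0 ≤ x → f x ∈ Icc (0:ℝ) 1) (k : ℕ) {y : ℝ} (hy : 0 < y) :
    (∫ z in Ioc (0:ℝ) y, Real.exp (-z) * z ^ k / (Nat.factorial k : ℝ)) +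
      (∫ z in Ioi y, Real.exp (-z) * z ^ k / (Nat.factorial k : ℝ) * f z ^ k) ≤ 1 := by
  have hgy : IntegrableOn (fun z : ℝ => Real.exp (-z) * z ^ k / (Nat.factorial k : ℝ))
      (Ioi y) := (tgk_int k).mono_set (Ioi_subset_Ioi hy.le)
  have hA : IntegrableOn (fun z : ℝ => Real.exp (-z) * z ^ k / (Nat.factorial k : ℝ))
      (Ioc 0 y) := (tgk_int k).mono_set Ioc_subset_Ioi_self
  have hB_le : (∫ z in Ioi y, Real.exp (-z) * z ^ k / (Nat.factorial k : ℝ) * f z ^ k) ≤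
      ∫ z in Ioi y, Real.exp (-z) * z ^ k / (Nat.factorial k : ℝ) := by
    refine setIntegral_mono_on (tB_int f hc hb k hy.le) hgy measurableSet_Ioi
      (fun z hz => ?_)
    have hz0 : 0 ≤ z := le_of_lt (lt_of_le_of_lt hy.le hz)
    have hfz := hb z hz0
    have h1 : (0:ℝ) ≤ Real.exp (-z) * z ^ k / (Nat.factorial k : ℝ) := by positivity
    calc Real.exp (-z) * z ^ k / (Nat.factorial k : ℝ) * f z ^ k
        ≤ Real.exp (-z) * z ^ k / (Nat.factorial k : ℝ) * 1 :=
          mul_le_mul_of_nonneg_left (pow_le_one₀ hfz.1 hfz.2) h1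
      _ = _ := mul_one _
  have hsplit : (∫ z in Ioc (0:ℝ) y, Real.exp (-z) * z ^ k / (Nat.factorial k : ℝ)) +
      (∫ z in Ioi y, Real.exp (-z) * z ^ k / (Nat.factorial k : ℝ)) =
      ∫ z in Ioi (0:ℝ), Real.exp (-z) * z ^ k / (Nat.factorial k : ℝ) := by
    rw [← setIntegral_union Ioc_disjoint_Ioi_same measurableSet_Ioi hA hgy,
      Ioc_union_Ioi_eq_Ioi hy.le]
  have := tgk_val k
  linarith

lemma tA_mono (k : ℕ) :
    Monotone (fun y : ℝ => ∫ z in Ioc (0:ℝ) y,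
      Real.exp (-z) * z ^ k / (Nat.factorial k : ℝ)) := by
  intro y₁ y₂ h
  refine setIntegral_mono_set ((tgk_int k).mono_set Ioc_subset_Ioi_self) ?_
    ((Ioc_subset_Ioc_right h).eventuallyLE)
  filter_upwards [ae_restrict_mem measurableSet_Ioc] with z hz
  have := hz.1; positivity

lemma tB_anti (f : ℝ → ℝ) (hc : ContinuousOn f (Ici 0))
    (hb : ∀ x, 0 ≤ x → f x ∈ Icc (0:ℝ) 1) (k : ℕ) :
    AntitoneOn (fun y : ℝ => ∫ z in Ioi y,
      Real.exp (-z) * z ^ k / (Nat.factorial k : ℝ) * f z ^ k) (Ici 0) := by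
  intro y₁ hy₁ y₂ hy₂ h
  refine setIntegral_mono_set (tB_int f hc hb k hy₁) ?_ ((Ioi_subset_Ioi h).eventuallyLE)
  filter_upwards [ae_restrict_mem measurableSet_Ioi] with z hz
  have hz0 : 0 ≤ z := le_of_lt (lt_of_le_of_lt hy₁ hz)
  have h1 : (0:ℝ) ≤ Real.exp (-z) * z ^ k / (Nat.factorial k : ℝ) := by positivity
  exact mul_nonneg h1 (pow_nonneg (hb z hz0).1 k)

lemma tF_int (f : ℝ → ℝ) (hc : ContinuousOn f (Ici 0))
    (hb : ∀ x, 0 ≤ x → f x ∈ Icc (0:ℝ) 1) (k : ℕ) {x : ℝ} (hx : 0 < x) :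
    IntegrableOn (fun y =>
      (∫ z in Ioc (0:ℝ) y, Real.exp (-z) * z ^ k / (Nat.factorial k : ℝ)) +
      ∫ z in Ioi y, Real.exp (-z) * z ^ k / (Nat.factorial k : ℝ) * f z ^ k)
      (Ioc 0 x) := by
  set B : ℝ → ℝ := fun y => ∫ z in Ioi y,
    Real.exp (-z) * z ^ k / (Nat.factorial k : ℝ) * f z ^ k with hB
  have hanti : Antitone (fun y => B (max y 0)) := by
    intro y₁ y₂ h
    exact tB_anti f hc hb k (le_max_right y₁ 0) (le_max_right y₂ 0)
      (max_le_max h le_rfl)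
  have hmeas : AEStronglyMeasurable (fun y =>
      (∫ z in Ioc (0:ℝ) y, Real.exp (-z) * z ^ k / (Nat.factorial k : ℝ)) + B y)
      (volume.restrict (Ioc 0 x)) := by
    have h1 : Measurable (fun y =>
        (∫ z in Ioc (0:ℝ) y, Real.exp (-z) * z ^ k / (Nat.factorial k : ℝ)) +
        B (max y 0)) := ((tA_mono k).measurable).add hanti.measurable
    refine h1.aestronglyMeasurable.congr ?_
    filter_upwards [ae_restrict_mem measurableSet_Ioc] with y hy
    rw [max_eq_left hy.1.le]
  refine Integrable.mono' (g := fun _ => (1:ℝ))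
    (integrableOn_const measure_Ioc_lt_top.ne) hmeas ?_
  filter_upwards [ae_restrict_mem measurableSet_Ioc] with y hy
  have h0 := tF_nonneg f hb k hy.1.le
  have h1 := tF_le_one f hc hb k hy.1
  rw [Real.norm_eq_abs, abs_of_nonneg h0]
  exact h1

lemma tG_lt (f₁ f₂ : ℝ → ℝ) (hc₁ : ContinuousOn f₁ (Ici 0)) (hc₂ : ContinuousOn f₂ (Ici 0))
    (h₁ : ∀ x, 0 ≤ x → f₁ x ∈ Icc (0:ℝ) 1) (h₂ : ∀ x, 0 ≤ x → f₂ x ∈ Icc (0:ℝ) 1)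
    (hlt : ∀ x, 0 ≤ x → f₁ x < f₂ x) {k : ℕ} (hk : k ≠ 0) {x : ℝ} (hx : 0 < x) :
    (∫ y in Ioc (0:ℝ) x,
      ((∫ z in Ioc (0:ℝ) y, Real.exp (-z) * z ^ k / (Nat.factorial k : ℝ)) +
        ∫ z in Ioi y, Real.exp (-z) * z ^ k / (Nat.factorial k : ℝ) * f₁ z ^ k)) <
    ∫ y in Ioc (0:ℝ) x,
      ((∫ z in Ioc (0:ℝ) y, Real.exp (-z) * z ^ k / (Nat.factorial k : ℝ)) +
        ∫ z in Ioi y, Real.exp (-z) * z ^ k / (Nat.factorial k : ℝ) * f₂ z ^ k) := by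
  have hi₁ := tF_int f₁ hc₁ h₁ k hx
  have hi₂ := tF_int f₂ hc₂ h₂ k hx
  set h : ℝ → ℝ := fun y =>
    ((∫ z in Ioc (0:ℝ) y, Real.exp (-z) * z ^ k / (Nat.factorial k : ℝ)) +
      ∫ z in Ioi y, Real.exp (-z) * z ^ k / (Nat.factorial k : ℝ) * f₂ z ^ k) -
    ((∫ z in Ioc (0:ℝ) y, Real.exp (-z) * z ^ k / (Nat.factorial k : ℝ)) +
      ∫ z in Ioi y, Real.exp (-z) * z ^ k / (Nat.factorial k : ℝ) * f₁ z ^ k) with hh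
  have hpos : ∀ y, y ∈ Ioc (0:ℝ) x → 0 < h y := by
    intro y hy
    have := tB_lt f₁ f₂ hc₁ hc₂ h₁ h₂ hlt hk hy.1.le
    simp only [hh]
    linarith
  have key : 0 < ∫ y in Ioc (0:ℝ) x, h y := by
    rw [setIntegral_pos_iff_support_of_nonneg_ae]
    · have hsub : Ioc (0:ℝ) x ⊆ Function.support h ∩ Ioc 0 x :=
        fun y hy => ⟨ne_of_gt (hpos y hy), hy⟩
      refine lt_of_lt_of_le ?_ (measure_mono hsub)
      rw [Real.volume_Ioc]
      simpa using hx
    · filter_upwards [ae_restrict_mem measurableSet_Ioc] with y hy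
      exact le_of_lt (hpos y hy)
    · exact hi₂.sub hi₁
  have hsub2 := integral_sub hi₂ hi₁
  rw [show (∫ y in Ioc (0:ℝ) x, h y) = _ from hsub2] at key
  linarith

theorem stmt_2 (P : ℕ → ℝ)
    (hP0 : P 0 = 0) (hPnonneg : ∀ k, 0 ≤ P k) (hPsum : ∑' k, P k = 1)
    (hPmean : Summable fun k : ℕ => (k : ℝ) * P k) (hP1 : P 1 < 1)
    (f₁ f₂ : ℝ → ℝ)
    (hc₁ : ContinuousOn f₁ (Ici 0)) (hc₂ : ContinuousOn f₂ (Ici 0))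
    (h₁ : ∀ x, 0 ≤ x → f₁ x ∈ Icc (0 : ℝ) 1) (h₂ : ∀ x, 0 ≤ x → f₂ x ∈ Icc (0 : ℝ) 1)
    (hlt : ∀ x, 0 ≤ x → f₁ x < f₂ x) :
    ∀ x, 0 ≤ x → Toper P f₁ x < Toper P f₂ x := by
  have hsP : Summable P := by
    by_contra h
    rw [tsum_eq_zero_of_not_summable h] at hPsum
    norm_num at hPsum
  have hsP1 : Summable (fun k => P (k + 1)) := (summable_nat_add_iff 1).mpr hsP
  obtain ⟨m, hm⟩ : ∃ m, 0 < P (m + 2) := by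
    by_contra h
    push_neg at h
    have hz : ∀ i, P (i + 2) = 0 := fun i => le_antisymm (h i) (hPnonneg _)
    have h2 := (Summable.sum_add_tsum_nat_add 2 hsP).symm
    simp only [hz, tsum_zero, Finset.sum_range_succ, Finset.sum_range_one, hP0,
      zero_add, add_zero, Finset.range_zero, Finset.sum_empty] at h2
    rw [hPsum] at h2
    linarith
  have hle : ∀ x, 0 ≤ x → f₁ x ≤ f₂ x := fun x hx => (hlt x hx).le
  intro x hx
  rcases eq_or_lt_of_le hx with hx0 | hx0
  · -- x = 0
    rw [← hx0]
    simp only [Toper, if_pos rfl]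
    refine Summable.tsum_lt_tsum_of_nonneg (i := m + 1) ?_ ?_ ?_ ?_
    · intro k
      exact mul_nonneg (hPnonneg _) (tB_nonneg f₁ h₁ k le_rfl)
    · intro k
      exact mul_le_mul_of_nonneg_left (tB_le f₁ f₂ hc₁ hc₂ h₁ h₂ hle k le_rfl)
        (hPnonneg _)
    · exact mul_lt_mul_of_pos_left
        (tB_lt f₁ f₂ hc₁ hc₂ h₁ h₂ hlt (Nat.succ_ne_zero m) le_rfl) hm
    · refine Summable.of_nonneg_of_le
        (fun k => mul_nonneg (hPnonneg _) (tB_nonneg f₂ h₂ k le_rfl))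
        (fun k => ?_) hsP1
      exact (mul_le_mul_of_nonneg_left (tB_le_one f₂ hc₂ h₂ k le_rfl)
        (hPnonneg _)).trans_eq (mul_one _)
  · -- 0 < x
    simp only [Toper, if_neg (ne_of_gt hx0)]
    refine mul_lt_mul_of_pos_left ?_ (by positivity : (0:ℝ) < 1 / x)
    have hIle : ∀ (f : ℝ → ℝ), ContinuousOn f (Ici 0) →
        (∀ x, 0 ≤ x → f x ∈ Icc (0:ℝ) 1) → ∀ k : ℕ,
        (∫ y in Ioc (0:ℝ) x,
          ((∫ z in Ioc (0:ℝ) y, Real.exp (-z) * z ^ k / (Nat.factorial k : ℝ)) +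
            ∫ z in Ioi y, Real.exp (-z) * z ^ k / (Nat.factorial k : ℝ) * f z ^ k)) ≤ x := by
      intro f hc hb k
      have hconst : (∫ _ in Ioc (0:ℝ) x, (1:ℝ)) = x := by
        simp [Real.volume_Ioc, ENNReal.toReal_ofReal hx0.le, hx0.le]
      calc (∫ y in Ioc (0:ℝ) x,
          ((∫ z in Ioc (0:ℝ) y, Real.exp (-z) * z ^ k / (Nat.factorial k : ℝ)) +
            ∫ z in Ioi y, Real.exp (-z) * z ^ k / (Nat.factorial k : ℝ) * f z ^ k)) ≤
          ∫ _ in Ioc (0:ℝ) x, (1:ℝ) := by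
            refine setIntegral_mono_on (tF_int f hc hb k hx0)
              (integrableOn_const measure_Ioc_lt_top.ne) measurableSet_Ioc
              (fun y hy => tF_le_one f hc hb k hy.1)
        _ = x := hconst
    refine Summable.tsum_lt_tsum_of_nonneg (i := m + 1) ?_ ?_ ?_ ?_
    · intro k
      refine mul_nonneg (hPnonneg _) (setIntegral_nonneg measurableSet_Ioc
        (fun y hy => tF_nonneg f₁ h₁ k hy.1.le))
    · intro k
      refine mul_le_mul_of_nonneg_left ?_ (hPnonneg _)
      refine setIntegral_mono_on (tF_int f₁ hc₁ h₁ k hx0) (tF_int f₂ hc₂ h₂ k hx0)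
        measurableSet_Ioc (fun y hy => ?_)
      have := tB_le f₁ f₂ hc₁ hc₂ h₁ h₂ hle k hy.1.le
      linarith
    · exact mul_lt_mul_of_pos_left
        (tG_lt f₁ f₂ hc₁ hc₂ h₁ h₂ hlt (Nat.succ_ne_zero m) hx0) hm
    · refine Summable.of_nonneg_of_le
        (fun k => mul_nonneg (hPnonneg _) (setIntegral_nonneg measurableSet_Ioc
          (fun y hy => tF_nonneg f₂ h₂ k hy.1.le)))
        (fun k => mul_le_mul_of_nonneg_left (hIle f₂ hc₂ h₂ k) (hPnonneg _))
        (hsP1.mul_right x)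
end

section
/- Suppose there exists x₀ > 0 such that ∫_0^{x₀} z·g₂(z) dz > 1 and, for every x ∈ (0, x₀], ∫_0^{x₀} z·(min(x,z)/x)·g₂(z) dz > 1. Then there exists ε ∈ (0,1) such that the smallest fixed point q of T (the pointwise limit of T^l(0)) satisfies q(x) ≤ 1 − ε for all x ∈ [0, x₀]; in particular q is not identically equal to 1. -/
open MeasureTheory Real Set Filter

/-- `g₂(x) = e^{-x} ∑_{k≥2} P(k) x^{k-2}/(k-2)!`. -/
noncomputable def g2 (P : ℕ → ℝ) (x : ℝ) : ℝ :=
  Real.exp (-x) * ∑' k : ℕ, P (k + 2) * x ^ k / (Nat.factorial k : ℝ)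

namespace Stmt4Helper

/-! ### The Poisson-type densities `gam k` -/

noncomputable def gam (k : ℕ) (z : ℝ) : ℝ :=
  Real.exp (-z) * z ^ k / (Nat.factorial k : ℝ)

lemma gam_cont (k : ℕ) : Continuous (gam k) :=
  ((Real.continuous_exp.comp continuous_neg).mul (continuous_pow k)).div_const _

lemma gam_nonneg (k : ℕ) {z : ℝ} (hz : 0 ≤ z) : 0 ≤ gam k z := by
  unfold gam; positivity

lemma gam_le (k : ℕ) {z c : ℝ} (hz : 0 ≤ z) (hzc : z ≤ c) :
    gam k z ≤ c ^ k / (Nat.factorial k : ℝ) := by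
  unfold gam
  have h1 : Real.exp (-z) ≤ 1 := by
    rw [← Real.exp_zero]; exact Real.exp_le_exp.2 (by linarith)
  have h2 : Real.exp (-z) * z ^ k ≤ c ^ k := by
    calc Real.exp (-z) * z ^ k ≤ 1 * z ^ k :=
          mul_le_mul_of_nonneg_right h1 (pow_nonneg hz k)
      _ = z ^ k := one_mul _
      _ ≤ c ^ k := pow_le_pow_left₀ hz hzc k
  exact div_le_div₀ (pow_nonneg (hz.trans hzc) k) h2 (by positivity) le_rfl

lemma gam_integrableOn (k : ℕ) : IntegrableOn (gam k) (Ioi (0 : ℝ)) := by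
  have h := Real.GammaIntegral_convergent (s := (k : ℝ) + 1) (by positivity)
  have h2 : IntegrableOn (fun z : ℝ => Real.exp (-z) * z ^ k) (Ioi (0 : ℝ)) := by
    refine h.congr_fun (fun z hz => ?_) measurableSet_Ioi
    simp only [add_sub_cancel_right, Real.rpow_natCast]
  exact h2.div_const _

lemma gam_integral (k : ℕ) : ∫ z in Ioi (0 : ℝ), gam k z = 1 := by
  have h3 : ∫ z in Ioi (0 : ℝ), Real.exp (-z) * z ^ k = Real.Gamma ((k : ℝ) + 1) := by
    rw [Real.Gamma_eq_integral (by positivity)]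
    refine setIntegral_congr_fun measurableSet_Ioi (fun z hz => ?_)
    rw [add_sub_cancel_right, Real.rpow_natCast]
  have h4 : ∫ z in Ioi (0 : ℝ), gam k z
      = (∫ z in Ioi (0 : ℝ), Real.exp (-z) * z ^ k) / (Nat.factorial k : ℝ) := by
    unfold gam; exact integral_div _ _
  rw [h4, h3, Real.Gamma_nat_eq_factorial, div_self]
  exact_mod_cast (Nat.factorial_pos k).ne'

lemma integral_Ioc_add_Ioi {h : ℝ → ℝ} {a b : ℝ} (hab : a ≤ b)
    (hint : IntegrableOn h (Ioi a)) :
    (∫ z in Ioc a b, h z) + ∫ z in Ioi b, h z = ∫ z in Ioi a, h z := by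
  rw [← Ioc_union_Ioi_eq_Ioi hab,
    setIntegral_union (Ioc_disjoint_Ioi le_rfl) measurableSet_Ioi
      (hint.mono_set Ioc_subset_Ioi_self) (hint.mono_set (Ioi_subset_Ioi hab))]

lemma integral_Ioc_add_Ioc {h : ℝ → ℝ} {a b c : ℝ} (hab : a ≤ b) (hbc : b ≤ c)
    (hint : IntegrableOn h (Ioc a c)) :
    (∫ z in Ioc a b, h z) + ∫ z in Ioc b c, h z = ∫ z in Ioc a c, h z := by
  rw [← Ioc_union_Ioc_eq_Ioc hab hbc,
    setIntegral_union (Ioc_disjoint_Ioc_of_le le_rfl) measurableSet_Ioc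
      (hint.mono_set (Ioc_subset_Ioc_right hbc)) (hint.mono_set (Ioc_subset_Ioc_left hab))]

/-! ### Auxiliary functions for a fixed `g` -/

noncomputable def Phi (k : ℕ) (t : ℝ) : ℝ := ∫ z in Ioc (0 : ℝ) t, gam k z

noncomputable def Mf (g : ℝ → ℝ) (k : ℕ) (t : ℝ) : ℝ :=
  ∫ z in Ioc (0 : ℝ) t, gam k z * g z ^ k

noncomputable def Tf (g : ℝ → ℝ) (k : ℕ) : ℝ := ∫ z in Ioi (0 : ℝ), gam k z * g z ^ k

noncomputable def psi' (g : ℝ → ℝ) (k : ℕ) (y : ℝ) : ℝ :=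
  Phi k y + (Tf g k - Mf g k y)

section g

variable {g : ℝ → ℝ} (hgm : Measurable g) (hg0 : ∀ z, 0 ≤ g z) (hg1 : ∀ z, g z ≤ 1)

include hgm hg0 hg1 in
lemma gg_integrableOn (k : ℕ) {s : Set ℝ} (hs : MeasurableSet s) (hsub : s ⊆ Ioi 0) :
    IntegrableOn (fun z => gam k z * g z ^ k) s := by
  refine ((gam_integrableOn k).mono_set hsub).mono'
    ((gam_cont k).measurable.mul (hgm.pow_const k)).aestronglyMeasurable ?_
  refine (ae_restrict_iff' hs).2 (ae_of_all _ fun z hz => ?_)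
  have hz0 : (0 : ℝ) < z := hsub hz
  have h1 : 0 ≤ gam k z := gam_nonneg k hz0.le
  have h3 : g z ^ k ≤ 1 := pow_le_one₀ (hg0 z) (hg1 z)
  rw [Real.norm_eq_abs, abs_of_nonneg (mul_nonneg h1 (pow_nonneg (hg0 z) k))]
  exact mul_le_of_le_one_right h1 h3

lemma Phi_nonneg (k : ℕ) (t : ℝ) : 0 ≤ Phi k t :=
  setIntegral_nonneg measurableSet_Ioc fun z hz => gam_nonneg k hz.1.le

lemma Phi_mono (k : ℕ) : Monotone (Phi k) := by
  intro a b hab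
  refine setIntegral_mono_set ((gam_integrableOn k).mono_set Ioc_subset_Ioi_self)
    ((ae_restrict_iff' measurableSet_Ioc).2 (ae_of_all _ fun z hz => gam_nonneg k hz.1.le))
    (ae_of_all _ fun z hz => Ioc_subset_Ioc_right hab hz)

lemma Phi_le_one (k : ℕ) (t : ℝ) : Phi k t ≤ 1 := by
  rw [← gam_integral k]
  exact setIntegral_mono_set (gam_integrableOn k)
    ((ae_restrict_iff' measurableSet_Ioi).2 (ae_of_all _ fun z hz => gam_nonneg k (le_of_lt hz)))
    (ae_of_all _ fun z hz => hz.1)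

include hg0 in
lemma Mf_nonneg (k : ℕ) (t : ℝ) : 0 ≤ Mf g k t :=
  setIntegral_nonneg measurableSet_Ioc fun z hz =>
    mul_nonneg (gam_nonneg k hz.1.le) (pow_nonneg (hg0 z) k)

include hgm hg0 hg1 in
lemma Mf_mono (k : ℕ) : Monotone (Mf g k) := by
  intro a b hab
  refine setIntegral_mono_set
    (gg_integrableOn hgm hg0 hg1 k measurableSet_Ioc (fun z hz => hz.1))
    ((ae_restrict_iff' measurableSet_Ioc).2 (ae_of_all _ fun z hz =>
      mul_nonneg (gam_nonneg k hz.1.le) (pow_nonneg (hg0 z) k)))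
    (ae_of_all _ fun z hz => Ioc_subset_Ioc_right hab hz)

include hgm hg0 hg1 in
lemma Mf_le_Tf (k : ℕ) (t : ℝ) : Mf g k t ≤ Tf g k := by
  refine setIntegral_mono_set
    (gg_integrableOn hgm hg0 hg1 k measurableSet_Ioi (fun z hz => hz))
    ((ae_restrict_iff' measurableSet_Ioi).2 (ae_of_all _ fun z hz =>
      mul_nonneg (gam_nonneg k (le_of_lt hz)) (pow_nonneg (hg0 z) k)))
    (ae_of_all _ fun z hz => hz.1)

include hgm hg0 hg1 in
lemma psi'_nonneg (k : ℕ) (y : ℝ) : 0 ≤ psi' g k y := by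
  have := Mf_le_Tf hgm hg0 hg1 (g := g) k y
  have := Phi_nonneg k y
  unfold psi'; linarith

include hgm hg0 hg1 in
lemma psi'_eq (k : ℕ) {y : ℝ} (hy : 0 < y) :
    psi' g k y = Phi k y + ∫ z in Ioi y, gam k z * g z ^ k := by
  have := integral_Ioc_add_Ioi (h := fun z => gam k z * g z ^ k) hy.le
    (gg_integrableOn hgm hg0 hg1 k measurableSet_Ioi (fun z hz => hz))
  unfold psi' Tf Mf
  linarith [this]

include hgm hg0 hg1 in
lemma psi'_le_one (k : ℕ) {y : ℝ} (hy : 0 < y) : psi' g k y ≤ 1 := by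
  rw [psi'_eq hgm hg0 hg1 k hy]
  have hle : (∫ z in Ioi y, gam k z * g z ^ k) ≤ ∫ z in Ioi y, gam k z := by
    refine setIntegral_mono_on
      (gg_integrableOn hgm hg0 hg1 k measurableSet_Ioi
        (fun z hz => lt_trans hy hz))
      ((gam_integrableOn k).mono_set (fun z hz => lt_trans hy hz))
      measurableSet_Ioi (fun z hz => ?_)
    have h0z : (0:ℝ) < z := lt_trans hy hz
    exact mul_le_of_le_one_right (gam_nonneg k h0z.le) (pow_le_one₀ (hg0 z) (hg1 z))
  have hsplit := integral_Ioc_add_Ioi (h := gam k) hy.le (gam_integrableOn k)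
  rw [gam_integral k] at hsplit
  unfold Phi
  linarith

include hgm hg0 hg1 in
lemma psi'_measurable (k : ℕ) : Measurable (psi' g k) := by
  unfold psi'
  exact (Phi_mono k).measurable.add
    (measurable_const.sub (Mf_mono hgm hg0 hg1 k).measurable)

include hgm hg0 hg1 in
lemma psi'_integrableOn (k : ℕ) (s : Set ℝ) (hs : MeasurableSet s)
    (hfin : volume s < ⊤) : IntegrableOn (psi' g k) s := by
  refine (integrableOn_const hfin.ne : IntegrableOn (fun _ => (2:ℝ)) s _).mono'
    (psi'_measurable hgm hg0 hg1 k).aestronglyMeasurable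
    (ae_of_all _ fun y => ?_)
  have h1 := psi'_nonneg hgm hg0 hg1 k y
  have h2 : psi' g k y ≤ 2 := by
    have := Phi_le_one k y
    have := Mf_nonneg hg0 k y
    have hT : Tf g k ≤ 1 := by
      rw [← gam_integral k]
      refine setIntegral_mono_on
        (gg_integrableOn hgm hg0 hg1 k measurableSet_Ioi (fun z hz => hz))
        (gam_integrableOn k) measurableSet_Ioi (fun z hz => ?_)
      exact mul_le_of_le_one_right (gam_nonneg k (le_of_lt hz)) (pow_le_one₀ (hg0 z) (hg1 z))
    unfold psi'; linarith
  rw [Real.norm_eq_abs, abs_of_nonneg h1]; exact h2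

end g

end Stmt4Helper

namespace Stmt4Helper

lemma inter_Ioi_Ioc {y x₀ : ℝ} (hy : 0 < y) : Ioi y ∩ Ioc 0 x₀ = Ioc y x₀ := by
  ext z
  simp only [mem_inter_iff, mem_Ioi, mem_Ioc]
  exact ⟨fun ⟨a, _, c⟩ => ⟨a, c⟩, fun ⟨a, b⟩ => ⟨a, hy.trans a, b⟩⟩

lemma phi_diff_eq {k : ℕ} {y x₀ : ℝ} (hy : 0 < y) (hyx : y ≤ x₀) :
    Phi k x₀ - Phi k y = ∫ z in Ioc y x₀, gam k z := by
  have := integral_Ioc_add_Ioc (h := gam k) hy.le hyx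
    ((gam_integrableOn k).mono_set (fun z hz => hz.1))
  unfold Phi; linarith

lemma fubini_min (k : ℕ) {x x₀ : ℝ} (hx : 0 < x) (hxx : x ≤ x₀) :
    ∫ y in Ioc (0:ℝ) x, (Phi k x₀ - Phi k y) = ∫ z in Ioc (0:ℝ) x₀, min x z * gam k z := by
  have hx₀ : 0 < x₀ := lt_of_lt_of_le hx hxx
  haveI h1 : IsFiniteMeasure (volume.restrict (Ioc (0:ℝ) x)) :=
    ⟨by rw [Measure.restrict_apply_univ]; exact measure_Ioc_lt_top⟩
  haveI h2 : IsFiniteMeasure (volume.restrict (Ioc (0:ℝ) x₀)) :=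
    ⟨by rw [Measure.restrict_apply_univ]; exact measure_Ioc_lt_top⟩
  have step1 : ∫ y in Ioc (0:ℝ) x, (Phi k x₀ - Phi k y)
      = ∫ y in Ioc (0:ℝ) x, ∫ z in Ioc (0:ℝ) x₀, (Ioi y).indicator (gam k) z := by
    refine setIntegral_congr_fun measurableSet_Ioc (fun y hy => ?_)
    rw [integral_indicator measurableSet_Ioi, Measure.restrict_restrict measurableSet_Ioi,
      inter_Ioi_Ioc hy.1]
    exact phi_diff_eq hy.1 (hy.2.trans hxx)
  rw [step1]
  have hmeas : Measurable (Function.uncurry fun y z : ℝ => (Ioi y).indicator (gam k) z) := by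
    have he : (Function.uncurry fun y z : ℝ => (Ioi y).indicator (gam k) z)
        = ({p : ℝ × ℝ | p.1 < p.2}).indicator (fun p => gam k p.2) := by
      ext p
      by_cases h : p.1 < p.2 <;>
        simp [Function.uncurry, Set.indicator, h, mem_Ioi, mem_setOf_eq]
    rw [he]
    exact ((gam_cont k).measurable.comp measurable_snd).indicator
      (measurableSet_lt measurable_fst measurable_snd)
  have hbound : ∀ᵐ p ∂((volume.restrict (Ioc (0:ℝ) x)).prod (volume.restrict (Ioc (0:ℝ) x₀))),
      ‖(Ioi p.1).indicator (gam k) p.2‖ ≤ x₀ ^ k / (Nat.factorial k : ℝ) := by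
    have hae : ∀ᵐ p ∂((volume.restrict (Ioc (0:ℝ) x)).prod (volume.restrict (Ioc (0:ℝ) x₀))),
        p.2 ∈ Ioc (0:ℝ) x₀ := by
      rw [ae_iff]
      have hset : {p : ℝ × ℝ | ¬ p.2 ∈ Ioc (0:ℝ) x₀} = univ ×ˢ (Ioc (0:ℝ) x₀)ᶜ := by
        ext p; simp [mem_prod]
      rw [hset, Measure.prod_prod, Measure.restrict_apply measurableSet_Ioc.compl]
      simp
    filter_upwards [hae] with p hp
    by_cases h : p.2 ∈ Ioi p.1
    · rw [indicator_of_mem h, Real.norm_eq_abs, abs_of_nonneg (gam_nonneg k hp.1.le)]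
      exact gam_le k hp.1.le hp.2
    · rw [indicator_of_notMem h, norm_zero]
      positivity
  have hint : Integrable (Function.uncurry fun y z : ℝ => (Ioi y).indicator (gam k) z)
      ((volume.restrict (Ioc (0:ℝ) x)).prod (volume.restrict (Ioc (0:ℝ) x₀))) :=
    (integrable_const _).mono' hmeas.aestronglyMeasurable hbound
  rw [integral_integral_swap hint]
  refine setIntegral_congr_fun measurableSet_Ioc (fun z hz => ?_)
  have hswap : ∀ y : ℝ, (Ioi y).indicator (gam k) z = (Iio z).indicator (fun _ => gam k z) y := by
    intro y
    by_cases h : y < z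
    · rw [indicator_of_mem (by exact h : z ∈ Ioi y), indicator_of_mem (by exact h : y ∈ Iio z)]
    · rw [indicator_of_notMem (by exact h : z ∉ Ioi y),
        indicator_of_notMem (by exact h : y ∉ Iio z)]
  simp_rw [hswap]
  rw [integral_indicator measurableSet_Iio, Measure.restrict_restrict measurableSet_Iio,
    setIntegral_const]
  rcases le_or_gt z x with h | h
  · have hseq : Iio z ∩ Ioc 0 x = Ioo 0 z := by
      ext w; simp only [mem_inter_iff, mem_Iio, mem_Ioc, mem_Ioo]
      exact ⟨fun ⟨a, b, _⟩ => ⟨b, a⟩, fun ⟨a, b⟩ => ⟨b, a, le_trans b.le h⟩⟩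
    rw [hseq, Real.volume_real_Ioo_of_le hz.1.le,
      min_eq_right h, smul_eq_mul]
    ring
  · have hseq : Iio z ∩ Ioc 0 x = Ioc 0 x := by
      ext w; simp only [mem_inter_iff, mem_Iio, mem_Ioc]
      exact ⟨fun ⟨_, b⟩ => b, fun b => ⟨lt_of_le_of_lt b.2 h, b⟩⟩
    rw [hseq, Real.volume_real_Ioc_of_le hx.le,
      min_eq_left h.le, smul_eq_mul]
    ring

end Stmt4Helper

namespace Stmt4Helper

lemma pow_aux {a : ℝ} (h0 : 0 ≤ a) (h1 : a ≤ 1) : ∀ m : ℕ, (m:ℝ) * (1-a) * a ^ m ≤ 1 - a ^ m := by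
  intro m
  induction m with
  | zero => simp
  | succ n ih =>
    have hpow : a ^ (n+1) ≤ a ^ n := pow_le_pow_of_le_one h0 h1 (Nat.le_succ n)
    have han : (0:ℝ) ≤ a ^ n := pow_nonneg h0 n
    have hn1 : (0:ℝ) ≤ (n:ℝ) + 1 := by positivity
    have key : ((n:ℝ)+1) * (1-a) * a ^ (n+1) ≤ ((n:ℝ)+1) * (1-a) * a ^ n := by
      refine mul_le_mul_of_nonneg_left hpow ?_
      nlinarith
    have expand : 1 - a^(n+1) = (1-a) * a^n + (1 - a^n) := by rw [pow_succ]; ring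
    push_cast
    nlinarith [ih, key]

noncomputable def SK (P : ℕ → ℝ) (K : ℕ) (z : ℝ) : ℝ :=
  ∑ j ∈ Finset.range K, P (j + 2) * z ^ j / (Nat.factorial j : ℝ)

lemma SK_cont (P : ℕ → ℝ) (K : ℕ) : Continuous (SK P K) :=
  continuous_finset_sum _ fun j _ => (continuous_const.mul (continuous_pow j)).div_const _

lemma SK_nonneg (P : ℕ → ℝ) (hP : ∀ k, 0 ≤ P k) (K : ℕ) {z : ℝ} (hz : 0 ≤ z) :
    0 ≤ SK P K z :=
  Finset.sum_nonneg fun j _ => by have := hP (j+2); positivity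

lemma SK_le_exp (P : ℕ → ℝ) (hP : ∀ k, 0 ≤ P k) (hPle : ∀ k, P k ≤ 1) (K : ℕ) {z : ℝ}
    (hz : 0 ≤ z) : SK P K z ≤ Real.exp z := by
  calc SK P K z ≤ ∑ j ∈ Finset.range K, z ^ j / (Nat.factorial j : ℝ) := by
        refine Finset.sum_le_sum fun j _ => ?_
        refine div_le_div₀ (pow_nonneg hz j) ?_ (by positivity) le_rfl
        exact mul_le_of_le_one_left (pow_nonneg hz j) (hPle _)
    _ ≤ Real.exp z := Real.sum_le_exp_of_nonneg hz K

noncomputable def Dk (x₀ : ℝ) (k : ℕ) (x : ℝ) : ℝ := ∫ z in Ioc (0:ℝ) x₀, min x z * gam k z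

lemma Dk_integrand_int (x₀ : ℝ) (k : ℕ) (x : ℝ) :
    IntegrableOn (fun z => min x z * gam k z) (Ioc (0:ℝ) x₀) :=
  ((continuous_const.min continuous_id).mul (gam_cont k)).integrableOn_Ioc

lemma Dk_nonneg (x₀ : ℝ) (k : ℕ) {x : ℝ} (hx : 0 ≤ x) : 0 ≤ Dk x₀ k x :=
  setIntegral_nonneg measurableSet_Ioc fun z hz =>
    mul_nonneg (le_min hx hz.1.le) (gam_nonneg k hz.1.le)

lemma Dk_le_mul (x₀ : ℝ) (k : ℕ) (x : ℝ) : Dk x₀ k x ≤ x * Phi k x₀ := by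
  have h1 : Dk x₀ k x ≤ ∫ z in Ioc (0:ℝ) x₀, x * gam k z := by
    refine setIntegral_mono_on (Dk_integrand_int x₀ k x)
      (((gam_integrableOn k).mono_set (fun z hz => hz.1)).const_mul x)
      measurableSet_Ioc (fun z hz =>
        mul_le_mul_of_nonneg_right (min_le_left _ _) (gam_nonneg k hz.1.le))
  rwa [integral_const_mul] at h1

lemma Dk_le (x₀ : ℝ) (k : ℕ) {x : ℝ} (hx : 0 ≤ x) : Dk x₀ k x ≤ x := by
  have h2 := Dk_le_mul x₀ k x
  have h3 : x * Phi k x₀ ≤ x * 1 := mul_le_mul_of_nonneg_left (Phi_le_one k x₀) hx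
  linarith

noncomputable def IK (P : ℕ → ℝ) (x₀ : ℝ) (K : ℕ) (x : ℝ) : ℝ :=
  ∫ z in Ioc (0:ℝ) x₀, z * (min x z / x) * (Real.exp (-z) * SK P K z)

lemma IK_integrand_int (P : ℕ → ℝ) (x₀ : ℝ) (K : ℕ) (x : ℝ) :
    IntegrableOn (fun z => z * (min x z / x) * (Real.exp (-z) * SK P K z)) (Ioc (0:ℝ) x₀) :=
  ((continuous_id.mul ((continuous_const.min continuous_id).div_const x)).mul
    ((Real.continuous_exp.comp continuous_neg).mul (SK_cont P K))).integrableOn_Ioc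

lemma IK_eq (P : ℕ → ℝ) (x₀ : ℝ) (K : ℕ) {x : ℝ} (hx : 0 < x) :
    x * IK P x₀ K x = ∑ j ∈ Finset.range K, ((j:ℝ)+1) * P (j+2) * Dk x₀ (j+1) x := by
  unfold IK Dk
  have hterm : ∀ j ∈ Finset.range K, ((j:ℝ)+1) * P (j+2) * ∫ z in Ioc (0:ℝ) x₀, min x z * gam (j+1) z
      = ∫ z in Ioc (0:ℝ) x₀, ((j:ℝ)+1) * P (j+2) * (min x z * gam (j+1) z) :=
    fun j _ => (integral_const_mul _ _).symm
  rw [Finset.sum_congr rfl hterm,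
    ← integral_finset_sum _ (fun j _ => ((Dk_integrand_int x₀ (j+1) x).const_mul _)),
    ← integral_const_mul]
  refine setIntegral_congr_fun measurableSet_Ioc (fun z hz => ?_)
  have hj : ∀ j ∈ Finset.range K,
      min x z * z * Real.exp (-z) * (P (j+2) * z ^ j / (Nat.factorial j : ℝ))
      = ((j:ℝ)+1) * P (j+2) * (min x z * gam (j+1) z) := by
    intro j _
    unfold gam
    have hfac : (Nat.factorial j : ℝ) ≠ 0 := by
      exact_mod_cast (Nat.factorial_pos j).ne'
    rw [Nat.factorial_succ, pow_succ]
    push_cast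
    field_simp
  calc x * (z * (min x z / x) * (Real.exp (-z) * SK P K z))
      = min x z * z * Real.exp (-z) * SK P K z := by
        field_simp
    _ = ∑ j ∈ Finset.range K,
          min x z * z * Real.exp (-z) * (P (j+2) * z ^ j / (Nat.factorial j : ℝ)) := by
        unfold SK; rw [Finset.mul_sum]
    _ = ∑ j ∈ Finset.range K, ((j:ℝ)+1) * P (j+2) * (min x z * gam (j+1) z) :=
        Finset.sum_congr rfl hj

lemma IK_mono (P : ℕ → ℝ) (hP : ∀ k, 0 ≤ P k) (x₀ : ℝ) (K : ℕ) {x : ℝ}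
    (hx : 0 < x) (hxx : x ≤ x₀) : IK P x₀ K x₀ ≤ IK P x₀ K x := by
  have hx₀ : 0 < x₀ := lt_of_lt_of_le hx hxx
  refine setIntegral_mono_on (IK_integrand_int P x₀ K x₀) (IK_integrand_int P x₀ K x)
    measurableSet_Ioc (fun z hz => ?_)
  have hw : min x₀ z / x₀ ≤ min x z / x := by
    rw [← min_div_div_right hx.le x z, div_self hx.ne']
    refine le_min ?_ ?_
    · rw [div_le_one hx₀]; exact min_le_left _ _
    · exact div_le_div₀ hz.1.le (min_le_right _ _) hx hxx
  have h2 : z * (min x₀ z / x₀) ≤ z * (min x z / x) :=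
    mul_le_mul_of_nonneg_left hw hz.1.le
  exact mul_le_mul_of_nonneg_right h2
    (mul_nonneg (Real.exp_pos _).le (SK_nonneg P hP K hz.1.le))

lemma g2_measurable (P : ℕ → ℝ)
    (hsum : ∀ z : ℝ, Summable (fun j : ℕ => P (j+2) * z ^ j / (Nat.factorial j : ℝ))) :
    Measurable (g2 P) := by
  unfold g2
  refine (Real.continuous_exp.comp continuous_neg).measurable.mul ?_
  exact measurable_of_tendsto_metrizable (fun n => (SK_cont P n).measurable)
    (tendsto_pi_nhds.2 fun z => (hsum z).hasSum.tendsto_sum_nat)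

lemma g2_nonneg (P : ℕ → ℝ) (hP : ∀ k, 0 ≤ P k) {z : ℝ} (hz : 0 ≤ z) : 0 ≤ g2 P z :=
  mul_nonneg (Real.exp_pos _).le (tsum_nonneg fun j => by have := hP (j+2); positivity)

lemma g2_le_one (P : ℕ → ℝ) (hP : ∀ k, 0 ≤ P k) (hPle : ∀ k, P k ≤ 1)
    (hsum : ∀ z : ℝ, Summable (fun j : ℕ => P (j+2) * z ^ j / (Nat.factorial j : ℝ)))
    {z : ℝ} (hz : 0 ≤ z) : g2 P z ≤ 1 := by
  unfold g2
  have ht : (∑' j : ℕ, P (j+2) * z ^ j / (Nat.factorial j : ℝ)) ≤ Real.exp z :=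
    (hsum z).tsum_le_of_sum_range_le (fun n => SK_le_exp P hP hPle n hz)
  calc Real.exp (-z) * (∑' j : ℕ, P (j+2) * z ^ j / (Nat.factorial j : ℝ))
      ≤ Real.exp (-z) * Real.exp z := mul_le_mul_of_nonneg_left ht (Real.exp_pos _).le
    _ = 1 := by rw [← Real.exp_add]; simp

lemma IK_tendsto (P : ℕ → ℝ) (hP : ∀ k, 0 ≤ P k) (hPle : ∀ k, P k ≤ 1)
    (hsum : ∀ z : ℝ, Summable (fun j : ℕ => P (j+2) * z ^ j / (Nat.factorial j : ℝ)))
    {x₀ : ℝ} (hx₀ : 0 < x₀) :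
    Tendsto (fun K => IK P x₀ K x₀) atTop
      (nhds (∫ z in Ioc (0:ℝ) x₀, z * (min x₀ z / x₀) * g2 P z)) := by
  refine integral_tendsto_of_tendsto_of_monotone
    (fun K => IK_integrand_int P x₀ K x₀) ?_ ?_ ?_
  · refine ((integrableOn_const measure_Ioc_lt_top.ne) :
      IntegrableOn (fun _ => x₀) _ _).mono' ?_ ?_
    · refine ((continuous_id.mul ((continuous_const.min continuous_id).div_const
        x₀)).measurable.mul (g2_measurable P hsum)).aestronglyMeasurable
    · refine (ae_restrict_iff' measurableSet_Ioc).2 (ae_of_all _ fun z hz => ?_)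
      have hg2a := g2_nonneg P hP hz.1.le
      have hg2b := g2_le_one P hP hPle hsum hz.1.le
      have hwa : 0 ≤ min x₀ z / x₀ := div_nonneg (le_min hx₀.le hz.1.le) hx₀.le
      have hwb : min x₀ z / x₀ ≤ 1 := by rw [div_le_one hx₀]; exact min_le_left _ _
      rw [Real.norm_eq_abs, abs_of_nonneg (mul_nonneg (mul_nonneg hz.1.le hwa) hg2a)]
      calc z * (min x₀ z / x₀) * g2 P z ≤ z * 1 * 1 := by
            refine mul_le_mul (mul_le_mul_of_nonneg_left hwb hz.1.le) hg2b hg2a ?_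
            nlinarith [hz.1.le]
        _ = z := by ring
        _ ≤ x₀ := hz.2
  · refine (ae_restrict_iff' measurableSet_Ioc).2 (ae_of_all _ fun z hz => ?_)
    intro K1 K2 hK
    have hSK : SK P K1 z ≤ SK P K2 z := by
      refine Finset.sum_le_sum_of_subset_of_nonneg (Finset.range_subset_range.2 hK)
        (fun j _ _ => ?_)
      have := hP (j+2); have := hz.1.le; positivity
    have h2 : Real.exp (-z) * SK P K1 z ≤ Real.exp (-z) * SK P K2 z :=
      mul_le_mul_of_nonneg_left hSK (Real.exp_pos _).le
    refine mul_le_mul_of_nonneg_left h2 ?_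
    have hwa : 0 ≤ min x₀ z / x₀ := div_nonneg (le_min hx₀.le hz.1.le) hx₀.le
    exact mul_nonneg hz.1.le hwa
  · refine ae_of_all _ fun z => ?_
    have ht := (hsum z).hasSum.tendsto_sum_nat
    have := (ht.const_mul (Real.exp (-z))).const_mul (z * (min x₀ z / x₀))
    exact this

end Stmt4Helper

namespace Stmt4Helper

noncomputable def superSol (x₀ ε : ℝ) : ℝ → ℝ := fun x => if x ≤ x₀ then 1 - ε else 1

lemma superSol_nonneg {x₀ ε : ℝ} (hε : ε ≤ 1) (x : ℝ) : 0 ≤ superSol x₀ ε x := by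
  unfold superSol; split <;> linarith

lemma superSol_le_one {x₀ ε : ℝ} (hε : 0 ≤ ε) (x : ℝ) : superSol x₀ ε x ≤ 1 := by
  unfold superSol; split <;> linarith

set_option maxHeartbeats 1000000 in
lemma Toper_step (P : ℕ → ℝ) (hPnn : ∀ k, 0 ≤ P k)
    (hP1sum : ∑' k : ℕ, P (k+1) = 1) (hP1s : Summable (fun k : ℕ => P (k+1)))
    (x₀ ε : ℝ) (hx₀ : 0 < x₀) (hε0 : 0 < ε) (hε1 : ε < 1) (K : ℕ)
    (hgood : ∀ x, 0 < x → x ≤ x₀ → ε ≤ ε * (1-ε)^K * IK P x₀ K x)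
    (g : ℝ → ℝ) (hgm : Measurable g) (hg0 : ∀ z, 0 ≤ g z)
    (hgs : ∀ z, g z ≤ superSol x₀ ε z) :
    Measurable (Toper P g) ∧ (∀ z, 0 ≤ Toper P g z) ∧
      (∀ z, Toper P g z ≤ superSol x₀ ε z) := by
  have hg1 : ∀ z, g z ≤ 1 := fun z => (hgs z).trans (superSol_le_one hε0.le z)
  have hgf : ∀ z, z ≤ x₀ → g z ≤ 1 - ε := fun z hz => by
    have h := hgs z; unfold superSol at h; rwa [if_pos hz] at h
  set a := 1 - ε with ha
  have ha0 : 0 ≤ a := by rw [ha]; linarith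
  have ha1 : a ≤ 1 := by rw [ha]; linarith
  have hT : Toper P g = fun x => if x = 0 then
      ∑' k : ℕ, P (k + 1) * ∫ z in Ioi (0:ℝ), gam k z * g z ^ k
    else (1/x) * ∑' k : ℕ, P (k + 1) * ∫ y in Ioc (0:ℝ) x,
      ((∫ z in Ioc (0:ℝ) y, gam k z) + ∫ z in Ioi y, gam k z * g z ^ k) := rfl
  have hPsiEq : ∀ (k : ℕ) (x : ℝ),
      (∫ y in Ioc (0:ℝ) x,
        ((∫ z in Ioc (0:ℝ) y, gam k z) + ∫ z in Ioi y, gam k z * g z ^ k))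
        = ∫ y in Ioc (0:ℝ) x, psi' g k y := by
    intro k x
    refine setIntegral_congr_fun measurableSet_Ioc (fun y hy => ?_)
    rw [psi'_eq hgm hg0 hg1 k hy.1]
    rfl
  have hPsiNonneg : ∀ (k : ℕ) (x : ℝ), 0 ≤ ∫ y in Ioc (0:ℝ) x, psi' g k y :=
    fun k x => setIntegral_nonneg measurableSet_Ioc fun y _ => psi'_nonneg hgm hg0 hg1 k y
  have hPsiLe : ∀ (k : ℕ) (x : ℝ), 0 < x → (∫ y in Ioc (0:ℝ) x, psi' g k y) ≤ x := by
    intro k x hx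
    have h : (∫ y in Ioc (0:ℝ) x, psi' g k y) ≤ ∫ _y in Ioc (0:ℝ) x, (1:ℝ) :=
      setIntegral_mono_on
        (psi'_integrableOn hgm hg0 hg1 k _ measurableSet_Ioc measure_Ioc_lt_top)
        (integrableOn_const measure_Ioc_lt_top.ne) measurableSet_Ioc
        (fun y hy => psi'_le_one hgm hg0 hg1 k hy.1)
    rwa [setIntegral_const, Real.volume_real_Ioc_of_le hx.le, sub_zero,
      smul_eq_mul, mul_one] at h
  have hFs : ∀ x : ℝ, Summable (fun k : ℕ => P (k+1) * ∫ y in Ioc (0:ℝ) x, psi' g k y) := by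
    intro x
    rcases le_or_gt x 0 with hx | hx
    · have hempty : Ioc (0:ℝ) x = ∅ := Ioc_eq_empty (by intro h; linarith)
      simp only [hempty, Measure.restrict_empty, integral_zero_measure, mul_zero]
      exact summable_zero
    · refine Summable.of_nonneg_of_le
        (fun k => mul_nonneg (hPnn _) (hPsiNonneg k x)) (fun k => ?_) (hP1s.mul_right x)
      exact mul_le_mul_of_nonneg_left (hPsiLe k x hx) (hPnn _)
  have hTval : ∀ x : ℝ, x ≠ 0 → Toper P g x
      = (1/x) * ∑' k : ℕ, P (k+1) * ∫ y in Ioc (0:ℝ) x, psi' g k y := by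
    intro x hx
    rw [hT]
    simp only [if_neg hx]
    congr 1
    exact tsum_congr fun k => by rw [hPsiEq k x]
  -- measurability
  have hPsiMeas : ∀ k : ℕ, Measurable (fun x => ∫ y in Ioc (0:ℝ) x, psi' g k y) := by
    intro k
    have hmono : Monotone (fun x => ∫ y in Ioc (0:ℝ) x, psi' g k y) := by
      intro s t hst
      refine setIntegral_mono_set
        (psi'_integrableOn hgm hg0 hg1 k _ measurableSet_Ioc measure_Ioc_lt_top)
        (ae_of_all _ fun y => psi'_nonneg hgm hg0 hg1 k y)
        (ae_of_all _ fun y hy => Ioc_subset_Ioc_right hst hy)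
    exact hmono.measurable
  have hFmeas : Measurable (fun x : ℝ =>
      ∑' k : ℕ, P (k+1) * ∫ y in Ioc (0:ℝ) x, psi' g k y) := by
    refine measurable_of_tendsto_metrizable
      (f := fun n x => ∑ k ∈ Finset.range n, P (k+1) * ∫ y in Ioc (0:ℝ) x, psi' g k y)
      (fun n => Finset.measurable_sum _ fun k _ => measurable_const.mul (hPsiMeas k))
      (tendsto_pi_nhds.2 fun x => (hFs x).hasSum.tendsto_sum_nat)
  have hTmeas : Measurable (Toper P g) := by
    rw [hT]
    have hset : MeasurableSet {x : ℝ | x = 0} := by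
      have h : {x : ℝ | x = 0} = {0} := by ext w; simp
      rw [h]; exact measurableSet_singleton 0
    refine Measurable.ite hset measurable_const ?_
    have heq : (fun x : ℝ => (1/x) * ∑' k : ℕ, P (k + 1) * ∫ y in Ioc (0:ℝ) x,
        ((∫ z in Ioc (0:ℝ) y, gam k z) + ∫ z in Ioi y, gam k z * g z ^ k))
        = fun x => (1/x) * ∑' k : ℕ, P (k+1) * ∫ y in Ioc (0:ℝ) x, psi' g k y := by
      funext x
      congr 1
      exact tsum_congr fun k => by rw [hPsiEq k x]
    rw [heq]
    exact (measurable_const.div measurable_id).mul hFmeas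
  refine ⟨hTmeas, ?_, ?_⟩
  · -- nonnegativity
    intro x
    rcases lt_trichotomy x 0 with hx | hx | hx
    · rw [hT]
      simp only [if_neg hx.ne]
      have hempty : Ioc (0:ℝ) x = ∅ := Ioc_eq_empty (by intro h; linarith)
      simp [hempty]
    · subst hx
      have hTval0 : Toper P g 0
          = ∑' k : ℕ, P (k + 1) * ∫ z in Ioi (0:ℝ), gam k z * g z ^ k := by
        rw [hT]; simp
      rw [hTval0]
      exact tsum_nonneg fun k => mul_nonneg (hPnn _) (setIntegral_nonneg measurableSet_Ioi
        (fun z hz => mul_nonneg (gam_nonneg k (le_of_lt hz)) (pow_nonneg (hg0 z) k)))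
    · rw [hTval x hx.ne']
      exact mul_nonneg (by positivity)
        (tsum_nonneg fun k => mul_nonneg (hPnn _) (hPsiNonneg k x))
  · -- main bound
    intro x
    rcases lt_trichotomy x 0 with hx | hx | hx
    · rw [hT]
      simp only [if_neg hx.ne]
      have hempty : Ioc (0:ℝ) x = ∅ := Ioc_eq_empty (by intro h; linarith)
      have hss := superSol_nonneg (x₀ := x₀) (ε := ε) (by linarith) x
      simp only [hempty, Measure.restrict_empty, integral_zero_measure, mul_zero, tsum_zero]
      linarith
    · -- x = 0
      subst hx
      have hTval0 : Toper P g 0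
          = ∑' k : ℕ, P (k + 1) * ∫ z in Ioi (0:ℝ), gam k z * g z ^ k := by
        rw [hT]; simp
      rw [hTval0]
      have hRk_le : ∀ k : ℕ, (∫ z in Ioi (0:ℝ), gam k z * g z ^ k)
          ≤ 1 - (1 - a^k) * Phi k x₀ := by
        intro k
        have hsplit := integral_Ioc_add_Ioi (h := fun z => gam k z * g z ^ k) hx₀.le
          (gg_integrableOn hgm hg0 hg1 k measurableSet_Ioi (fun z hz => hz))
        have hb1 : (∫ z in Ioc (0:ℝ) x₀, gam k z * g z ^ k) ≤ a^k * Phi k x₀ := by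
          have h : (∫ z in Ioc (0:ℝ) x₀, gam k z * g z ^ k)
              ≤ ∫ z in Ioc (0:ℝ) x₀, a^k * gam k z := by
            refine setIntegral_mono_on
              (gg_integrableOn hgm hg0 hg1 k measurableSet_Ioc (fun z hz => hz.1))
              (((gam_integrableOn k).mono_set (fun z hz => hz.1)).const_mul (a^k))
              measurableSet_Ioc (fun z hz => ?_)
            have hgz : g z ^ k ≤ a ^ k := pow_le_pow_left₀ (hg0 z) (hgf z hz.2) k
            calc gam k z * g z ^ k ≤ gam k z * a ^ k :=
                  mul_le_mul_of_nonneg_left hgz (gam_nonneg k hz.1.le)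
              _ = a ^ k * gam k z := mul_comm _ _
          rwa [integral_const_mul] at h
        have hb2 : (∫ z in Ioi x₀, gam k z * g z ^ k) ≤ ∫ z in Ioi x₀, gam k z := by
          refine setIntegral_mono_on
            (gg_integrableOn hgm hg0 hg1 k measurableSet_Ioi (fun z hz => hx₀.trans hz))
            ((gam_integrableOn k).mono_set (fun z hz => hx₀.trans hz))
            measurableSet_Ioi (fun z hz => ?_)
          exact mul_le_of_le_one_right (gam_nonneg k (hx₀.trans hz).le)
            (pow_le_one₀ (hg0 z) (hg1 z))
        have hsplit4 : Phi k x₀ + (∫ z in Ioi x₀, gam k z) = 1 := by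
          have h := integral_Ioc_add_Ioi (h := gam k) hx₀.le (gam_integrableOn k)
          rw [gam_integral k] at h
          exact h
        have hPhinn := Phi_nonneg k x₀
        linarith [hsplit, hb1, hb2, hsplit4, hPhinn]
      have hRk_nonneg : ∀ k : ℕ, 0 ≤ ∫ z in Ioi (0:ℝ), gam k z * g z ^ k :=
        fun k => setIntegral_nonneg measurableSet_Ioi
          (fun z hz => mul_nonneg (gam_nonneg k (le_of_lt hz)) (pow_nonneg (hg0 z) k))
      have hcknn : ∀ k : ℕ, 0 ≤ (1 - a^k) * Phi k x₀ := fun k =>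
        mul_nonneg (by have := pow_le_one₀ ha0 ha1 (n := k); linarith) (Phi_nonneg k x₀)
      have hRk1 : ∀ k : ℕ, (∫ z in Ioi (0:ℝ), gam k z * g z ^ k) ≤ 1 := fun k =>
        (hRk_le k).trans (by have := hcknn k; linarith)
      have hRs : Summable (fun k : ℕ => P (k+1) * ∫ z in Ioi (0:ℝ), gam k z * g z ^ k) := by
        refine Summable.of_nonneg_of_le
          (fun k => mul_nonneg (hPnn _) (hRk_nonneg k)) (fun k => ?_) hP1s
        exact mul_le_of_le_one_right (hPnn _) (hRk1 k)
      have hsum1 : Summable (fun k : ℕ => P (k+1) * ((1 - a^k) * Phi k x₀)) := by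
        refine Summable.of_nonneg_of_le
          (fun k => mul_nonneg (hPnn _) (hcknn k)) (fun k => ?_) hP1s
        refine mul_le_of_le_one_right (hPnn _) ?_
        have h1 : (1 - a^k) ≤ 1 := by have := pow_nonneg ha0 k; linarith
        have h2 := Phi_le_one k x₀
        have h3 := Phi_nonneg k x₀
        nlinarith
      have htsum_le : (∑' k : ℕ, P (k+1) * ∫ z in Ioi (0:ℝ), gam k z * g z ^ k)
          ≤ 1 - ∑' k : ℕ, P (k+1) * ((1 - a^k) * Phi k x₀) := by
        have hterm : ∀ k : ℕ, P (k+1) * ∫ z in Ioi (0:ℝ), gam k z * g z ^ k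
            ≤ P (k+1) - P (k+1) * ((1 - a^k) * Phi k x₀) := by
          intro k
          have h := mul_le_mul_of_nonneg_left (hRk_le k) (hPnn (k+1))
          rw [mul_sub, mul_one] at h
          exact h
        have h1 := Summable.tsum_le_tsum hterm hRs (hP1s.sub hsum1)
        have h2 : (∑' k : ℕ, (P (k+1) - P (k+1) * ((1 - a^k) * Phi k x₀)))
            = 1 - ∑' k : ℕ, P (k+1) * ((1 - a^k) * Phi k x₀) := by
          rw [(hP1s.hasSum.sub hsum1.hasSum).tsum_eq, hP1sum]
        rw [h2] at h1
        exact h1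
      have hW0 : ε ≤ ∑' k : ℕ, P (k+1) * ((1 - a^k) * Phi k x₀) := by
        have hpart : (∑ k ∈ Finset.range (K+1), P (k+1) * ((1 - a^k) * Phi k x₀))
            ≤ ∑' k : ℕ, P (k+1) * ((1 - a^k) * Phi k x₀) :=
          Summable.sum_le_tsum _ (fun k _ => mul_nonneg (hPnn _) (hcknn k)) hsum1
        have hdrop : (∑ k ∈ Finset.range (K+1), P (k+1) * ((1 - a^k) * Phi k x₀))
            = ∑ j ∈ Finset.range K, P (j+2) * ((1 - a^(j+1)) * Phi (j+1) x₀) := by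
          rw [Finset.sum_range_succ']
          simp
        have hjterm : ∀ j ∈ Finset.range K,
            ε * a^K * (((j:ℝ)+1) * P (j+2) * Dk x₀ (j+1) x₀)
            ≤ x₀ * (P (j+2) * ((1 - a^(j+1)) * Phi (j+1) x₀)) := by
          intro j hj
          have hjK : j + 1 ≤ K := Finset.mem_range.1 hj
          have h1a : 1 - a = ε := by rw [ha]; ring
          have hc1 : ((j:ℝ)+1) * ε * a^(j+1) ≤ 1 - a^(j+1) := by
            have hp := pow_aux ha0 ha1 (j+1)
            push_cast at hp
            rw [h1a] at hp
            exact hp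
          have hc2 : a^K ≤ a^(j+1) := pow_le_pow_of_le_one ha0 ha1 hjK
          have hD := Dk_nonneg x₀ (j+1) hx₀.le
          have hDm := Dk_le_mul x₀ (j+1) x₀
          have hPj := hPnn (j+2)
          have hPhinn := Phi_nonneg (j+1) x₀
          have hPD : 0 ≤ P (j+2) * Dk x₀ (j+1) x₀ := mul_nonneg hPj hD
          have e1 : ((j:ℝ)+1) * ε * a^(j+1) * (P (j+2) * Dk x₀ (j+1) x₀)
              ≤ (1 - a^(j+1)) * (P (j+2) * Dk x₀ (j+1) x₀) :=
            mul_le_mul_of_nonneg_right hc1 hPD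
          have e2 : ε * a^K * (((j:ℝ)+1) * (P (j+2) * Dk x₀ (j+1) x₀))
              ≤ ε * a^(j+1) * (((j:ℝ)+1) * (P (j+2) * Dk x₀ (j+1) x₀)) := by
            refine mul_le_mul_of_nonneg_right (mul_le_mul_of_nonneg_left hc2 hε0.le) ?_
            have : (0:ℝ) ≤ (j:ℝ)+1 := by positivity
            exact mul_nonneg this hPD
          have e3 : (1 - a^(j+1)) * (P (j+2) * Dk x₀ (j+1) x₀)
              ≤ (1 - a^(j+1)) * (P (j+2) * (x₀ * Phi (j+1) x₀)) := by
            refine mul_le_mul_of_nonneg_left ?_ ?_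
            · exact mul_le_mul_of_nonneg_left hDm hPj
            · have := pow_le_one₀ ha0 ha1 (n := j+1); linarith
          linarith [e1, e2, e3]
        have hsumj : ε * a^K * (x₀ * IK P x₀ K x₀)
            ≤ x₀ * ∑ j ∈ Finset.range K, P (j+2) * ((1 - a^(j+1)) * Phi (j+1) x₀) := by
          rw [IK_eq P x₀ K hx₀, Finset.mul_sum, Finset.mul_sum]
          exact Finset.sum_le_sum hjterm
        have hIK := hgood x₀ hx₀ le_rfl
        rw [hdrop] at hpart
        have hx₀W : x₀ * ε ≤ x₀ * ∑' k : ℕ, P (k+1) * ((1 - a^k) * Phi k x₀) := by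
          have h5 : x₀ * ∑ j ∈ Finset.range K, P (j+2) * ((1 - a^(j+1)) * Phi (j+1) x₀)
              ≤ x₀ * ∑' k : ℕ, P (k+1) * ((1 - a^k) * Phi k x₀) :=
            mul_le_mul_of_nonneg_left hpart hx₀.le
          have h6 : ε * x₀ ≤ ε * a^K * IK P x₀ K x₀ * x₀ :=
            mul_le_mul_of_nonneg_right hIK hx₀.le
          have h7 : ε * a^K * IK P x₀ K x₀ * x₀ = ε * a^K * (x₀ * IK P x₀ K x₀) := by ring
          linarith [h6, h7, hsumj, h5]
        exact le_of_mul_le_mul_left hx₀W hx₀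
      have hss : superSol x₀ ε 0 = 1 - ε := by
        unfold superSol; rw [if_pos hx₀.le]
      rw [hss]
      linarith [htsum_le, hW0]
    · -- x > 0
      rcases le_or_gt x x₀ with hxx₀ | hxgt
      · -- 0 < x ≤ x₀
        have hkey : ∀ k : ℕ, (∫ y in Ioc (0:ℝ) x, psi' g k y)
            ≤ x - (1 - a^k) * Dk x₀ k x := by
          intro k
          have hptw : ∀ y ∈ Ioc (0:ℝ) x,
              psi' g k y ≤ 1 - (1 - a^k) * (Phi k x₀ - Phi k y) := by
            intro y hy
            have hy0 : 0 < y := hy.1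
            have hyx₀ : y ≤ x₀ := hy.2.trans hxx₀
            rw [psi'_eq hgm hg0 hg1 k hy0]
            have hsplit2 := integral_Ioc_add_Ioi
              (h := fun z => gam k z * g z ^ k) hyx₀
              (gg_integrableOn hgm hg0 hg1 k measurableSet_Ioi (fun z hz => hy0.trans hz))
            have hb1 : (∫ z in Ioc y x₀, gam k z * g z ^ k)
                ≤ a^k * ∫ z in Ioc y x₀, gam k z := by
              have h : (∫ z in Ioc y x₀, gam k z * g z ^ k)
                  ≤ ∫ z in Ioc y x₀, a^k * gam k z := by
                refine setIntegral_mono_on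
                  (gg_integrableOn hgm hg0 hg1 k measurableSet_Ioc (fun z hz => hy0.trans hz.1))
                  (((gam_integrableOn k).mono_set (fun z hz => hy0.trans hz.1)).const_mul (a^k))
                  measurableSet_Ioc (fun z hz => ?_)
                have hz0 : 0 < z := hy0.trans hz.1
                have hgz : g z ^ k ≤ a ^ k := pow_le_pow_left₀ (hg0 z) (hgf z hz.2) k
                calc gam k z * g z ^ k ≤ gam k z * a ^ k :=
                      mul_le_mul_of_nonneg_left hgz (gam_nonneg k hz0.le)
                  _ = a ^ k * gam k z := mul_comm _ _
              rwa [integral_const_mul] at h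
            have hb2 : (∫ z in Ioi x₀, gam k z * g z ^ k) ≤ ∫ z in Ioi x₀, gam k z := by
              refine setIntegral_mono_on
                (gg_integrableOn hgm hg0 hg1 k measurableSet_Ioi (fun z hz => hx₀.trans hz))
                ((gam_integrableOn k).mono_set (fun z hz => hx₀.trans hz))
                measurableSet_Ioi (fun z hz => ?_)
              exact mul_le_of_le_one_right (gam_nonneg k (hx₀.trans hz).le)
                (pow_le_one₀ (hg0 z) (hg1 z))
            have hG : Phi k x₀ - Phi k y = ∫ z in Ioc y x₀, gam k z := phi_diff_eq hy0 hyx₀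
            have hsplit4 : Phi k x₀ + (∫ z in Ioi x₀, gam k z) = 1 := by
              have h := integral_Ioc_add_Ioi (h := gam k) hx₀.le (gam_integrableOn k)
              rw [gam_integral k] at h
              exact h
            have hGnn : 0 ≤ ∫ z in Ioc y x₀, gam k z :=
              setIntegral_nonneg measurableSet_Ioc fun z hz => gam_nonneg k (hy0.trans hz.1).le
            have hak : a ^ k ≤ 1 := pow_le_one₀ ha0 ha1
            rw [hG]
            linarith [hsplit2, hb1, hb2, hG, hsplit4, hGnn, hak]
          have hPhiDiffInt : IntegrableOn (fun y => Phi k x₀ - Phi k y) (Ioc (0:ℝ) x) := by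
            refine ((integrableOn_const measure_Ioc_lt_top.ne) :
              IntegrableOn (fun _ => (1:ℝ)) _ _).mono'
              (measurable_const.sub (Phi_mono k).measurable).aestronglyMeasurable ?_
            refine (ae_restrict_iff' measurableSet_Ioc).2 (ae_of_all _ fun y hy => ?_)
            have h1 : Phi k y ≤ Phi k x₀ := Phi_mono k (hy.2.trans hxx₀)
            have h2 := Phi_nonneg k y
            have h3 := Phi_le_one k x₀
            rw [Real.norm_eq_abs, abs_of_nonneg (by linarith)]
            linarith
          have hconst1 : IntegrableOn (fun _ : ℝ => (1:ℝ)) (Ioc (0:ℝ) x) :=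
            integrableOn_const measure_Ioc_lt_top.ne
          have hRHSint : IntegrableOn
              (fun y => 1 - (1 - a^k) * (Phi k x₀ - Phi k y)) (Ioc (0:ℝ) x) :=
            hconst1.sub (hPhiDiffInt.const_mul (1 - a^k))
          have hmono := setIntegral_mono_on
            (psi'_integrableOn hgm hg0 hg1 k _ measurableSet_Ioc measure_Ioc_lt_top)
            hRHSint measurableSet_Ioc hptw
          have hcomp : (∫ y in Ioc (0:ℝ) x, (1 - (1 - a^k) * (Phi k x₀ - Phi k y)))
              = x - (1 - a^k) * Dk x₀ k x := by
            rw [integral_sub hconst1 (hPhiDiffInt.const_mul (1 - a^k)), integral_const_mul,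
              fubini_min k hx hxx₀, setIntegral_const, Real.volume_real_Ioc_of_le hx.le, sub_zero,
              smul_eq_mul, mul_one]
            rfl
          rw [hcomp] at hmono
          exact hmono
        have hcknn : ∀ k : ℕ, 0 ≤ (1 - a^k) * Dk x₀ k x := fun k =>
          mul_nonneg (by have := pow_le_one₀ ha0 ha1 (n := k); linarith)
            (Dk_nonneg x₀ k hx.le)
        have hsum1 : Summable (fun k : ℕ => P (k+1) * ((1 - a^k) * Dk x₀ k x)) := by
          refine Summable.of_nonneg_of_le
            (fun k => mul_nonneg (hPnn _) (hcknn k)) (fun k => ?_) (hP1s.mul_right x)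
          refine mul_le_mul_of_nonneg_left ?_ (hPnn _)
          have h1 : (1 - a^k) * Dk x₀ k x ≤ 1 * x := by
            refine mul_le_mul ?_ (Dk_le x₀ k hx.le) (Dk_nonneg x₀ k hx.le) zero_le_one
            have := pow_nonneg ha0 k; linarith
          linarith
        have htsum_le : (∑' k : ℕ, P (k+1) * ∫ y in Ioc (0:ℝ) x, psi' g k y)
            ≤ x - ∑' k : ℕ, P (k+1) * ((1 - a^k) * Dk x₀ k x) := by
          have hterm : ∀ k : ℕ, P (k+1) * ∫ y in Ioc (0:ℝ) x, psi' g k y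
              ≤ P (k+1) * x - P (k+1) * ((1 - a^k) * Dk x₀ k x) := by
            intro k
            have h := mul_le_mul_of_nonneg_left (hkey k) (hPnn (k+1))
            rw [mul_sub] at h
            exact h
          have h1 := Summable.tsum_le_tsum hterm (hFs x) ((hP1s.mul_right x).sub hsum1)
          have h2 : (∑' k : ℕ, (P (k+1) * x - P (k+1) * ((1 - a^k) * Dk x₀ k x)))
              = x - ∑' k : ℕ, P (k+1) * ((1 - a^k) * Dk x₀ k x) := by
            rw [((hP1s.mul_right x).hasSum.sub hsum1.hasSum).tsum_eq, tsum_mul_right,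
              hP1sum, one_mul]
          rw [h2] at h1
          exact h1
        have hWge : ε * x ≤ ∑' k : ℕ, P (k+1) * ((1 - a^k) * Dk x₀ k x) := by
          have hpart : (∑ k ∈ Finset.range (K+1), P (k+1) * ((1 - a^k) * Dk x₀ k x))
              ≤ ∑' k : ℕ, P (k+1) * ((1 - a^k) * Dk x₀ k x) :=
            Summable.sum_le_tsum _ (fun k _ => mul_nonneg (hPnn _) (hcknn k)) hsum1
          have hdrop : (∑ k ∈ Finset.range (K+1), P (k+1) * ((1 - a^k) * Dk x₀ k x))
              = ∑ j ∈ Finset.range K, P (j+2) * ((1 - a^(j+1)) * Dk x₀ (j+1) x) := by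
            rw [Finset.sum_range_succ']
            simp
          have hjterm : ∀ j ∈ Finset.range K,
              ε * a^K * (((j:ℝ)+1) * P (j+2) * Dk x₀ (j+1) x)
              ≤ P (j+2) * ((1 - a^(j+1)) * Dk x₀ (j+1) x) := by
            intro j hj
            have hjK : j + 1 ≤ K := Finset.mem_range.1 hj
            have h1a : 1 - a = ε := by rw [ha]; ring
            have hc1 : ((j:ℝ)+1) * ε * a^(j+1) ≤ 1 - a^(j+1) := by
              have hp := pow_aux ha0 ha1 (j+1)
              push_cast at hp
              rw [h1a] at hp
              exact hp
            have hc2 : a^K ≤ a^(j+1) := pow_le_pow_of_le_one ha0 ha1 hjK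
            have hD := Dk_nonneg x₀ (j+1) hx.le
            have hPj := hPnn (j+2)
            have hPD : 0 ≤ P (j+2) * Dk x₀ (j+1) x := mul_nonneg hPj hD
            have e1 : ((j:ℝ)+1) * ε * a^(j+1) * (P (j+2) * Dk x₀ (j+1) x)
                ≤ (1 - a^(j+1)) * (P (j+2) * Dk x₀ (j+1) x) :=
              mul_le_mul_of_nonneg_right hc1 hPD
            have e2 : ε * a^K * (((j:ℝ)+1) * (P (j+2) * Dk x₀ (j+1) x))
                ≤ ε * a^(j+1) * (((j:ℝ)+1) * (P (j+2) * Dk x₀ (j+1) x)) := by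
              refine mul_le_mul_of_nonneg_right (mul_le_mul_of_nonneg_left hc2 hε0.le) ?_
              have hj1 : (0:ℝ) ≤ (j:ℝ)+1 := by positivity
              exact mul_nonneg hj1 hPD
            linarith [e1, e2]
          have hsumj : ε * a^K * (x * IK P x₀ K x)
              ≤ ∑ j ∈ Finset.range K, P (j+2) * ((1 - a^(j+1)) * Dk x₀ (j+1) x) := by
            rw [IK_eq P x₀ K hx, Finset.mul_sum]
            exact Finset.sum_le_sum hjterm
          have hIK := hgood x hx hxx₀
          rw [hdrop] at hpart
          have h6 : ε * x ≤ ε * a^K * IK P x₀ K x * x :=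
            mul_le_mul_of_nonneg_right hIK hx.le
          have h7 : ε * a^K * IK P x₀ K x * x = ε * a^K * (x * IK P x₀ K x) := by ring
          linarith [h6, h7, hsumj, hpart]
        rw [hTval x hx.ne']
        have hss : superSol x₀ ε x = 1 - ε := by
          unfold superSol; rw [if_pos hxx₀]
        rw [hss]
        have hchain : (1/x) * (∑' k : ℕ, P (k+1) * ∫ y in Ioc (0:ℝ) x, psi' g k y)
            ≤ (1/x) * (x - ε * x) := by
          refine mul_le_mul_of_nonneg_left ?_ (by positivity)
          linarith [htsum_le, hWge]
        have hval : (1/x) * (x - ε * x) = 1 - ε := by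
          field_simp
        linarith [hchain, hval]
      · -- x > x₀
        rw [hTval x hx.ne']
        have hsum_le : (∑' k : ℕ, P (k+1) * ∫ y in Ioc (0:ℝ) x, psi' g k y)
            ≤ ∑' k : ℕ, P (k+1) * x :=
          Summable.tsum_le_tsum (fun k => mul_le_mul_of_nonneg_left (hPsiLe k x hx) (hPnn _))
            (hFs x) (hP1s.mul_right x)
        have hA : (∑' k : ℕ, P (k+1) * x) = x := by
          rw [tsum_mul_right, hP1sum, one_mul]
        have hss : superSol x₀ ε x = 1 := by
          unfold superSol; rw [if_neg (not_le.2 hxgt)]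
        rw [hss]
        calc (1/x) * (∑' k : ℕ, P (k+1) * ∫ y in Ioc (0:ℝ) x, psi' g k y)
            ≤ (1/x) * ∑' k : ℕ, P (k+1) * x :=
              mul_le_mul_of_nonneg_left hsum_le (by positivity)
          _ = (1/x) * x := by rw [hA]
          _ = 1 := by field_simp

end Stmt4Helper

theorem stmt_4 (P : ℕ → ℝ)
    (hP0 : P 0 = 0) (hPnonneg : ∀ k, 0 ≤ P k) (hPsum : ∑' k, P k = 1)
    (hPmean : Summable fun k : ℕ => (k : ℝ) * P k) (hP1 : P 1 < 1)
    (x₀ : ℝ) (hx₀ : 0 < x₀)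
    (h1 : 1 < ∫ z in Ioc (0 : ℝ) x₀, z * g2 P z)
    (h2 : ∀ x, 0 < x → x ≤ x₀ → 1 < ∫ z in Ioc (0 : ℝ) x₀, z * (min x z / x) * g2 P z)
    (q : ℝ → ℝ)
    (hq : ∀ x, 0 ≤ x →
      Tendsto (fun l => (Toper P)^[l] (fun _ => 0) x) atTop (nhds (q x))) :
    (∃ ε : ℝ, 0 < ε ∧ ε < 1 ∧ ∀ x, 0 ≤ x → x ≤ x₀ → q x ≤ 1 - ε) ∧
    ¬ (∀ x, 0 ≤ x → q x = 1) := by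
  classical
  have hPsummable : Summable P := by
    by_contra h
    rw [tsum_eq_zero_of_not_summable h] at hPsum
    norm_num at hPsum
  have hP1s : Summable (fun k : ℕ => P (k+1)) := (summable_nat_add_iff 1).mpr hPsummable
  have hP1sum : ∑' k : ℕ, P (k+1) = 1 := by
    have h := Summable.tsum_eq_zero_add hPsummable
    rw [hPsum, hP0, zero_add] at h
    exact h.symm
  have hPle : ∀ k, P k ≤ 1 := by
    intro k
    have h := Summable.le_tsum hPsummable k (fun j _ => hPnonneg j)
    rwa [hPsum] at h
  have hsumz : ∀ z : ℝ, Summable (fun j : ℕ => P (j+2) * z ^ j / (Nat.factorial j : ℝ)) := by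
    intro z
    refine Summable.of_norm_bounded (Real.summable_pow_div_factorial |z|) (fun j => ?_)
    rw [norm_div, norm_mul, Real.norm_eq_abs, Real.norm_eq_abs, Real.norm_eq_abs,
      abs_of_nonneg (hPnonneg _), abs_pow,
      abs_of_nonneg (by positivity : (0:ℝ) ≤ (Nat.factorial j : ℝ))]
    exact div_le_div₀ (by positivity)
      (mul_le_of_le_one_left (by positivity) (hPle _)) (by positivity) le_rfl
  have hIfull := h2 x₀ hx₀ le_rfl
  have htend := Stmt4Helper.IK_tendsto P hPnonneg hPle hsumz hx₀
  obtain ⟨K, hK⟩ := (htend.eventually (eventually_gt_nhds hIfull)).exists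
  set δ := Stmt4Helper.IK P x₀ K x₀ - 1 with hδ
  have hδpos : 0 < δ := by rw [hδ]; linarith
  set ε := min (1/2 : ℝ) (δ / ((K+1) * (1+δ))) with hε
  have hεpos : 0 < ε := lt_min (by norm_num) (by positivity)
  have hεhalf : ε ≤ 1/2 := min_le_left _ _
  have hεlt1 : ε < 1 := lt_of_le_of_lt hεhalf (by norm_num)
  have hgood : ∀ x, 0 < x → x ≤ x₀ → ε ≤ ε * (1-ε)^K * Stmt4Helper.IK P x₀ K x := by
    intro x hx hxx
    have hmon := Stmt4Helper.IK_mono P hPnonneg x₀ K hx hxx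
    have hpow : 1 - (K:ℝ)*ε ≤ (1-ε)^K := by
      have hber := one_add_mul_le_pow (a := -ε) (by linarith) K
      calc 1 - (K:ℝ)*ε = 1 + (K:ℝ) * (-ε) := by ring
        _ ≤ (1 + -ε)^K := hber
        _ = (1-ε)^K := by ring_nf
    have hεle : ε ≤ δ / ((K+1) * (1+δ)) := min_le_right _ _
    have hKpos : (0:ℝ) < ((K:ℝ)+1) * (1+δ) := by positivity
    have h1' : ε * (((K:ℝ)+1) * (1+δ)) ≤ δ := (le_div_iff₀ hKpos).1 hεle
    have hKe : (K:ℝ)*ε*(1+δ) ≤ δ := by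
      nlinarith [h1', mul_nonneg hεpos.le hδpos.le, hεpos.le]
    have hb : (1:ℝ) ≤ (1-ε)^K * (1+δ) := by
      have h2' : (1 - (K:ℝ)*ε) * (1+δ) ≤ (1-ε)^K * (1+δ) :=
        mul_le_mul_of_nonneg_right hpow (by linarith)
      nlinarith [hKe, h2']
    have hIKx : 1 + δ ≤ Stmt4Helper.IK P x₀ K x := by
      rw [hδ]
      linarith [hmon]
    have hpow0 : 0 ≤ (1-ε)^K := pow_nonneg (by linarith) K
    have hmul : (1-ε)^K * (1+δ) ≤ (1-ε)^K * Stmt4Helper.IK P x₀ K x :=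
      mul_le_mul_of_nonneg_left hIKx hpow0
    have hPI : 1 ≤ (1-ε)^K * Stmt4Helper.IK P x₀ K x := le_trans hb hmul
    calc ε = ε * 1 := (mul_one ε).symm
      _ ≤ ε * ((1-ε)^K * Stmt4Helper.IK P x₀ K x) :=
          mul_le_mul_of_nonneg_left hPI hεpos.le
      _ = ε * (1-ε)^K * Stmt4Helper.IK P x₀ K x := by ring
  have hinv : ∀ l : ℕ, Measurable ((Toper P)^[l] (fun _ => 0)) ∧
      (∀ z, 0 ≤ (Toper P)^[l] (fun _ => 0) z) ∧
      (∀ z, (Toper P)^[l] (fun _ => 0) z ≤ Stmt4Helper.superSol x₀ ε z) := by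
    intro l
    induction l with
    | zero =>
      simp only [Function.iterate_zero_apply]
      exact ⟨measurable_const, fun z => le_rfl,
        fun z => Stmt4Helper.superSol_nonneg hεlt1.le z⟩
    | succ n ih =>
      simp only [Function.iterate_succ_apply']
      exact Stmt4Helper.Toper_step P hPnonneg hP1sum hP1s x₀ ε hx₀ hεpos hεlt1 K hgood
        _ ih.1 ih.2.1 ih.2.2
  have hbound : ∀ x, 0 ≤ x → x ≤ x₀ → q x ≤ 1 - ε := by
    intro x hx0 hxx
    refine le_of_tendsto (hq x hx0) (Eventually.of_forall fun l => ?_)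
    have h := (hinv l).2.2 x
    unfold Stmt4Helper.superSol at h
    rwa [if_pos hxx] at h
  refine ⟨⟨ε, hεpos, hεlt1, hbound⟩, fun hall => ?_⟩
  have ha := hall 0 le_rfl
  have hb := hbound 0 le_rfl hx₀.le
  rw [ha] at hb
  linarith
end

section
/- Assume there exists θ > 0 such that M_θ := ∑_{k≥1} P(k)·e^{θ·k} < ∞. Then for every integer i ≥ 1 and every z ≥ 0, ∑_{k≥i} P(k)·e^{−z}·z^{k−i}/(k−i)! ≤ (M_θ / e^{θ·i})·exp(−z·(1 − e^{−θ})). -/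
open MeasureTheory Real Set Filter

theorem stmt_5 (P : ℕ → ℝ)
    (hP0 : P 0 = 0) (hPnonneg : ∀ k, 0 ≤ P k) (hPsum : ∑' k, P k = 1)
    (hPmean : Summable fun k : ℕ => (k : ℝ) * P k) (hP1 : P 1 < 1)
    (θ : ℝ) (hθ : 0 < θ)
    (hMθ : Summable fun k : ℕ => P k * Real.exp (θ * k)) :
    ∀ i : ℕ, 1 ≤ i → ∀ z : ℝ, 0 ≤ z →
      (∑' k : ℕ, P (k + i) * Real.exp (-z) * z ^ k / (Nat.factorial k : ℝ)) ≤
        ((∑' k : ℕ, P k * Real.exp (θ * k)) / Real.exp (θ * i)) *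
          Real.exp (-z * (1 - Real.exp (-θ))) := by
  intro i hi z hz
  set M : ℝ := ∑' k : ℕ, P k * Real.exp (θ * k) with hM
  have hterm_nonneg : ∀ k : ℕ, 0 ≤ P k * Real.exp (θ * k) := fun k =>
    mul_nonneg (hPnonneg k) (Real.exp_pos _).le
  have hPle : ∀ k : ℕ, P k ≤ M * Real.exp (-(θ * k)) := by
    intro k
    have h1 : P k * Real.exp (θ * k) ≤ M := Summable.le_tsum hMθ k fun j _ => hterm_nonneg j
    have := mul_le_mul_of_nonneg_right h1 (Real.exp_pos (-(θ * k))).le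
    rwa [mul_assoc, ← Real.exp_add, add_neg_cancel, Real.exp_zero, mul_one] at this
  -- dominating series
  set g : ℕ → ℝ := fun k => M / Real.exp (θ * i) * (Real.exp (-z) * (z * Real.exp (-θ)) ^ k / (Nat.factorial k : ℝ)) with hg
  have hgsum : Summable g := by
    apply Summable.mul_left
    simp_rw [mul_div_assoc]
    exact (Real.summable_pow_div_factorial (z * Real.exp (-θ))).mul_left _
  have hle : ∀ k : ℕ, P (k + i) * Real.exp (-z) * z ^ k / (Nat.factorial k : ℝ) ≤ g k := by
    intro k
    have h2 : P (k + i) * Real.exp (-z) * z ^ k / (Nat.factorial k : ℝ) ≤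
        (M * Real.exp (-(θ * (k + i)))) * Real.exp (-z) * z ^ k / (Nat.factorial k : ℝ) := by
      have h3 := hPle (k + i)
      push_cast at h3
      gcongr
    refine h2.trans_eq ?_
    have hek : Real.exp (-(θ * (k + i))) = Real.exp (-θ) ^ k * (Real.exp (θ * i))⁻¹ := by
      rw [← Real.exp_nat_mul, ← Real.exp_neg, ← Real.exp_add]
      ring_nf
    rw [hek]
    simp only [hg, mul_pow]
    field_simp
  have hlsum : Summable fun k : ℕ => P (k + i) * Real.exp (-z) * z ^ k / (Nat.factorial k : ℝ) := by
    apply Summable.of_nonneg_of_le _ hle hgsum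
    intro k
    have hfac : (0:ℝ) ≤ (Nat.factorial k : ℝ) := by positivity
    exact div_nonneg (mul_nonneg (mul_nonneg (hPnonneg _) (Real.exp_pos _).le) (pow_nonneg hz k)) hfac
  have htsum : (∑' k : ℕ, P (k + i) * Real.exp (-z) * z ^ k / (Nat.factorial k : ℝ)) ≤ ∑' k, g k :=
    Summable.tsum_le_tsum hle hlsum hgsum
  refine htsum.trans_eq ?_
  have hgeq : ∑' k, g k = M / Real.exp (θ * i) * (Real.exp (-z) * ∑' k : ℕ, (z * Real.exp (-θ)) ^ k / (Nat.factorial k : ℝ)) := by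
    simp only [hg]
    rw [tsum_mul_left]
    congr 1
    rw [← tsum_mul_left]
    exact tsum_congr fun k => by rw [mul_pow]; ring
  rw [hgeq]
  have hexp : ∑' k : ℕ, (z * Real.exp (-θ)) ^ k / (Nat.factorial k : ℝ) = Real.exp (z * Real.exp (-θ)) := by
    rw [Real.exp_eq_exp_ℝ, NormedSpace.exp_eq_tsum_div]
  rw [hexp, ← Real.exp_add]
  congr 1
  ring
end

section
/- Assume there exists θ > 0 such that M_θ := ∑_{k≥1} P(k)·e^{θ·k} < ∞, and set C = M_θ/e^{2θ} and Υ = 1 − e^{−θ}. Then for every integer i ≥ 0 and every x ≥ 0, 0 ≤ G_i(x) ≤ C^i·e^{−i·Υ·x}/(Υ^{2i}·(i!)²). Consequently, for every complex β ≠ 0 and every x ≥ 0 the series ∑_{i=0}^∞ G_i(x)·(−1/β)^i defining L(β,x) converges absolutely. -/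
open MeasureTheory Real Set Filter

/-- `G_0(x) = 1`, `G_{i+1}(x) = ∫_x^∞ ∫_y^∞ g₂(z) G_i(z) dz dy`. -/
noncomputable def Gfun (P : ℕ → ℝ) : ℕ → ℝ → ℝ
  | 0 => fun _ => 1
  | (i + 1) => fun x => ∫ y in Ioi x, ∫ z in Ioi y, g2 P z * Gfun P i z

/-- `L(β,x) = ∑_{i=0}^∞ G_i(x) (-1/β)^i` (real version). -/
noncomputable def Lfun (P : ℕ → ℝ) (β : ℝ) (x : ℝ) : ℝ :=
  ∑' i : ℕ, Gfun P i x * (-1 / β) ^ i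

lemma my_integral_exp_neg_mul_Ioi {b : ℝ} (hb : 0 < b) (y : ℝ) :
    ∫ z in Ioi y, Real.exp (-b * z) = Real.exp (-b * y) / b := by
  have hd : ∀ x ∈ Ici y, HasDerivAt (fun z => -Real.exp (-b * z) / b) (Real.exp (-b * x)) x := by
    intro x _
    have h1 : HasDerivAt (fun z : ℝ => -b * z) (-b) x := by
      simpa using (hasDerivAt_id x).const_mul (-b)
    have h2 := (Real.hasDerivAt_exp (-b * x)).comp x h1
    have h3 := (h2.neg).div_const b
    have h4 : -(Real.exp (-b * x) * -b) / b = Real.exp (-b * x) := by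
      rw [div_eq_iff hb.ne']; ring
    rw [h4] at h3
    exact h3
  have hint : IntegrableOn (fun x : ℝ => Real.exp (-b * x)) (Ioi y) :=
    exp_neg_integrableOn_Ioi y hb
  have htend : Tendsto (fun z => -Real.exp (-b * z) / b) atTop (nhds 0) := by
    have h0 : Tendsto (fun z : ℝ => -b * z) atTop atBot := by
      have h1 := (tendsto_id (α := ℝ)).const_mul_atTop hb
      have := tendsto_neg_atTop_atBot.comp h1
      refine this.congr fun x => by simp [Function.comp]
    have := (Real.tendsto_exp_atBot.comp h0).neg.div_const b
    simpa using this
  have := integral_Ioi_of_hasDerivAt_of_tendsto' hd hint htend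
  rw [this]; field_simp; ring

lemma g2_bound (P : ℕ → ℝ) (hPnonneg : ∀ k, 0 ≤ P k)
    (θ : ℝ) (hθ : 0 < θ)
    (hMθ : Summable fun k : ℕ => P k * Real.exp (θ * k)) (z : ℝ) (hz : 0 ≤ z) :
    0 ≤ g2 P z ∧ g2 P z ≤ ((∑' k : ℕ, P k * Real.exp (θ * k)) / Real.exp (2 * θ)) *
      Real.exp (-(1 - Real.exp (-θ)) * z) := by
  set M := ∑' k : ℕ, P k * Real.exp (θ * k) with hM
  set lam := Real.exp (-θ) with hlam
  have hlam0 : 0 < lam := Real.exp_pos _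
  have hterm0 : ∀ k : ℕ, 0 ≤ P (k + 2) * z ^ k / (Nat.factorial k : ℝ) := fun k => by
    have := hPnonneg (k + 2); positivity
  constructor
  · exact mul_nonneg (Real.exp_pos _).le (tsum_nonneg hterm0)
  have hshift : Summable (fun k : ℕ => P (k + 2) * Real.exp (θ * ((k : ℝ) + 2))) := by
    have := (summable_nat_add_iff 2).mpr hMθ
    refine this.congr fun k => by push_cast; ring_nf
  have hsum2 : Summable (fun k : ℕ => P (k + 2) * (Real.exp (lam * z) * Real.exp (θ * k))) := by
    refine (hshift.mul_left (Real.exp (lam * z) * Real.exp (-(2 * θ)))).congr fun k => ?_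
    rw [show θ * ((k : ℝ) + 2) = θ * k + 2 * θ by ring, Real.exp_add, Real.exp_neg]
    field_simp
  have hterm : ∀ k : ℕ, P (k + 2) * z ^ k / (Nat.factorial k : ℝ) ≤
      P (k + 2) * (Real.exp (lam * z) * Real.exp (θ * k)) := by
    intro k
    have h1 : (lam * z) ^ k / (Nat.factorial k : ℝ) ≤ Real.exp (lam * z) :=
      Real.pow_div_factorial_le_exp (x := lam * z) (by positivity) k
    have h3 : lam ^ k * z ^ k / (Nat.factorial k : ℝ) ≤ Real.exp (lam * z) := by
      rwa [mul_pow] at h1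
    have h4 : Real.exp (θ * k) = (lam ^ k)⁻¹ := by
      rw [hlam, ← Real.exp_nat_mul, ← Real.exp_neg]; congr 1; ring
    have hfac : (0:ℝ) < (Nat.factorial k : ℝ) := by positivity
    have hlk : (0:ℝ) < lam ^ k := by positivity
    have h2 : z ^ k / (Nat.factorial k : ℝ) ≤ Real.exp (lam * z) * Real.exp (θ * k) := by
      rw [h4, div_le_iff₀ hfac]
      rw [div_le_iff₀ hfac] at h3
      calc z ^ k = (lam ^ k)⁻¹ * (lam ^ k * z ^ k) := by field_simp
        _ ≤ (lam ^ k)⁻¹ * (Real.exp (lam * z) * (Nat.factorial k : ℝ)) := by gcongr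
        _ = Real.exp (lam * z) * (lam ^ k)⁻¹ * (Nat.factorial k : ℝ) := by ring
    calc P (k + 2) * z ^ k / (Nat.factorial k : ℝ)
        = P (k + 2) * (z ^ k / (Nat.factorial k : ℝ)) := by ring
      _ ≤ _ := mul_le_mul_of_nonneg_left h2 (hPnonneg _)
  have hsumL : Summable (fun k : ℕ => P (k + 2) * z ^ k / (Nat.factorial k : ℝ)) :=
    Summable.of_nonneg_of_le hterm0 hterm hsum2
  have htsum_le : (∑' k : ℕ, P (k + 2) * z ^ k / (Nat.factorial k : ℝ)) ≤
      Real.exp (lam * z) * Real.exp (-(2 * θ)) * M := by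
    calc (∑' k : ℕ, P (k + 2) * z ^ k / (Nat.factorial k : ℝ))
        ≤ ∑' k : ℕ, P (k + 2) * (Real.exp (lam * z) * Real.exp (θ * k)) :=
          Summable.tsum_le_tsum hterm hsumL hsum2
      _ = Real.exp (lam * z) * Real.exp (-(2 * θ)) *
          ∑' k : ℕ, P (k + 2) * Real.exp (θ * ((k : ℝ) + 2)) := by
          rw [← tsum_mul_left]
          congr 1; funext k
          rw [show θ * ((k : ℝ) + 2) = θ * k + 2 * θ by ring, Real.exp_add, Real.exp_neg]
          field_simp
      _ ≤ Real.exp (lam * z) * Real.exp (-(2 * θ)) * M := by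
          have hle : (∑' k : ℕ, P (k + 2) * Real.exp (θ * ((k : ℝ) + 2))) ≤ M := by
            refine Summable.tsum_le_tsum_of_inj (· + 2) (add_left_injective 2)
              (fun c _ => by have := hPnonneg c; positivity)
              (fun k => by push_cast; apply le_of_eq; ring_nf) hshift hMθ
          have h0 : (0:ℝ) ≤ Real.exp (lam * z) * Real.exp (-(2 * θ)) := by positivity
          exact mul_le_mul_of_nonneg_left hle h0
  calc g2 P z ≤ Real.exp (-z) * (Real.exp (lam * z) * Real.exp (-(2 * θ)) * M) := by
        unfold g2
        exact mul_le_mul_of_nonneg_left htsum_le (Real.exp_pos _).le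
    _ = M / Real.exp (2 * θ) * Real.exp (-(1 - lam) * z) := by
        rw [show -(1 - lam) * z = -z + lam * z by ring, Real.exp_add, div_eq_mul_inv,
          ← Real.exp_neg]
        ring

lemma Gfun_key (P : ℕ → ℝ) (hPnonneg : ∀ k, 0 ≤ P k)
    (θ : ℝ) (hθ : 0 < θ)
    (hMθ : Summable fun k : ℕ => P k * Real.exp (θ * k)) :
    ∀ i : ℕ, ∀ x : ℝ, 0 ≤ x →
      0 ≤ Gfun P i x ∧
      Gfun P i x ≤
        ((∑' k : ℕ, P k * Real.exp (θ * k)) / Real.exp (2 * θ)) ^ i *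
          Real.exp (-(i : ℝ) * (1 - Real.exp (-θ)) * x) /
          ((1 - Real.exp (-θ)) ^ (2 * i) * (Nat.factorial i : ℝ) ^ 2) := by
  set M := ∑' k : ℕ, P k * Real.exp (θ * k) with hM
  set C := M / Real.exp (2 * θ) with hCdef
  set U := 1 - Real.exp (-θ) with hUdef
  have hU : 0 < U := by
    have : Real.exp (-θ) < 1 := Real.exp_lt_one_iff.mpr (by linarith)
    simpa [hUdef] using sub_pos.mpr this
  have hC : 0 ≤ C := by
    have hMnn : 0 ≤ M := tsum_nonneg fun k => mul_nonneg (hPnonneg k) (Real.exp_pos _).le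
    exact div_nonneg hMnn (Real.exp_pos _).le
  have hg2 := g2_bound P hPnonneg θ hθ hMθ
  intro i
  induction i with
  | zero => intro x hx; constructor
            · simp [Gfun]
            · simp [Gfun]
  | succ i ih =>
    intro x hx
    have hGnn : ∀ z : ℝ, 0 ≤ z → 0 ≤ Gfun P i z := fun z hz => (ih z hz).1
    constructor
    · apply setIntegral_nonneg measurableSet_Ioi
      intro y hy
      apply setIntegral_nonneg measurableSet_Ioi
      intro z hz
      have hz0 : (0:ℝ) ≤ z := le_of_lt (lt_of_le_of_lt (hx.trans (le_of_lt hy)) hz)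
      exact mul_nonneg (hg2 z hz0).1 (hGnn z hz0)
    · set K := C ^ i / (U ^ (2 * i) * (Nat.factorial i : ℝ) ^ 2) with hKdef
      have hK : 0 ≤ K := by positivity
      have hpt : ∀ z : ℝ, 0 ≤ z →
          g2 P z * Gfun P i z ≤ (C * K) * Real.exp (-(((i : ℝ) + 1) * U) * z) := by
        intro z hz0
        have h1 := (hg2 z hz0).2
        have h2 := (ih z hz0).2
        have h2' : Gfun P i z ≤ K * Real.exp (-(i : ℝ) * U * z) := by
          rw [hKdef]; rw [div_mul_eq_mul_div]; exact h2
        calc g2 P z * Gfun P i z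
            ≤ (C * Real.exp (-U * z)) * (K * Real.exp (-(i : ℝ) * U * z)) := by
              apply mul_le_mul h1 h2' (hGnn z hz0) (by positivity)
          _ = (C * K) * Real.exp (-(((i : ℝ) + 1) * U) * z) := by
              rw [show (-(((i : ℝ) + 1) * U) * z) = -U * z + -(i : ℝ) * U * z by ring,
                Real.exp_add]
              ring
      have hc1 : (0:ℝ) < ((i : ℝ) + 1) * U := by positivity
      have hin : ∀ y : ℝ, 0 ≤ y → (∫ z in Ioi y, g2 P z * Gfun P i z) ≤
          (C * K) * (Real.exp (-(((i : ℝ) + 1) * U) * y) / (((i : ℝ) + 1) * U)) := by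
        intro y hy0
        have hIg : IntegrableOn (fun z => (C * K) * Real.exp (-(((i : ℝ) + 1) * U) * z))
            (Ioi y) := (exp_neg_integrableOn_Ioi y hc1).const_mul _
        calc (∫ z in Ioi y, g2 P z * Gfun P i z)
            ≤ ∫ z in Ioi y, (C * K) * Real.exp (-(((i : ℝ) + 1) * U) * z) := by
              refine integral_mono_of_nonneg ?_ hIg ?_
              · refine (ae_restrict_iff' measurableSet_Ioi).mpr (ae_of_all _ fun z hz => ?_)
                have hz0 : (0:ℝ) ≤ z := le_of_lt (lt_of_le_of_lt hy0 hz)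
                exact mul_nonneg (hg2 z hz0).1 (hGnn z hz0)
              · refine (ae_restrict_iff' measurableSet_Ioi).mpr (ae_of_all _ fun z hz => ?_)
                exact hpt z (le_of_lt (lt_of_le_of_lt hy0 hz))
          _ = (C * K) * ∫ z in Ioi y, Real.exp (-(((i : ℝ) + 1) * U) * z) :=
              integral_const_mul _ _
          _ = (C * K) * (Real.exp (-(((i : ℝ) + 1) * U) * y) / (((i : ℝ) + 1) * U)) := by
              rw [my_integral_exp_neg_mul_Ioi hc1]
      have hIg2 : IntegrableOn (fun y => (C * K / (((i : ℝ) + 1) * U)) *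
          Real.exp (-(((i : ℝ) + 1) * U) * y)) (Ioi x) :=
        (exp_neg_integrableOn_Ioi x hc1).const_mul _
      calc Gfun P (i + 1) x = ∫ y in Ioi x, ∫ z in Ioi y, g2 P z * Gfun P i z := rfl
        _ ≤ ∫ y in Ioi x, (C * K / (((i : ℝ) + 1) * U)) *
            Real.exp (-(((i : ℝ) + 1) * U) * y) := by
            refine integral_mono_of_nonneg ?_ hIg2 ?_
            · refine (ae_restrict_iff' measurableSet_Ioi).mpr (ae_of_all _ fun y hy => ?_)
              apply setIntegral_nonneg measurableSet_Ioi
              intro z hz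
              have hz0 : (0:ℝ) ≤ z := le_of_lt (lt_of_le_of_lt (hx.trans (le_of_lt hy)) hz)
              exact mul_nonneg (hg2 z hz0).1 (hGnn z hz0)
            · refine (ae_restrict_iff' measurableSet_Ioi).mpr (ae_of_all _ fun y hy => ?_)
              have := hin y (hx.trans (le_of_lt hy))
              calc (∫ z in Ioi y, g2 P z * Gfun P i z)
                  ≤ (C * K) * (Real.exp (-(((i : ℝ) + 1) * U) * y) / (((i : ℝ) + 1) * U)) :=
                    this
                _ = (C * K / (((i : ℝ) + 1) * U)) * Real.exp (-(((i : ℝ) + 1) * U) * y) := by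
                    ring
        _ = (C * K / (((i : ℝ) + 1) * U)) *
            (Real.exp (-(((i : ℝ) + 1) * U) * x) / (((i : ℝ) + 1) * U)) := by
            rw [integral_const_mul, my_integral_exp_neg_mul_Ioi hc1]
        _ = C ^ (i + 1) * Real.exp (-((i : ℝ) + 1) * U * x) /
            (U ^ (2 * (i + 1)) * (Nat.factorial (i + 1) : ℝ) ^ 2) := by
            rw [hKdef]
            have h1 : ((Nat.factorial (i + 1) : ℝ)) = ((i : ℝ) + 1) * (Nat.factorial i : ℝ) := by
              push_cast [Nat.factorial_succ]; ring
            have h2 : U ^ (2 * (i + 1)) = U ^ (2 * i) * U ^ 2 := by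
              rw [← pow_add]; ring_nf
            rw [h1, h2]
            have hfi : (0:ℝ) < (Nat.factorial i : ℝ) := by positivity
            field_simp
            ring
        _ = C ^ (i + 1) * Real.exp (-(((i:ℕ) + 1 : ℕ) : ℝ) * U * x) /
            (U ^ (2 * (i + 1)) * (Nat.factorial (i + 1) : ℝ) ^ 2) := by
            push_cast; ring_nf

theorem stmt_6 (P : ℕ → ℝ)
    (hP0 : P 0 = 0) (hPnonneg : ∀ k, 0 ≤ P k) (hPsum : ∑' k, P k = 1)
    (hPmean : Summable fun k : ℕ => (k : ℝ) * P k) (hP1 : P 1 < 1)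
    (θ : ℝ) (hθ : 0 < θ)
    (hMθ : Summable fun k : ℕ => P k * Real.exp (θ * k)) :
    (∀ i : ℕ, ∀ x : ℝ, 0 ≤ x →
      0 ≤ Gfun P i x ∧
      Gfun P i x ≤
        ((∑' k : ℕ, P k * Real.exp (θ * k)) / Real.exp (2 * θ)) ^ i *
          Real.exp (-(i : ℝ) * (1 - Real.exp (-θ)) * x) /
          ((1 - Real.exp (-θ)) ^ (2 * i) * (Nat.factorial i : ℝ) ^ 2)) ∧
    (∀ β : ℂ, β ≠ 0 → ∀ x : ℝ, 0 ≤ x →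
      Summable fun i : ℕ => ‖(Gfun P i x : ℂ) * (-1 / β) ^ i‖) := by
  have key := Gfun_key P hPnonneg θ hθ hMθ
  refine ⟨key, ?_⟩
  intro β hβ0 x hx
  set M := ∑' k : ℕ, P k * Real.exp (θ * k) with hM
  set C := M / Real.exp (2 * θ) with hCdef
  set U := 1 - Real.exp (-θ) with hUdef
  have hU : 0 < U := by
    have : Real.exp (-θ) < 1 := Real.exp_lt_one_iff.mpr (by linarith)
    simpa [hUdef] using sub_pos.mpr this
  have hC : 0 ≤ C := by
    have hMnn : 0 ≤ M := tsum_nonneg fun k => mul_nonneg (hPnonneg k) (Real.exp_pos _).le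
    exact div_nonneg hMnn (Real.exp_pos _).le
  have hβ : 0 < ‖β‖ := norm_pos_iff.mpr hβ0
  set r := C / U ^ 2 * ‖β‖⁻¹ with hrdef
  have hr : 0 ≤ r := by positivity
  refine Summable.of_nonneg_of_le (fun i => norm_nonneg _) (fun i => ?_)
    (Real.summable_pow_div_factorial r)
  have hGnn := (key i x hx).1
  have hnorm : ‖(Gfun P i x : ℂ) * (-1 / β) ^ i‖ = Gfun P i x * (‖β‖⁻¹) ^ i := by
    rw [norm_mul, norm_pow, Complex.norm_real, Real.norm_of_nonneg hGnn,
      norm_div, norm_neg, norm_one, one_div]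
  rw [hnorm]
  have hfac1 : (1:ℝ) ≤ (Nat.factorial i : ℝ) := by
    exact_mod_cast Nat.one_le_iff_ne_zero.mpr (Nat.factorial_ne_zero i)
  have hfacpos : (0:ℝ) < (Nat.factorial i : ℝ) := by positivity
  have h1 : Gfun P i x ≤ C ^ i / (U ^ (2 * i) * (Nat.factorial i : ℝ) ^ 2) := by
    refine le_trans (key i x hx).2 ?_
    have hexp : Real.exp (-(i : ℝ) * U * x) ≤ 1 := by
      apply Real.exp_le_one_iff.mpr
      have : (0:ℝ) ≤ (i : ℝ) * U * x := by positivity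
      linarith
    calc C ^ i * Real.exp (-(i : ℝ) * U * x) / (U ^ (2 * i) * (Nat.factorial i : ℝ) ^ 2)
        ≤ C ^ i * 1 / (U ^ (2 * i) * (Nat.factorial i : ℝ) ^ 2) := by
          gcongr
      _ = C ^ i / (U ^ (2 * i) * (Nat.factorial i : ℝ) ^ 2) := by ring
  calc Gfun P i x * (‖β‖⁻¹) ^ i
      ≤ (C ^ i / (U ^ (2 * i) * (Nat.factorial i : ℝ) ^ 2)) * (‖β‖⁻¹) ^ i := by
        gcongr
    _ = r ^ i / (Nat.factorial i : ℝ) ^ 2 := by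
        rw [hrdef, mul_pow, div_pow, pow_mul]
        ring
    _ ≤ r ^ i / (Nat.factorial i : ℝ) := by
        gcongr
        nlinarith
end

section
/- Assume there exists θ > 0 such that ∑_{k≥1} P(k)·e^{θ·k} < ∞. Then for every real β ≠ 0 the function x ↦ L(β,x) is twice continuously differentiable on [0,∞) and satisfies the differential equation β·∂²L/∂x²(β,x) = −g₂(x)·L(β,x) for all x > 0. -/
open MeasureTheory Real Set Filter

open Topology

noncomputable def Dfun (P : ℕ → ℝ) (i : ℕ) (x : ℝ) : ℝ :=
  ∫ z in Ioi x, g2 P z * Gfun P i z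

noncomputable def Gd (P : ℕ → ℝ) : ℕ → ℝ → ℝ
  | 0 => fun _ => 0
  | (i + 1) => fun x => -Dfun P i x

noncomputable def Gdd (P : ℕ → ℝ) : ℕ → ℝ → ℝ
  | 0 => fun _ => 0
  | (i + 1) => fun x => g2 P x * Gfun P i x

noncomputable def useq (K B : ℝ) : ℕ → ℝ
  | 0 => 0
  | (i + 1) => K * (B ^ i / (Nat.factorial i : ℝ))

lemma useq_summable (K B : ℝ) : Summable (useq K B) := by
  apply (summable_nat_add_iff 1).mp
  exact (Real.summable_pow_div_factorial B).mul_left K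

lemma integral_exp_aux {l : ℝ} (hl : 0 < l) (a : ℝ) :
    ∫ z in Ioi a, Real.exp (-(l * z)) = Real.exp (-(l * a)) / l := by
  have hderiv : ∀ x ∈ Ici a, HasDerivAt (fun z : ℝ => -Real.exp (-(l * z)) / l)
      (Real.exp (-(l * x))) x := by
    intro x _
    have h1 : HasDerivAt (fun z : ℝ => -(l * z)) (-l) x := by
      simpa using (hasDerivAt_id x).const_mul (-l)
    have h2 : HasDerivAt (fun z : ℝ => Real.exp (-(l * z)))
        (Real.exp (-(l * x)) * (-l)) x := h1.exp
    have h3 := h2.neg.div_const l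
    exact h3.congr_deriv (by rw [mul_neg, neg_neg, mul_div_assoc, div_self hl.ne', mul_one])
  have hint : IntegrableOn (fun z : ℝ => Real.exp (-(l * z))) (Ioi a) := by
    simpa [neg_mul] using exp_neg_integrableOn_Ioi a hl
  have h1 : Tendsto (fun z : ℝ => -(l * z)) atTop atBot :=
    tendsto_neg_atTop_atBot.comp (Tendsto.const_mul_atTop hl tendsto_id)
  have htop : Tendsto (fun z : ℝ => -Real.exp (-(l * z)) / l) atTop (𝓝 0) := by
    simpa using ((Real.tendsto_exp_atBot.comp h1).neg.div_const l)
  have := integral_Ioi_of_hasDerivAt_of_tendsto' hderiv hint htop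
  rw [this]; ring

lemma hasDerivAt_int_Ioi {f : ℝ → ℝ} {a : ℝ} (hint : IntegrableOn f (Ioi a))
    (hcont : ContinuousOn f (Ioi a)) {x : ℝ} (hx : a < x) :
    HasDerivAt (fun t => ∫ z in Ioi t, f z) (-f x) x := by
  have hco : ContinuousAt f x := hcont.continuousAt (Ioi_mem_nhds hx)
  have key : ∀ t ∈ Ioi a, ∫ z in Ioi t, f z = (∫ z in Ioi a, f z) - ∫ z in a..t, f z := by
    intro t ht
    have hsplit : Ioc a t ∪ Ioi t = Ioi a := Ioc_union_Ioi_eq_Ioi ht.out.le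
    have h1 : IntegrableOn f (Ioc a t) := hint.mono_set (by rw [← hsplit]; exact subset_union_left)
    have h2 : IntegrableOn f (Ioi t) := hint.mono_set (by rw [← hsplit]; exact subset_union_right)
    rw [intervalIntegral.integral_of_le ht.out.le]
    have hu := setIntegral_union (Ioc_disjoint_Ioi le_rfl) measurableSet_Ioi h1 h2
    rw [hsplit] at hu
    rw [hu]; ring
  have hii : IntervalIntegrable f volume a x := by
    rw [intervalIntegrable_iff_integrableOn_Ioc_of_le hx.le]
    exact hint.mono_set Ioc_subset_Ioi_self
  have hmeas : StronglyMeasurableAtFilter f (𝓝 x) :=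
    hcont.stronglyMeasurableAtFilter isOpen_Ioi x hx
  have hd := intervalIntegral.integral_hasDerivAt_right hii hmeas hco
  have hd2 : HasDerivAt (fun t => (∫ z in Ioi a, f z) - ∫ z in a..t, f z) (-f x) x := by
    exact ((hasDerivAt_const x (∫ z in Ioi a, f z)).sub hd).congr_deriv (by simp)
  refine hd2.congr_of_eventuallyEq ?_
  filter_upwards [Ioi_mem_nhds hx] with t ht
  exact key t ht

lemma integrableOn_of_le_exp {f : ℝ → ℝ} {a c l : ℝ} (hl : 0 < l)
    (hcont : ContinuousOn f (Ioi a)) (hb : ∀ z ∈ Ioi a, |f z| ≤ c * Real.exp (-(l * z))) :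
    IntegrableOn f (Ioi a) := by
  have hg : IntegrableOn (fun z : ℝ => c * Real.exp (-(l * z))) (Ioi a) := by
    have := (exp_neg_integrableOn_Ioi a hl).const_mul c
    simp only [neg_mul] at this
    exact this
  refine Integrable.mono' hg (hcont.aestronglyMeasurable measurableSet_Ioi) ?_
  refine (ae_restrict_iff' measurableSet_Ioi).mpr (ae_of_all _ fun z hz => ?_)
  simpa [Real.norm_eq_abs] using hb z hz

lemma abs_integral_Ioi_le {f : ℝ → ℝ} {c l : ℝ} (x : ℝ) (hl : 0 < l)
    (hcont : ContinuousOn f (Ioi x)) (hb : ∀ z ∈ Ioi x, |f z| ≤ c * Real.exp (-(l * z))) :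
    |∫ z in Ioi x, f z| ≤ c * Real.exp (-(l * x)) / l := by
  have hg : IntegrableOn (fun z : ℝ => c * Real.exp (-(l * z))) (Ioi x) := by
    have := (exp_neg_integrableOn_Ioi x hl).const_mul c
    simp only [neg_mul] at this
    exact this
  have h1 : ‖∫ z in Ioi x, f z‖ ≤ ∫ z in Ioi x, c * Real.exp (-(l * z)) := by
    refine norm_integral_le_of_norm_le hg ?_
    refine (ae_restrict_iff' measurableSet_Ioi).mpr (ae_of_all _ fun z hz => ?_)
    simpa [Real.norm_eq_abs] using hb z hz
  rw [Real.norm_eq_abs] at h1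
  refine h1.trans ?_
  rw [integral_const_mul, integral_exp_aux hl x]
  ring_nf
  exact le_refl _

lemma tsum_exp_div (x : ℝ) : ∑' k : ℕ, x ^ k / (Nat.factorial k : ℝ) = Real.exp x := by
  rw [Real.exp_eq_exp_ℝ, NormedSpace.exp_eq_tsum_div]

lemma g2_norm_term {P : ℕ → ℝ} (hPnonneg : ∀ k, 0 ≤ P k) {C0 q : ℝ}
    (hPk : ∀ k : ℕ, P (k + 2) ≤ C0 * q ^ k) (z : ℝ) (k : ℕ) :
    ‖P (k + 2) * z ^ k / (Nat.factorial k : ℝ)‖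
      ≤ C0 * ((q * |z|) ^ k / (Nat.factorial k : ℝ)) := by
  have hfac : (0:ℝ) < (Nat.factorial k : ℝ) := by positivity
  rw [Real.norm_eq_abs, abs_div, abs_mul, abs_pow, Nat.abs_cast,
    abs_of_nonneg (hPnonneg _)]
  calc P (k + 2) * |z| ^ k / (Nat.factorial k : ℝ)
      ≤ (C0 * q ^ k) * |z| ^ k / (Nat.factorial k : ℝ) := by
        gcongr
        exact hPk k
    _ = C0 * ((q * |z|) ^ k / (Nat.factorial k : ℝ)) := by
        rw [mul_pow]; ring

lemma g2_summable_maj (C0 q z : ℝ) :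
    Summable (fun k : ℕ => C0 * ((q * |z|) ^ k / (Nat.factorial k : ℝ))) :=
  (Real.summable_pow_div_factorial _).mul_left _

lemma g2_abs_le {P : ℕ → ℝ} (hPnonneg : ∀ k, 0 ≤ P k) {C0 q : ℝ}
    (hPk : ∀ k : ℕ, P (k + 2) ≤ C0 * q ^ k) (z : ℝ) :
    |g2 P z| ≤ C0 * Real.exp (-z + q * |z|) := by
  have hnorm : Summable (fun k : ℕ => ‖P (k + 2) * z ^ k / (Nat.factorial k : ℝ)‖) :=
    Summable.of_nonneg_of_le (fun k => norm_nonneg _) (g2_norm_term hPnonneg hPk z)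
      (g2_summable_maj C0 q z)
  have h1 : |∑' k : ℕ, P (k + 2) * z ^ k / (Nat.factorial k : ℝ)|
      ≤ C0 * Real.exp (q * |z|) := by
    calc |∑' k : ℕ, P (k + 2) * z ^ k / (Nat.factorial k : ℝ)|
        ≤ ∑' k : ℕ, ‖P (k + 2) * z ^ k / (Nat.factorial k : ℝ)‖ := by
          simpa [Real.norm_eq_abs] using norm_tsum_le_tsum_norm hnorm
      _ ≤ ∑' k : ℕ, C0 * ((q * |z|) ^ k / (Nat.factorial k : ℝ)) :=
          Summable.tsum_le_tsum (g2_norm_term hPnonneg hPk z) hnorm (g2_summable_maj C0 q z)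
      _ = C0 * Real.exp (q * |z|) := by rw [tsum_mul_left, tsum_exp_div]
  have h2 : |g2 P z| = Real.exp (-z) * |∑' k : ℕ, P (k + 2) * z ^ k / (Nat.factorial k : ℝ)| := by
    rw [g2, abs_mul, abs_of_pos (Real.exp_pos _)]
  rw [h2, Real.exp_add]
  calc Real.exp (-z) * |∑' k : ℕ, P (k + 2) * z ^ k / (Nat.factorial k : ℝ)|
      ≤ Real.exp (-z) * (C0 * Real.exp (q * |z|)) := by
        gcongr
    _ = C0 * (Real.exp (-z) * Real.exp (q * |z|)) := by ring

lemma g2_continuous {P : ℕ → ℝ} (hPnonneg : ∀ k, 0 ≤ P k) {C0 q : ℝ} (hq : 0 ≤ q)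
    (hPk : ∀ k : ℕ, P (k + 2) ≤ C0 * q ^ k) :
    Continuous (g2 P) := by
  have hS : Continuous (fun z : ℝ => ∑' k : ℕ, P (k + 2) * z ^ k / (Nat.factorial k : ℝ)) := by
    rw [continuous_iff_continuousAt]
    intro x₀
    have hco : ContinuousOn
        (fun z : ℝ => ∑' k : ℕ, P (k + 2) * z ^ k / (Nat.factorial k : ℝ))
        (Ioo (-(|x₀| + 1)) (|x₀| + 1)) := by
      refine continuousOn_tsum (fun k => Continuous.continuousOn (by continuity))
        (g2_summable_maj C0 q (|x₀| + 1)) ?_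
      intro k z hz
      refine (g2_norm_term hPnonneg hPk z k).trans ?_
      have hz1 : |z| ≤ |(|x₀| + 1)| := by
        rw [abs_of_nonneg (by positivity : (0:ℝ) ≤ |x₀| + 1)]
        rw [abs_le]
        exact ⟨hz.1.le, hz.2.le⟩
      have hC0' : 0 ≤ C0 := by
        have := (hPnonneg 2).trans (by simpa using hPk 0)
        exact this
      gcongr
    refine hco.continuousAt (isOpen_Ioo.mem_nhds ?_)
    constructor
    · nlinarith [abs_nonneg x₀, neg_abs_le x₀]
    · nlinarith [le_abs_self x₀]
  exact (Real.continuous_exp.comp continuous_neg).mul hS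

lemma Dfun_facts {P : ℕ → ℝ} {C δ : ℝ} (hδ : 0 < δ) (hC : 0 ≤ C)
    (hg2c : Continuous (g2 P))
    (hg2b : ∀ z ∈ Ioi (-1:ℝ), |g2 P z| ≤ C * Real.exp (-(δ * z))) (i : ℕ)
    (hbi : ∀ x ∈ Ioi (-1:ℝ), |Gfun P i x| ≤ (C / δ ^ 2) ^ i / (Nat.factorial i : ℝ) *
      Real.exp (-(((i : ℝ) * δ) * x)))
    (hki : ContinuousOn (Gfun P i) (Ioi (-1))) :
    ContinuousOn (Dfun P i) (Ioi (-1)) ∧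
    IntegrableOn (Dfun P i) (Ioi (-1)) ∧
    (∀ x ∈ Ioi (-1:ℝ), HasDerivAt (Dfun P i) (-(g2 P x * Gfun P i x)) x) ∧
    (∀ x ∈ Ioi (-1:ℝ), |Dfun P i x| ≤
      C * ((C / δ ^ 2) ^ i / (Nat.factorial i : ℝ)) *
        Real.exp (-((((i : ℝ) + 1) * δ) * x)) / (((i : ℝ) + 1) * δ)) := by
  have ha : (0:ℝ) ≤ (C / δ ^ 2) ^ i / (Nat.factorial i : ℝ) := by positivity
  have hl : (0:ℝ) < ((i : ℝ) + 1) * δ := by positivity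
  have hh : ∀ z ∈ Ioi (-1:ℝ), |g2 P z * Gfun P i z| ≤
      (C * ((C / δ ^ 2) ^ i / (Nat.factorial i : ℝ))) *
        Real.exp (-((((i : ℝ) + 1) * δ) * z)) := by
    intro z hz
    calc |g2 P z * Gfun P i z| = |g2 P z| * |Gfun P i z| := abs_mul _ _
      _ ≤ (C * Real.exp (-(δ * z))) *
          ((C / δ ^ 2) ^ i / (Nat.factorial i : ℝ) * Real.exp (-(((i : ℝ) * δ) * z))) := by
          exact mul_le_mul (hg2b z hz) (hbi z hz) (abs_nonneg _)
            (by positivity)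
      _ = (C * ((C / δ ^ 2) ^ i / (Nat.factorial i : ℝ))) *
          (Real.exp (-(δ * z)) * Real.exp (-(((i : ℝ) * δ) * z))) := by ring
      _ = (C * ((C / δ ^ 2) ^ i / (Nat.factorial i : ℝ))) *
          Real.exp (-((((i : ℝ) + 1) * δ) * z)) := by
          rw [← Real.exp_add]; congr 1; ring
  have hhc : ContinuousOn (fun z => g2 P z * Gfun P i z) (Ioi (-1)) :=
    hg2c.continuousOn.mul hki
  have hhint : IntegrableOn (fun z => g2 P z * Gfun P i z) (Ioi (-1)) :=
    integrableOn_of_le_exp hl hhc hh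
  have hder : ∀ x ∈ Ioi (-1:ℝ), HasDerivAt (Dfun P i) (-(g2 P x * Gfun P i x)) x := by
    intro x hx
    exact hasDerivAt_int_Ioi hhint hhc hx
  have hcont : ContinuousOn (Dfun P i) (Ioi (-1)) :=
    fun x hx => ((hder x hx).continuousAt).continuousWithinAt
  have hDb : ∀ x ∈ Ioi (-1:ℝ), |Dfun P i x| ≤
      C * ((C / δ ^ 2) ^ i / (Nat.factorial i : ℝ)) *
        Real.exp (-((((i : ℝ) + 1) * δ) * x)) / (((i : ℝ) + 1) * δ) := by
    intro x hx
    exact abs_integral_Ioi_le x hl (hhc.mono (Ioi_subset_Ioi hx.out.le))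
      (fun z hz => hh z (Ioi_subset_Ioi hx.out.le hz))
  refine ⟨hcont, ?_, hder, hDb⟩
  exact integrableOn_of_le_exp (c := C * ((C / δ ^ 2) ^ i / (Nat.factorial i : ℝ)) /
    (((i : ℝ) + 1) * δ)) hl hcont (fun z hz => (hDb z hz).trans_eq (by ring))

lemma Gfun_facts {P : ℕ → ℝ} {C δ : ℝ} (hδ : 0 < δ) (hC : 0 ≤ C)
    (hg2c : Continuous (g2 P))
    (hg2b : ∀ z ∈ Ioi (-1:ℝ), |g2 P z| ≤ C * Real.exp (-(δ * z))) :
    ∀ i : ℕ, (∀ x ∈ Ioi (-1:ℝ), |Gfun P i x| ≤ (C / δ ^ 2) ^ i / (Nat.factorial i : ℝ) *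
      Real.exp (-(((i : ℝ) * δ) * x))) ∧ ContinuousOn (Gfun P i) (Ioi (-1)) := by
  intro i
  induction i with
  | zero =>
    constructor
    · intro x _
      norm_num [Gfun]
    · exact continuousOn_const
  | succ i ih =>
    obtain ⟨hb, hk⟩ := ih
    obtain ⟨hDc, hDint, hDder, hDb⟩ := Dfun_facts hδ hC hg2c hg2b i hb hk
    have hGsucc : Gfun P (i + 1) = fun x => ∫ y in Ioi x, Dfun P i y := rfl
    have hl : (0:ℝ) < ((i : ℝ) + 1) * δ := by positivity
    have hfacpos : (0:ℝ) < (Nat.factorial i : ℝ) := by positivity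
    constructor
    · intro x hx
      have h1 : |∫ y in Ioi x, Dfun P i y| ≤
          (C * ((C / δ ^ 2) ^ i / (Nat.factorial i : ℝ)) / (((i : ℝ) + 1) * δ)) *
            Real.exp (-((((i : ℝ) + 1) * δ) * x)) / (((i : ℝ) + 1) * δ) := by
        refine abs_integral_Ioi_le x hl (hDc.mono (Ioi_subset_Ioi hx.out.le)) ?_
        intro z hz
        exact (hDb z (Ioi_subset_Ioi hx.out.le hz)).trans_eq (by ring)
      rw [hGsucc]
      refine h1.trans ?_
      have hcast : ((i + 1 : ℕ) : ℝ) = (i : ℝ) + 1 := by push_cast; ring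
      rw [hcast]
      have hfac : ((Nat.factorial (i + 1)) : ℝ) = ((i : ℝ) + 1) * (Nat.factorial i : ℝ) := by
        rw [Nat.factorial_succ]; push_cast; ring
      have key : C * ((C / δ ^ 2) ^ i / (Nat.factorial i : ℝ)) / (((i : ℝ) + 1) * δ) /
          (((i : ℝ) + 1) * δ) ≤ (C / δ ^ 2) ^ (i + 1) / (Nat.factorial (i + 1) : ℝ) := by
        rw [hfac]
        have heq : C * ((C / δ ^ 2) ^ i / (Nat.factorial i : ℝ)) / (((i : ℝ) + 1) * δ) /
            (((i : ℝ) + 1) * δ) =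
            (C / δ ^ 2) ^ (i + 1) / ((Nat.factorial i : ℝ) * ((i : ℝ) + 1) ^ 2) := by
          have hδ' : δ ≠ 0 := hδ.ne'
          rw [div_pow, div_pow]
          field_simp
          ring
        rw [heq]
        refine div_le_div_of_nonneg_left (by positivity) (by positivity) ?_
        nlinarith [hfacpos, Nat.cast_nonneg (α := ℝ) i]
      calc C * ((C / δ ^ 2) ^ i / (Nat.factorial i : ℝ)) / (((i : ℝ) + 1) * δ) *
            Real.exp (-((((i : ℝ) + 1) * δ) * x)) / (((i : ℝ) + 1) * δ)
          = (C * ((C / δ ^ 2) ^ i / (Nat.factorial i : ℝ)) / (((i : ℝ) + 1) * δ) /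
            (((i : ℝ) + 1) * δ)) * Real.exp (-((((i : ℝ) + 1) * δ) * x)) := by ring
        _ ≤ (C / δ ^ 2) ^ (i + 1) / (Nat.factorial (i + 1) : ℝ) *
            Real.exp (-((((i : ℝ) + 1) * δ) * x)) := by gcongr
    · rw [hGsucc]
      intro x hx
      exact ((hasDerivAt_int_Ioi hDint hDc hx.out).continuousAt).continuousWithinAt

lemma Gfun_deriv {P : ℕ → ℝ} {C δ : ℝ} (hδ : 0 < δ) (hC : 0 ≤ C)
    (hg2c : Continuous (g2 P))
    (hg2b : ∀ z ∈ Ioi (-1:ℝ), |g2 P z| ≤ C * Real.exp (-(δ * z))) :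
    ∀ (i : ℕ), ∀ x ∈ Ioi (-1:ℝ), HasDerivAt (Gfun P i) (Gd P i x) x := by
  intro i x hx
  match i with
  | 0 =>
    simpa [Gfun, Gd] using hasDerivAt_const x (1:ℝ)
  | (i + 1) =>
    obtain ⟨hb, hk⟩ := Gfun_facts hδ hC hg2c hg2b i
    obtain ⟨hDc, hDint, _, _⟩ := Dfun_facts hδ hC hg2c hg2b i hb hk
    have hGsucc : Gfun P (i + 1) = fun x => ∫ y in Ioi x, Dfun P i y := rfl
    rw [hGsucc]
    simpa [Gd] using hasDerivAt_int_Ioi hDint hDc hx.out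

lemma Gd_deriv {P : ℕ → ℝ} {C δ : ℝ} (hδ : 0 < δ) (hC : 0 ≤ C)
    (hg2c : Continuous (g2 P))
    (hg2b : ∀ z ∈ Ioi (-1:ℝ), |g2 P z| ≤ C * Real.exp (-(δ * z))) :
    ∀ (i : ℕ), ∀ x ∈ Ioi (-1:ℝ), HasDerivAt (Gd P i) (Gdd P i x) x := by
  intro i x hx
  match i with
  | 0 =>
    simpa [Gd, Gdd] using hasDerivAt_const x (0:ℝ)
  | (i + 1) =>
    obtain ⟨hb, hk⟩ := Gfun_facts hδ hC hg2c hg2b i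
    obtain ⟨_, _, hDder, _⟩ := Dfun_facts hδ hC hg2c hg2b i hb hk
    have : Gd P (i + 1) = fun x => -Dfun P i x := rfl
    rw [this]
    exact (hDder x hx).neg.congr_deriv (by simp [Gdd])

lemma exp_bd {l x : ℝ} (hl : 0 ≤ l) (hx : (-1:ℝ) < x) :
    Real.exp (-(l * x)) ≤ Real.exp l := by
  apply Real.exp_le_exp.mpr
  nlinarith

lemma exp_mul_nat (δ : ℝ) (i : ℕ) :
    Real.exp (((i : ℝ) + 1) * δ) = Real.exp δ ^ (i + 1) := by
  have h : ((i : ℝ) + 1) * δ = ((i + 1 : ℕ) : ℝ) * δ := by push_cast; ring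
  rw [h, ← Real.exp_nat_mul]

lemma Gd_bound {P : ℕ → ℝ} {C δ : ℝ} (hδ : 0 < δ) (hC : 0 ≤ C)
    (hg2c : Continuous (g2 P))
    (hg2b : ∀ z ∈ Ioi (-1:ℝ), |g2 P z| ≤ C * Real.exp (-(δ * z))) (r : ℝ) :
    ∀ (n : ℕ), ∀ x ∈ Ioi (-1:ℝ), ‖Gd P n x * r ^ n‖ ≤
      useq (C * |r| * Real.exp δ / δ) (C / δ ^ 2 * Real.exp δ * |r|) n := by
  intro n x hx
  match n with
  | 0 => simp [Gd, useq]
  | (i + 1) =>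
    obtain ⟨hb, hk⟩ := Gfun_facts hδ hC hg2c hg2b i
    obtain ⟨_, _, _, hDb⟩ := Dfun_facts hδ hC hg2c hg2b i hb hk
    have hl : (0:ℝ) < ((i : ℝ) + 1) * δ := by positivity
    have hfacpos : (0:ℝ) < (Nat.factorial i : ℝ) := by positivity
    have h0 : ‖Gd P (i + 1) x * r ^ (i + 1)‖ = |Dfun P i x| * |r| ^ (i + 1) := by
      rw [Real.norm_eq_abs, abs_mul, abs_pow]
      simp [Gd]
    rw [h0]
    have h1 : |Dfun P i x| * |r| ^ (i + 1) ≤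
        (C * ((C / δ ^ 2) ^ i / (Nat.factorial i : ℝ)) *
          Real.exp (-((((i : ℝ) + 1) * δ) * x)) / (((i : ℝ) + 1) * δ)) * |r| ^ (i + 1) := by
      gcongr
      exact hDb x hx
    refine h1.trans ?_
    have h2 : (C * ((C / δ ^ 2) ^ i / (Nat.factorial i : ℝ)) *
          Real.exp (-((((i : ℝ) + 1) * δ) * x)) / (((i : ℝ) + 1) * δ)) * |r| ^ (i + 1) ≤
        (C * ((C / δ ^ 2) ^ i / (Nat.factorial i : ℝ)) *
          Real.exp (((i : ℝ) + 1) * δ) / δ) * |r| ^ (i + 1) := by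
      gcongr
      · nlinarith [mul_nonneg hl.le (show (0:ℝ) ≤ x + 1 by linarith [hx.out])]
      · nlinarith [Nat.cast_nonneg (α := ℝ) i]
    refine h2.trans (le_of_eq ?_)
    show _ = C * |r| * Real.exp δ / δ * ((C / δ ^ 2 * Real.exp δ * |r|) ^ i /
      (Nat.factorial i : ℝ))
    rw [exp_mul_nat]
    field_simp
    ring

lemma Gdd_bound {P : ℕ → ℝ} {C δ : ℝ} (hδ : 0 < δ) (hC : 0 ≤ C)
    (hg2c : Continuous (g2 P))
    (hg2b : ∀ z ∈ Ioi (-1:ℝ), |g2 P z| ≤ C * Real.exp (-(δ * z))) (r : ℝ) :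
    ∀ (n : ℕ), ∀ x ∈ Ioi (-1:ℝ), ‖Gdd P n x * r ^ n‖ ≤
      useq (C * |r| * Real.exp δ) (C / δ ^ 2 * Real.exp δ * |r|) n := by
  intro n x hx
  match n with
  | 0 => simp [Gdd, useq]
  | (i + 1) =>
    obtain ⟨hb, hk⟩ := Gfun_facts hδ hC hg2c hg2b i
    have hl : (0:ℝ) < ((i : ℝ) + 1) * δ := by positivity
    have hfacpos : (0:ℝ) < (Nat.factorial i : ℝ) := by positivity
    have h0 : ‖Gdd P (i + 1) x * r ^ (i + 1)‖ = |g2 P x * Gfun P i x| * |r| ^ (i + 1) := by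
      rw [Real.norm_eq_abs, abs_mul, abs_pow]
      simp [Gdd]
    rw [h0]
    have hprod : |g2 P x * Gfun P i x| ≤
        (C * ((C / δ ^ 2) ^ i / (Nat.factorial i : ℝ))) *
          Real.exp (-((((i : ℝ) + 1) * δ) * x)) := by
      calc |g2 P x * Gfun P i x| = |g2 P x| * |Gfun P i x| := abs_mul _ _
        _ ≤ (C * Real.exp (-(δ * x))) *
            ((C / δ ^ 2) ^ i / (Nat.factorial i : ℝ) * Real.exp (-(((i : ℝ) * δ) * x))) :=
            mul_le_mul (hg2b x hx) (hb x hx) (abs_nonneg _) (by positivity)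
        _ = (C * ((C / δ ^ 2) ^ i / (Nat.factorial i : ℝ))) *
            (Real.exp (-(δ * x)) * Real.exp (-(((i : ℝ) * δ) * x))) := by ring
        _ = _ := by rw [← Real.exp_add]; congr 1; ring
    have h1 : |g2 P x * Gfun P i x| * |r| ^ (i + 1) ≤
        ((C * ((C / δ ^ 2) ^ i / (Nat.factorial i : ℝ))) *
          Real.exp (((i : ℝ) + 1) * δ)) * |r| ^ (i + 1) := by
      gcongr
      refine hprod.trans ?_
      gcongr
      nlinarith [mul_nonneg hl.le (show (0:ℝ) ≤ x + 1 by linarith [hx.out])]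
    refine h1.trans (le_of_eq ?_)
    show _ = C * |r| * Real.exp δ * ((C / δ ^ 2 * Real.exp δ * |r|) ^ i /
      (Nat.factorial i : ℝ))
    rw [exp_mul_nat]
    field_simp
    ring

theorem stmt_7 (P : ℕ → ℝ)
    (hP0 : P 0 = 0) (hPnonneg : ∀ k, 0 ≤ P k) (hPsum : ∑' k, P k = 1)
    (hPmean : Summable fun k : ℕ => (k : ℝ) * P k) (hP1 : P 1 < 1)
    (θ : ℝ) (hθ : 0 < θ)
    (hMθ : Summable fun k : ℕ => P k * Real.exp (θ * k))
    (β : ℝ) (hβ : β ≠ 0) :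
    ∃ L' L'' : ℝ → ℝ,
      (∀ x ∈ Ici (0 : ℝ), HasDerivWithinAt (Lfun P β) (L' x) (Ici 0) x) ∧
      ContinuousOn L' (Ici 0) ∧
      (∀ x ∈ Ici (0 : ℝ), HasDerivWithinAt L' (L'' x) (Ici 0) x) ∧
      ContinuousOn L'' (Ici 0) ∧
      (∀ x : ℝ, 0 < x → β * L'' x = -(g2 P x * Lfun P β x)) := by
  set q := Real.exp (-θ) with hqdef
  have hq0 : 0 < q := by rw [hqdef]; exact Real.exp_pos _
  have hq1 : q < 1 := by
    rw [hqdef]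
    have := Real.exp_lt_exp.mpr (show -θ < 0 by linarith)
    simpa using this
  set δ := 1 - q with hδdef
  have hδpos : 0 < δ := by rw [hδdef]; linarith
  set C0 := ∑' k : ℕ, P k * Real.exp (θ * k) with hC0def
  have hC0 : 0 ≤ C0 := by
    rw [hC0def]
    exact tsum_nonneg fun k => mul_nonneg (hPnonneg k) (Real.exp_pos _).le
  have hPk : ∀ k : ℕ, P (k + 2) ≤ C0 * q ^ k := by
    intro k
    have h1 : P (k + 2) * Real.exp (θ * ((k : ℝ) + 2)) ≤ C0 := by
      have h1' := Summable.le_tsum hMθ (k + 2) (fun j _ => mul_nonneg (hPnonneg j) (Real.exp_pos _).le)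
      rw [hC0def]
      push_cast at h1' ⊢
      exact h1'
    have hepos : (0:ℝ) < Real.exp (θ * ((k : ℝ) + 2)) := Real.exp_pos _
    have h2 : P (k + 2) ≤ C0 / Real.exp (θ * ((k : ℝ) + 2)) := (le_div_iff₀ hepos).mpr h1
    refine h2.trans ?_
    rw [div_eq_mul_inv, ← Real.exp_neg]
    have h3 : Real.exp (-(θ * ((k : ℝ) + 2))) ≤ Real.exp ((k : ℝ) * -θ) := by
      apply Real.exp_le_exp.mpr
      nlinarith [Nat.cast_nonneg (α := ℝ) k]
    calc C0 * Real.exp (-(θ * ((k : ℝ) + 2))) ≤ C0 * Real.exp ((k : ℝ) * -θ) :=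
          mul_le_mul_of_nonneg_left h3 hC0
      _ = C0 * q ^ k := by rw [hqdef, ← Real.exp_nat_mul]
  set C := C0 * Real.exp 2 with hCdef
  have hC : 0 ≤ C := by rw [hCdef]; exact mul_nonneg hC0 (Real.exp_pos _).le
  have hg2c : Continuous (g2 P) := g2_continuous hPnonneg hq0.le hPk
  have hg2b : ∀ z ∈ Ioi (-1:ℝ), |g2 P z| ≤ C * Real.exp (-(δ * z)) := by
    intro z hz
    refine (g2_abs_le hPnonneg hPk z).trans ?_
    rw [hCdef, mul_assoc, ← Real.exp_add]
    refine mul_le_mul_of_nonneg_left (Real.exp_le_exp.mpr ?_) hC0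
    rcases le_or_gt 0 z with h | h
    · rw [abs_of_nonneg h, hδdef]
      nlinarith [hq0]
    · rw [abs_of_neg h, hδdef]
      nlinarith [hq0, hq1, hz.out,
        mul_le_mul_of_nonneg_left (show -z ≤ (1:ℝ) by linarith [hz.out]) hq0.le]
  have hGf := Gfun_facts hδpos hC hg2c hg2b
  have hGderiv := Gfun_deriv hδpos hC hg2c hg2b
  have hGdderiv := Gd_deriv hδpos hC hg2c hg2b
  have hGdb := Gd_bound hδpos hC hg2c hg2b (-1 / β)
  have hGddb := Gdd_bound hδpos hC hg2c hg2b (-1 / β)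
  have h0mem : (0:ℝ) ∈ Ioi (-1:ℝ) := by norm_num
  have hsum0 : Summable (fun n : ℕ => Gfun P n 0 * (-1 / β) ^ n) := by
    refine Summable.of_norm_bounded
      (g := fun n => (C / δ ^ 2 * |(-1 / β)|) ^ n / (Nat.factorial n : ℝ))
      (Real.summable_pow_div_factorial _) ?_
    intro n
    rw [Real.norm_eq_abs, abs_mul, abs_pow]
    have hbd := (hGf n).1 0 h0mem
    simp only [mul_zero, neg_zero, Real.exp_zero, mul_one] at hbd
    calc |Gfun P n 0| * |(-1 / β)| ^ n
        ≤ ((C / δ ^ 2) ^ n / (Nat.factorial n : ℝ)) * |(-1 / β)| ^ n := by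
          gcongr
      _ = (C / δ ^ 2 * |(-1 / β)|) ^ n / (Nat.factorial n : ℝ) := by
          rw [mul_pow]; ring
  have hsum0' : Summable (fun n : ℕ => Gd P n 0 * (-1 / β) ^ n) :=
    Summable.of_norm_bounded (useq_summable _ _) (fun n => hGdb n 0 h0mem)
  have hD1 : ∀ y ∈ Ioi (-1:ℝ), HasDerivAt (fun z => ∑' n : ℕ, Gfun P n z * (-1 / β) ^ n)
      (∑' n : ℕ, Gd P n y * (-1 / β) ^ n) y := by
    intro y hy
    exact hasDerivAt_tsum_of_isPreconnected (useq_summable _ _) isOpen_Ioi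
      (convex_Ioi (-1:ℝ)).isPreconnected
      (fun n z hz => (hGderiv n z hz).mul_const _)
      (fun n z hz => hGdb n z hz) h0mem hsum0 hy
  have hD2 : ∀ y ∈ Ioi (-1:ℝ), HasDerivAt (fun z => ∑' n : ℕ, Gd P n z * (-1 / β) ^ n)
      (∑' n : ℕ, Gdd P n y * (-1 / β) ^ n) y := by
    intro y hy
    exact hasDerivAt_tsum_of_isPreconnected (useq_summable _ _) isOpen_Ioi
      (convex_Ioi (-1:ℝ)).isPreconnected
      (fun n z hz => (hGdderiv n z hz).mul_const _)
      (fun n z hz => hGddb n z hz) h0mem hsum0' hy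
  have hIci : Ici (0:ℝ) ⊆ Ioi (-1:ℝ) := fun z hz => lt_of_lt_of_le (by norm_num : (-1:ℝ) < 0) hz
  have hLfun : Lfun P β = fun z => ∑' n : ℕ, Gfun P n z * (-1 / β) ^ n := rfl
  refine ⟨fun x => ∑' n : ℕ, Gd P n x * (-1 / β) ^ n,
    fun x => ∑' n : ℕ, Gdd P n x * (-1 / β) ^ n, ?_, ?_, ?_, ?_, ?_⟩
  · intro x hx
    rw [hLfun]
    exact (hD1 x (hIci hx)).hasDerivWithinAt
  · intro x hx
    exact ((hD2 x (hIci hx)).continuousAt).continuousWithinAt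
  · intro x hx
    exact (hD2 x (hIci hx)).hasDerivWithinAt
  · refine (continuousOn_tsum (f := fun n (x : ℝ) => Gdd P n x * (-1 / β) ^ n)
      (s := Ioi (-1:ℝ)) ?_ (useq_summable (C * |(-1 / β)| * Real.exp δ)
        (C / δ ^ 2 * Real.exp δ * |(-1 / β)|)) ?_).mono hIci
    · intro n
      match n with
      | 0 =>
        show ContinuousOn (fun x : ℝ => Gdd P 0 x * (-1 / β) ^ 0) (Ioi (-1:ℝ))
        have : (fun x : ℝ => Gdd P 0 x * (-1 / β) ^ 0) = fun _ : ℝ => (0:ℝ) := by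
          funext x; simp [Gdd]
        rw [this]
        exact continuousOn_const
      | (i + 1) =>
        show ContinuousOn (fun x : ℝ => Gdd P (i + 1) x * (-1 / β) ^ (i + 1)) (Ioi (-1:ℝ))
        have : (fun x : ℝ => Gdd P (i + 1) x * (-1 / β) ^ (i + 1))
            = fun x : ℝ => (g2 P x * Gfun P i x) * (-1 / β) ^ (i + 1) := rfl
        rw [this]
        exact (hg2c.continuousOn.mul (hGf i).2).mul continuousOn_const
    · intro n x hx
      exact hGddb n x hx
  · intro x hx
    have hxm : x ∈ Ioi (-1:ℝ) := lt_trans (by norm_num) hx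
    have hsum2 : Summable (fun n : ℕ => Gdd P n x * (-1 / β) ^ n) :=
      Summable.of_norm_bounded (useq_summable _ _) (fun n => hGddb n x hxm)
    show β * (∑' n : ℕ, Gdd P n x * (-1 / β) ^ n) = -(g2 P x * Lfun P β x)
    rw [Summable.tsum_eq_zero_add hsum2]
    have hzero : Gdd P 0 x * (-1 / β) ^ 0 = 0 := by simp [Gdd]
    rw [hzero, zero_add]
    have hterm : ∀ i : ℕ, Gdd P (i + 1) x * (-1 / β) ^ (i + 1)
        = (g2 P x * (-1 / β)) * (Gfun P i x * (-1 / β) ^ i) := by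
      intro i
      show (g2 P x * Gfun P i x) * (-1 / β) ^ (i + 1) = _
      ring
    rw [tsum_congr hterm, tsum_mul_left]
    have hLx : Lfun P β x = ∑' i : ℕ, Gfun P i x * (-1 / β) ^ i := rfl
    rw [hLx]
    field_simp
end
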